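/- arXiv:0910.5451 — 7 statements merged into one kernel-verified Lean document; each statement's English description precedes it below -/
import Mathlib

section
/- Let N ≥ 1 and let f : B^N → B^N be holomorphic. Assume there exist p ∈ ∂B^N and c ∈ (0,1) such that f(H(p,R)) ⊆ H(p,cR) for every R > 0 (Julia's lemma at the Denjoy-Wolff point p with multiplier c, hyperbolic case). Let {Z_n}_{n≥0} be a backward-iteration sequence for f and a ∈ (0,1) a constant with d(Z_n, Z_{n+1}) ≤ a for all n. Then there exists a point q ∈ ∂B^N with q ≠ p such that Z_n → q in ℂ^N as n → ∞. -/
noncomputable section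

open Filter Topology

/-- The open unit ball `B^N = {Z ∈ ℂ^N : ‖Z‖ < 1}`. -/
def unitBall (N : ℕ) : Set (EuclideanSpace ℂ (Fin N)) := {Z | ‖Z‖ < 1}

/-- The Hermitian inner product `⟨Z,W⟩ = Σ_j Z_j * conj (W_j)` of the paper
(which is `inner W Z` in Mathlib's conjugate-linear-in-the-first-slot convention). -/
def hip {N : ℕ} (Z W : EuclideanSpace ℂ (Fin N)) : ℂ := inner ℂ W Z

/-- The pseudo-hyperbolic distance on the unit ball `B^N`:
the number `d(Z,W) ∈ [0,1)` with `d(Z,W)² = 1 − (1−‖Z‖²)(1−‖W‖²)/|1−⟨Z,W⟩|²`. -/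
def phd {N : ℕ} (Z W : EuclideanSpace ℂ (Fin N)) : ℝ :=
  Real.sqrt (1 - (1 - ‖Z‖ ^ 2) * (1 - ‖W‖ ^ 2) / ‖(1 : ℂ) - hip Z W‖ ^ 2)

/-- The horosphere `H(X,R) = {Z ∈ B^N : |1−⟨Z,X⟩|² < R(1−‖Z‖²)}`. -/
def horo {N : ℕ} (X : EuclideanSpace ℂ (Fin N)) (R : ℝ) :
    Set (EuclideanSpace ℂ (Fin N)) :=
  {Z | ‖Z‖ < 1 ∧ ‖(1 : ℂ) - hip Z X‖ ^ 2 < R * (1 - ‖Z‖ ^ 2)}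

/-- The Koranyi region `K(q,M) = {Z ∈ B^N : |1−⟨Z,q⟩| < M(1−‖Z‖)}`. -/
def koranyi {N : ℕ} (q : EuclideanSpace ℂ (Fin N)) (M : ℝ) :
    Set (EuclideanSpace ℂ (Fin N)) :=
  {Z | ‖Z‖ < 1 ∧ ‖(1 : ℂ) - hip Z q‖ < M * (1 - ‖Z‖)}

lemma hip_norm_le {N : ℕ} (Z W : EuclideanSpace ℂ (Fin N)) :
    ‖hip Z W‖ ≤ ‖Z‖ * ‖W‖ := by
  rw [hip]
  simpa [mul_comm] using norm_inner_le_norm (𝕜 := ℂ) W Z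

lemma one_sub_hip_lower {N : ℕ} (Z W : EuclideanSpace ℂ (Fin N)) :
    1 - ‖Z‖ * ‖W‖ ≤ ‖(1:ℂ) - hip Z W‖ := by
  have h := hip_norm_le Z W
  have h2 : ‖(1:ℂ)‖ - ‖hip Z W‖ ≤ ‖(1:ℂ) - hip Z W‖ := norm_sub_norm_le _ _
  simp only [norm_one] at h2
  linarith

lemma one_sub_hip_upper {N : ℕ} (Z W : EuclideanSpace ℂ (Fin N))
    (hZ : ‖Z‖ ≤ 1) (hW : ‖W‖ ≤ 1) : ‖(1:ℂ) - hip Z W‖ ≤ 2 := by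
  have h := hip_norm_le Z W
  have h2 : ‖(1:ℂ) - hip Z W‖ ≤ ‖(1:ℂ)‖ + ‖hip Z W‖ := norm_sub_le _ _
  have h3 : ‖Z‖ * ‖W‖ ≤ 1 := mul_le_one₀ hZ (norm_nonneg _) hW
  simp only [norm_one] at h2
  linarith

lemma norm_sub_sq_le_hip {N : ℕ} (Z W : EuclideanSpace ℂ (Fin N))
    (hZ : ‖Z‖ ≤ 1) (hW : ‖W‖ ≤ 1) :
    ‖Z - W‖ ^ 2 ≤ 2 * ‖(1:ℂ) - hip Z W‖ := by
  have h1 : ‖Z - W‖ ^ 2 = ‖Z‖ ^ 2 - 2 * Complex.re (inner ℂ Z W) + ‖W‖ ^ 2 :=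
    norm_sub_sq (𝕜 := ℂ) Z W
  have h2 : Complex.re (hip Z W) = Complex.re (inner ℂ Z W : ℂ) := by
    rw [hip, ← inner_conj_symm]
    simp
    rw [← inner_conj_symm, Complex.conj_re]
  have h3 : Complex.re ((1:ℂ) - hip Z W) ≤ ‖(1:ℂ) - hip Z W‖ :=
    Complex.re_le_norm _
  have h4 : Complex.re ((1:ℂ) - hip Z W) = 1 - Complex.re (hip Z W) := by simp
  nlinarith [norm_nonneg Z, norm_nonneg W]

set_option maxHeartbeats 1600000 in
/-- hyperbolic case. If `f : B^N → B^N` is holomorphic, satisfies Julia's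
lemma at a Denjoy-Wolff point `p ∈ ∂B^N` with multiplier `c ∈ (0,1)`, and `{Z_n}` is a
backward-iteration sequence for `f` with pseudo-hyperbolic steps bounded by `a < 1`,
then `Z_n` converges to some `q ∈ ∂B^N`, `q ≠ p`. -/
theorem stmt0 {N : ℕ} (hN : 1 ≤ N)
    (f : EuclideanSpace ℂ (Fin N) → EuclideanSpace ℂ (Fin N))
    (hmaps : Set.MapsTo f (unitBall N) (unitBall N))
    (hhol : DifferentiableOn ℂ f (unitBall N))
    (p : EuclideanSpace ℂ (Fin N)) (hp : ‖p‖ = 1)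
    (c : ℝ) (hc0 : 0 < c) (hc1 : c < 1)
    (hJulia : ∀ R : ℝ, 0 < R → f '' horo p R ⊆ horo p (c * R))
    (Z : ℕ → EuclideanSpace ℂ (Fin N)) (hZ : ∀ k, Z k ∈ unitBall N)
    (hback : ∀ k, f (Z (k + 1)) = Z k)
    (a : ℝ) (ha0 : 0 < a) (ha1 : a < 1)
    (hstep : ∀ k, phd (Z k) (Z (k + 1)) ≤ a) :
    ∃ q : EuclideanSpace ℂ (Fin N), ‖q‖ = 1 ∧ q ≠ p ∧ Tendsto Z atTop (𝓝 q) := by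
  classical
  have hZlt : ∀ n, ‖Z n‖ < 1 := hZ
  set v : ℕ → ℝ := fun n => ‖(1:ℂ) - hip (Z n) p‖ with hvdef
  set d : ℕ → ℝ := fun n => 1 - ‖Z n‖ ^ 2 with hddef
  set s : ℕ → ℝ := fun n => ‖(1:ℂ) - hip (Z n) (Z (n+1))‖ with hsdef
  have hdpos : ∀ n, 0 < d n := by
    intro n
    have h := hZlt n
    have := norm_nonneg (Z n)
    simp only [hddef]
    nlinarith
  have hvpos : ∀ n, 0 < v n := by
    intro n
    have h := one_sub_hip_lower (Z n) p
    rw [hp, mul_one] at h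
    have := hZlt n
    simp only [hvdef]
    linarith
  have hvle : ∀ n, v n ≤ 2 := fun n =>
    one_sub_hip_upper (Z n) p (hZlt n).le hp.le
  have hspos : ∀ n, 0 < s n := by
    intro n
    have h := one_sub_hip_lower (Z n) (Z (n+1))
    have h1 := hZlt n
    have h2 := hZlt (n+1)
    have h3 : ‖Z n‖ * ‖Z (n+1)‖ < 1 :=
      mul_lt_one_of_nonneg_of_lt_one_left (norm_nonneg _) h1 h2.le
    simp only [hsdef]
    linarith
  have hW : (0:ℝ) < 1 - a ^ 2 := by nlinarith
  -- Julia's lemma gives the horocycle recursion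
  have hjulia : ∀ n, v n ^ 2 * d (n+1) ≤ c * (v (n+1) ^ 2 * d n) := by
    intro n
    have hd' := hdpos (n+1)
    have hdn := hdpos n
    have key : ∀ ε : ℝ, 0 < ε → v n ^ 2 ≤ c * (v (n+1) ^ 2 / d (n+1)) * d n + ε := by
      intro ε hε
      set R : ℝ := v (n+1) ^ 2 / d (n+1) + ε / (c * d n) with hR
      have hRpos : 0 < R := by
        have h1 : 0 ≤ v (n+1) ^ 2 / d (n+1) := by positivity
        have h2 : 0 < ε / (c * d n) := by positivity
        rw [hR]; linarith
      have hmem : Z (n+1) ∈ horo p R := by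
        refine ⟨hZlt (n+1), ?_⟩
        have he : R * (1 - ‖Z (n+1)‖ ^ 2) = v (n+1) ^ 2 + ε / (c * d n) * d (n+1) := by
          have : (1 : ℝ) - ‖Z (n+1)‖ ^ 2 = d (n+1) := rfl
          rw [this, hR, add_mul, div_mul_cancel₀ _ (ne_of_gt hd')]
        have hpos2 : 0 < ε / (c * d n) * d (n+1) := by positivity
        rw [he]
        have hv2 : ‖(1:ℂ) - hip (Z (n+1)) p‖ ^ 2 = v (n+1) ^ 2 := rfl
        rw [hv2]
        linarith
      have himg : Z n ∈ horo p (c * R) :=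
        hJulia R hRpos ⟨Z (n+1), hmem, hback n⟩
      have h2 := himg.2
      have : v n ^ 2 < c * R * (1 - ‖Z n‖ ^ 2) := h2
      have he2 : c * R * (1 - ‖Z n‖ ^ 2) = c * (v (n+1) ^ 2 / d (n+1)) * d n + ε := by
        have hdn' : (1 : ℝ) - ‖Z n‖ ^ 2 = d n := rfl
        rw [hdn', hR]
        field_simp
      linarith [he2 ▸ this]
    have h := le_of_forall_pos_le_add key
    have h2 := mul_le_mul_of_nonneg_right h hd'.le
    calc v n ^ 2 * d (n+1) ≤ (c * (v (n+1) ^ 2 / d (n+1)) * d n) * d (n+1) := h2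
      _ = c * (v (n+1) ^ 2 * d n) := by field_simp
  -- geometric decay of d
  set u0 : ℝ := v 0 ^ 2 / d 0 with hu0def
  have hu0 : 0 < u0 := div_pos (pow_pos (hvpos 0) 2) (hdpos 0)
  have hdecay : ∀ n, u0 * d n ≤ c ^ n * v n ^ 2 := by
    intro n
    induction n with
    | zero =>
      rw [hu0def, pow_zero, one_mul, div_mul_cancel₀ _ (ne_of_gt (hdpos 0))]
    | succ n ih =>
      have hj := hjulia n
      have h1 : (u0 * d (n+1)) * v n ^ 2 ≤ (c ^ (n+1) * v (n+1) ^ 2) * v n ^ 2 := by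
        calc (u0 * d (n+1)) * v n ^ 2 = u0 * (v n ^ 2 * d (n+1)) := by ring
          _ ≤ u0 * (c * (v (n+1) ^ 2 * d n)) := by
              exact mul_le_mul_of_nonneg_left hj hu0.le
          _ = (c * v (n+1) ^ 2) * (u0 * d n) := by ring
          _ ≤ (c * v (n+1) ^ 2) * (c ^ n * v n ^ 2) := by
              refine mul_le_mul_of_nonneg_left ih (by positivity)
          _ = (c ^ (n+1) * v (n+1) ^ 2) * v n ^ 2 := by ring
      exact le_of_mul_le_mul_right h1 (pow_pos (hvpos n) 2)
  have hdle : ∀ n, d n ≤ c ^ n * v n ^ 2 / u0 := by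
    intro n
    rw [le_div_iff₀ hu0]
    linarith [hdecay n]
  -- step inequality
  have hstep2 : ∀ n, (1 - a ^ 2) * s n ^ 2 ≤ d n * d (n+1) := by
    intro n
    have h := hstep n
    rw [phd] at h
    have hx : 1 - (1 - ‖Z n‖ ^ 2) * (1 - ‖Z (n+1)‖ ^ 2) / ‖(1:ℂ) - hip (Z n) (Z (n+1))‖ ^ 2 ≤ a ^ 2 := by
      set x := 1 - (1 - ‖Z n‖ ^ 2) * (1 - ‖Z (n+1)‖ ^ 2) / ‖(1:ℂ) - hip (Z n) (Z (n+1))‖ ^ 2 with hxdef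
      rcases le_or_gt x 0 with h0 | h0
      · nlinarith
      · have : x = Real.sqrt x ^ 2 := (Real.sq_sqrt h0.le).symm
        rw [this]
        exact pow_le_pow_left₀ (Real.sqrt_nonneg _) h 2
    have hs2 : 0 < s n ^ 2 := pow_pos (hspos n) 2
    have hd1 : (1 - ‖Z n‖ ^ 2) = d n := rfl
    have hd2 : (1 - ‖Z (n+1)‖ ^ 2) = d (n+1) := rfl
    have hs1 : ‖(1:ℂ) - hip (Z n) (Z (n+1))‖ = s n := rfl
    rw [hd1, hd2, hs1] at hx
    have h3 : (1 - a ^ 2) ≤ d n * d (n+1) / s n ^ 2 := by linarith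
    calc (1 - a ^ 2) * s n ^ 2 ≤ (d n * d (n+1) / s n ^ 2) * s n ^ 2 :=
          mul_le_mul_of_nonneg_right h3 hs2.le
      _ = d n * d (n+1) := div_mul_cancel₀ _ (ne_of_gt hs2)
  -- bound on s
  set A : ℝ := Real.sqrt c / (u0 * Real.sqrt (1 - a ^ 2)) with hAdef
  have hApos : 0 < A := by
    apply div_pos (Real.sqrt_pos.mpr hc0)
    exact mul_pos hu0 (Real.sqrt_pos.mpr hW)
  have hsle : ∀ n, s n ≤ A * c ^ n * (v n * v (n+1)) := by
    intro n
    have hrhs : 0 ≤ A * c ^ n * (v n * v (n+1)) := by positivity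
    refine le_of_pow_le_pow_left₀ two_ne_zero hrhs ?_
    have e : (A * c ^ n * (v n * v (n+1))) ^ 2
        = (c ^ n * v n ^ 2 / u0) * (c ^ (n+1) * v (n+1) ^ 2 / u0) / (1 - a ^ 2) := by
      rw [hAdef]
      rw [mul_pow, mul_pow, div_pow, mul_pow, Real.sq_sqrt hc0.le, Real.sq_sqrt hW.le]
      field_simp
      ring
    rw [e]
    have h1 : s n ^ 2 ≤ d n * d (n+1) / (1 - a ^ 2) := by
      rw [le_div_iff₀ hW]
      linarith [hstep2 n]
    have h2 : d n * d (n+1) ≤ (c ^ n * v n ^ 2 / u0) * (c ^ (n+1) * v (n+1) ^ 2 / u0) := by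
      exact mul_le_mul (hdle n) (hdle (n+1)) (hdpos (n+1)).le (by positivity)
    calc s n ^ 2 ≤ d n * d (n+1) / (1 - a ^ 2) := h1
      _ ≤ (c ^ n * v n ^ 2 / u0) * (c ^ (n+1) * v (n+1) ^ 2 / u0) / (1 - a ^ 2) := by
          exact (div_le_div_iff_of_pos_right hW).mpr h2
  -- distance bound and Cauchy
  set γ : ℝ := Real.sqrt c with hγdef
  have hγ0 : 0 < γ := Real.sqrt_pos.mpr hc0
  have hγ1 : γ < 1 := by
    rw [hγdef]
    rw [show (1:ℝ) = Real.sqrt 1 from (Real.sqrt_one).symm]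
    exact Real.sqrt_lt_sqrt hc0.le hc1
  have hγsq : γ ^ 2 = c := Real.sq_sqrt hc0.le
  have hdiff : ∀ n, ‖Z n - Z (n+1)‖ ^ 2 ≤ 2 * A * c ^ n * (v n * v (n+1)) := by
    intro n
    have h1 := norm_sub_sq_le_hip (Z n) (Z (n+1)) (hZlt n).le (hZlt (n+1)).le
    have h2 := hsle n
    have : ‖(1:ℂ) - hip (Z n) (Z (n+1))‖ = s n := rfl
    rw [this] at h1
    nlinarith
  have hcauchy : CauchySeq Z := by
    apply cauchySeq_of_le_geometric γ (Real.sqrt (8 * A)) hγ1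
    intro n
    rw [dist_eq_norm]
    have h1 := hdiff n
    have h2 : v n * v (n+1) ≤ 4 := by
      have := hvle n; have := hvle (n+1); have := hvpos n; have := hvpos (n+1)
      nlinarith
    have h3 : ‖Z n - Z (n+1)‖ ^ 2 ≤ 8 * A * c ^ n := by
      have h2b := mul_le_mul_of_nonneg_left h2
        (mul_nonneg (by linarith [hApos] : (0:ℝ) ≤ 2 * A) (pow_pos hc0 n).le)
      nlinarith [h2b]
    have h4 : (Real.sqrt (8 * A) * γ ^ n) ^ 2 = 8 * A * c ^ n := by
      rw [mul_pow, Real.sq_sqrt (by positivity), ← pow_mul, mul_comm n 2, pow_mul, hγsq]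
    refine le_of_pow_le_pow_left₀ two_ne_zero (by positivity) ?_
    rw [h4]
    exact h3
  obtain ⟨q, hq⟩ := cauchySeq_tendsto_of_complete hcauchy
  -- d n → 0
  have hd0 : Tendsto d atTop (𝓝 0) := by
    have hup : Tendsto (fun n => 4 / u0 * c ^ n) atTop (𝓝 0) := by
      rw [show (0:ℝ) = 4 / u0 * 0 by ring]
      exact (tendsto_pow_atTop_nhds_zero_of_lt_one hc0.le hc1).const_mul _
    apply squeeze_zero (fun n => (hdpos n).le) (fun n => ?_) hup
    have h1 := hdle n
    have h2 : v n ^ 2 ≤ 4 := by nlinarith [hvle n, hvpos n]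
    have := pow_pos hc0 n
    have h4 : c ^ n * v n ^ 2 / u0 ≤ 4 / u0 * c ^ n := by
      rw [div_mul_eq_mul_div]
      apply (div_le_div_iff_of_pos_right hu0).mpr
      nlinarith
    exact h1.trans h4
  have hqnorm : ‖q‖ = 1 := by
    have h1 : Tendsto (fun n => 1 - ‖Z n‖ ^ 2) atTop (𝓝 (1 - ‖q‖ ^ 2)) := by
      have : Tendsto (fun n => ‖Z n‖) atTop (𝓝 ‖q‖) := hq.norm
      have := this.pow 2
      exact tendsto_const_nhds.sub this
    have h2 : (1 : ℝ) - ‖q‖ ^ 2 = 0 := tendsto_nhds_unique h1 hd0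
    have h3 : (‖q‖ - 1) * (‖q‖ + 1) = 0 := by nlinarith
    rcases mul_eq_zero.mp h3 with h | h
    · linarith
    · nlinarith [norm_nonneg q]
  -- lower bound on v: q ≠ p
  set B : ℝ := Real.sqrt (A / 2) with hBdef
  have hBpos : 0 < B := Real.sqrt_pos.mpr (by positivity)
  have hBsq : B ^ 2 = A / 2 := Real.sq_sqrt (by positivity)
  have hkey : ∀ n, v n * (1 - B * γ ^ n) ≤ v (n+1) * (1 + B * γ ^ n) := by
    intro n
    -- triangle inequality
    have htri : v n ≤ v (n+1) + ‖Z n - Z (n+1)‖ := by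
      have he : (1:ℂ) - hip (Z n) p
          = ((1:ℂ) - hip (Z (n+1)) p) + (inner ℂ p (Z (n+1) - Z n) : ℂ) := by
        simp only [hip, inner_sub_right]
        ring
      calc v n = ‖((1:ℂ) - hip (Z (n+1)) p) + (inner ℂ p (Z (n+1) - Z n) : ℂ)‖ := by
            rw [hvdef]; simp only []; rw [he]
        _ ≤ ‖(1:ℂ) - hip (Z (n+1)) p‖ + ‖(inner ℂ p (Z (n+1) - Z n) : ℂ)‖ := norm_add_le _ _
        _ ≤ v (n+1) + ‖Z n - Z (n+1)‖ := by
            have h5 := norm_inner_le_norm (𝕜 := ℂ) p (Z (n+1) - Z n)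
            rw [hp, one_mul, norm_sub_rev] at h5
            exact add_le_add_right h5 _
    have hd2 : ‖Z n - Z (n+1)‖ ≤ B * γ ^ n * (v n + v (n+1)) := by
      refine le_of_pow_le_pow_left₀ two_ne_zero (by positivity) ?_
      have h1 := hdiff n
      have e : (B * γ ^ n * (v n + v (n+1))) ^ 2
          = (A / 2) * c ^ n * (v n + v (n+1)) ^ 2 := by
        rw [mul_pow, mul_pow, hBsq, ← pow_mul, mul_comm n 2, pow_mul, hγsq]
      rw [e]
      nlinarith [mul_nonneg (mul_nonneg hApos.le (pow_pos hc0 n).le)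
        (sq_nonneg (v n - v (n+1)))]
    have hcomb : v n ≤ v (n+1) + B * γ ^ n * (v n + v (n+1)) := by
      calc v n ≤ v (n+1) + ‖Z n - Z (n+1)‖ := htri
        _ ≤ v (n+1) + B * γ ^ n * (v n + v (n+1)) := by linarith [hd2]
    nlinarith [hcomb]
  have hstep3 : ∀ n, v n * (1 - 2 * (B * γ ^ n)) ≤ v (n+1) := by
    intro n
    have h := hkey n
    have hx : 0 ≤ B * γ ^ n := by positivity
    have h2 : v n * (1 - 2 * (B * γ ^ n)) * (1 + B * γ ^ n) ≤ v (n+1) * (1 + B * γ ^ n) := by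
      nlinarith [hvpos n, mul_nonneg (hvpos n).le hx,
        mul_nonneg (mul_nonneg (hvpos n).le hx) hx]
    exact le_of_mul_le_mul_right h2 (by positivity)
  -- pick n0 with the tail small
  obtain ⟨n0, hn0⟩ : ∃ n0, B * γ ^ n0 ≤ (1 - γ) / 4 := by
    have h := tendsto_pow_atTop_nhds_zero_of_lt_one hγ0.le hγ1
    have h2 : Tendsto (fun n => B * γ ^ n) atTop (𝓝 0) := by
      rw [show (0:ℝ) = B * 0 by ring]
      exact h.const_mul B
    have := (h2.eventually_le_const (show (0:ℝ) < (1 - γ)/4 by linarith)).exists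
    exact this
  set M : ℝ := 2 * B * γ ^ n0 / (1 - γ) with hMdef
  have hγ1' : (0:ℝ) < 1 - γ := by linarith
  have hM0 : 0 ≤ M := by positivity
  have hM : M ≤ 1 / 2 := by
    rw [hMdef, div_le_iff₀ hγ1']
    nlinarith
  have hind : ∀ n, v n0 * (1 - M * (1 - γ ^ n)) ≤ v (n0 + n) := by
    intro n
    induction n with
    | zero => simp
    | succ n ih =>
      have hs3 := hstep3 (n0 + n)
      have hγn : (0:ℝ) < γ ^ n := pow_pos hγ0 n
      have hγle : γ ^ n ≤ 1 := pow_le_one₀ hγ0.le hγ1.le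
      have hx : 0 ≤ M * (1 - γ ^ n) := by nlinarith
      have hxle : M * (1 - γ ^ n) ≤ 1 / 2 := by nlinarith
      have hy : 0 ≤ 2 * (B * γ ^ (n0 + n)) := by positivity
      have hyle : 2 * (B * γ ^ (n0 + n)) ≤ M * (γ ^ n - γ ^ (n + 1)) := by
        have : γ ^ (n0 + n) = γ ^ n0 * γ ^ n := by rw [pow_add]
        rw [this, hMdef]
        rw [div_mul_eq_mul_div, le_div_iff₀ hγ1']
        have : γ ^ (n + 1) = γ ^ n * γ := by rw [pow_succ]
        rw [this]
        ring_nf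
        nlinarith [pow_nonneg hγ0.le n, pow_nonneg hγ0.le n0]
      have hvn : 0 < v (n0 + n) := hvpos _
      have hvn0 : 0 < v n0 := hvpos n0
      -- v (n0+n+1) ≥ v(n0+n) * (1 - y) ≥ v n0 (1-x)(1-y) ≥ v n0 (1-x-y) ≥ v n0 (1 - M(1-γ^{n+1}))
      have step1 : v n0 * (1 - M * (1 - γ ^ n)) * (1 - 2 * (B * γ ^ (n0 + n)))
          ≤ v (n0 + n) * (1 - 2 * (B * γ ^ (n0 + n))) := by
        apply mul_le_mul_of_nonneg_right ih
        have : M * (γ ^ n - γ ^ (n+1)) ≤ M := by nlinarith [pow_nonneg hγ0.le (n+1)]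
        linarith
      have hfac : 1 - M * (1 - γ ^ (n + 1))
          ≤ (1 - M * (1 - γ ^ n)) * (1 - 2 * (B * γ ^ (n0 + n))) := by
        nlinarith [mul_nonneg hx hy]
      have step2 : v n0 * (1 - M * (1 - γ ^ (n + 1)))
          ≤ v n0 * (1 - M * (1 - γ ^ n)) * (1 - 2 * (B * γ ^ (n0 + n))) := by
        calc v n0 * (1 - M * (1 - γ ^ (n + 1)))
            ≤ v n0 * ((1 - M * (1 - γ ^ n)) * (1 - 2 * (B * γ ^ (n0 + n)))) :=
              mul_le_mul_of_nonneg_left hfac hvn0.le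
          _ = v n0 * (1 - M * (1 - γ ^ n)) * (1 - 2 * (B * γ ^ (n0 + n))) :=
              (mul_assoc _ _ _).symm
      have := (step2.trans step1).trans hs3
      calc v n0 * (1 - M * (1 - γ ^ (n + 1))) ≤ v (n0 + n + 1) := this
        _ = v (n0 + (n + 1)) := by rw [← add_assoc]
  have hlow : ∀ n, n0 ≤ n → v n0 / 2 ≤ v n := by
    intro n hn
    obtain ⟨m, rfl⟩ := Nat.exists_eq_add_of_le hn
    have h := hind m
    have hγm : (0:ℝ) ≤ γ ^ m := (pow_pos hγ0 m).le
    have hγle : γ ^ m ≤ 1 := pow_le_one₀ hγ0.le hγ1.le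
    have : 1 - M * (1 - γ ^ m) ≥ 1 / 2 := by nlinarith
    nlinarith [hvpos n0]
  -- pass to the limit
  have hvlim : Tendsto v atTop (𝓝 ‖(1:ℂ) - hip q p‖) := by
    have h1 : Tendsto (fun n => (inner ℂ p (Z n) : ℂ)) atTop (𝓝 (inner ℂ p q)) := by
      exact Tendsto.inner tendsto_const_nhds hq
    have h2 : Tendsto (fun n => (1:ℂ) - (inner ℂ p (Z n) : ℂ)) atTop (𝓝 ((1:ℂ) - inner ℂ p q)) :=
      tendsto_const_nhds.sub h1
    exact h2.norm
  have hlim_pos : v n0 / 2 ≤ ‖(1:ℂ) - hip q p‖ := by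
    apply ge_of_tendsto hvlim
    filter_upwards [eventually_ge_atTop n0] with n hn
    exact hlow n hn
  have hqp : q ≠ p := by
    intro h
    rw [h] at hlim_pos
    have : hip p p = (1:ℂ) := by
      rw [hip, inner_self_eq_norm_sq_to_K, hp]
      norm_num
    rw [this] at hlim_pos
    simp at hlim_pos
    have := hvpos n0
    linarith
  exact ⟨q, hqnorm, hqp, hq⟩
end
end

section
/- Let N ≥ 1 and let f : B^N → B^N be holomorphic. Assume there exist p ∈ ∂B^N and c ∈ (0,1) such that f(H(p,R)) ⊆ H(p,cR) for every R > 0. Let {Z_n}_{n≥0} be a backward-iteration sequence for f and a ∈ (0,1) with d(Z_n, Z_{n+1}) ≤ a for all n. Then there exist q ∈ ∂B^N with q ≠ p and M > 1 such that Z_n → q as n → ∞ and Z_n ∈ K(q,M) for every n, i.e. the sequence stays in a Koranyi region with vertex q. -/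
noncomputable section

open Filter Topology

namespace Stmt1Aux

lemma my_sq_le {x y : ℝ} (hy : 0 ≤ y) (h : x ^ 2 ≤ y ^ 2) : x ≤ y := by
  nlinarith [sq_nonneg (x - y), sq_nonneg (x + y)]

lemma re_inner_symm' {N : ℕ} (x y : EuclideanSpace ℂ (Fin N)) :
    Complex.re (inner ℂ x y : ℂ) = Complex.re (inner ℂ y x : ℂ) := by
  simpa [RCLike.re_to_complex] using inner_re_symm (𝕜 := ℂ) x y

lemma norm_sub_sq' {N : ℕ} (x y : EuclideanSpace ℂ (Fin N)) :
    ‖x - y‖ ^ 2 = ‖x‖ ^ 2 - 2 * Complex.re (inner ℂ x y : ℂ) + ‖y‖ ^ 2 := by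
  simpa [RCLike.re_to_complex] using @norm_sub_sq ℂ _ _ _ _ x y

lemma one_sub_hip_ge {N : ℕ} (Z W : EuclideanSpace ℂ (Fin N)) :
    1 - ‖Z‖ * ‖W‖ ≤ ‖(1 : ℂ) - hip Z W‖ := by
  have h1 : ‖(hip Z W : ℂ)‖ ≤ ‖W‖ * ‖Z‖ := norm_inner_le_norm W Z
  have h2 := norm_sub_norm_le (1 : ℂ) (hip Z W)
  simp only [norm_one] at h2
  nlinarith [h1, h2]

lemma one_sub_hip_le {N : ℕ} (Z W : EuclideanSpace ℂ (Fin N)) (hZ : ‖Z‖ ≤ 1) (hW : ‖W‖ ≤ 1) :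
    ‖(1 : ℂ) - hip Z W‖ ≤ 2 := by
  have h1 : ‖(hip Z W : ℂ)‖ ≤ ‖W‖ * ‖Z‖ := norm_inner_le_norm W Z
  have h2 := norm_sub_le (1 : ℂ) (hip Z W)
  simp only [norm_one] at h2
  nlinarith [norm_nonneg W, norm_nonneg Z]

set_option maxHeartbeats 800000 in
lemma norm_sub_sq_le_hip {N : ℕ} (P Q : EuclideanSpace ℂ (Fin N)) (hP : ‖P‖ ≤ 1) (hQ : ‖Q‖ ≤ 1) :
    ‖P - Q‖ ^ 2 ≤ 2 * ‖(1 : ℂ) - hip P Q‖ := by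
  have h1 := norm_sub_sq' P Q
  have h2 : Complex.re ((1 : ℂ) - hip P Q) ≤ ‖(1 : ℂ) - hip P Q‖ := by
    exact Complex.re_le_norm _
  have h3 : Complex.re ((1 : ℂ) - hip P Q) = 1 - Complex.re (inner ℂ Q P : ℂ) := by
    rw [Complex.sub_re, Complex.one_re]; rfl
  have h4 := re_inner_symm' P Q
  nlinarith [norm_nonneg P, norm_nonneg Q, sq_nonneg (1 - ‖P‖), sq_nonneg (1 - ‖Q‖)]

lemma tri_real {A B s T : ℝ} (hA0 : 0 ≤ A) (hB0 : 0 ≤ B) (hs0 : 0 ≤ s)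
    (h2As : 0 ≤ 2 * A - s) (h2Bs : 0 ≤ 2 * B - s)
    (hT : T ≤ A + B + s + Real.sqrt (2 * B - s) * Real.sqrt (2 * A - s)) :
    T ≤ (Real.sqrt A + Real.sqrt B) ^ 2 := by
  have hsA : Real.sqrt A ^ 2 = A := Real.sq_sqrt hA0
  have hsB : Real.sqrt B ^ 2 = B := Real.sq_sqrt hB0
  have hsA0 : 0 ≤ Real.sqrt A := Real.sqrt_nonneg A
  have hsB0 : 0 ≤ Real.sqrt B := Real.sqrt_nonneg B
  have hP2 : (Real.sqrt (2 * B - s) * Real.sqrt (2 * A - s)) ^ 2 = (2 * B - s) * (2 * A - s) := by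
    rw [mul_pow, Real.sq_sqrt h2Bs, Real.sq_sqrt h2As]
  have hP0 : 0 ≤ Real.sqrt (2 * B - s) * Real.sqrt (2 * A - s) :=
    mul_nonneg (Real.sqrt_nonneg _) (Real.sqrt_nonneg _)
  have hs2A : s ≤ 2 * A := by linarith
  have hs2B : s ≤ 2 * B := by linarith
  have hsle : s ≤ 2 * Real.sqrt A * Real.sqrt B := by
    nlinarith [mul_nonneg hsA0 hsB0]
  have hkey : s + Real.sqrt (2 * B - s) * Real.sqrt (2 * A - s) ≤
      2 * Real.sqrt A * Real.sqrt B := by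
    nlinarith [mul_nonneg hs0 (sq_nonneg (Real.sqrt A - Real.sqrt B)), hP2, hP0, hsle]
  have expand : (Real.sqrt A + Real.sqrt B) ^ 2 = A + B + 2 * Real.sqrt A * Real.sqrt B := by
    rw [add_sq, hsA, hsB]; ring
  rw [expand]
  linarith

set_option maxHeartbeats 1000000 in
lemma hip_tri {N : ℕ} {Z V W : EuclideanSpace ℂ (Fin N)}
    (hZ : ‖Z‖ ≤ 1) (hV : ‖V‖ ≤ 1) (hW : ‖W‖ ≤ 1) :
    Real.sqrt ‖(1 : ℂ) - hip Z W‖ ≤ Real.sqrt ‖(1 : ℂ) - hip Z V‖ + Real.sqrt ‖(1 : ℂ) - hip V W‖ := by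
  have hA0 : 0 ≤ ‖(1 : ℂ) - hip Z V‖ := norm_nonneg _
  have hB0 : 0 ≤ ‖(1 : ℂ) - hip V W‖ := norm_nonneg _
  have hs0 : 0 ≤ 1 - ‖V‖ ^ 2 := by nlinarith [norm_nonneg V]
  have hid : (1 : ℂ) - hip Z W =
      (((1 : ℂ) - hip Z V) + ((1 : ℂ) - hip V W) - ((1 - ‖V‖ ^ 2 : ℝ) : ℂ))
        - (inner ℂ (W - V) (Z - V) : ℂ) := by
    have hVV : (inner ℂ V V : ℂ) = (‖V‖ : ℂ) ^ 2 := by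
      rw [inner_self_eq_norm_sq_to_K]
      norm_cast
    simp only [hip, inner_sub_left, inner_sub_right, hVV]
    push_cast
    ring
  have hZV : ‖Z - V‖ ^ 2 ≤ 2 * ‖(1 : ℂ) - hip Z V‖ - (1 - ‖V‖ ^ 2) := by
    have h1 := norm_sub_sq' Z V
    have h2 : 1 - Complex.re (inner ℂ V Z : ℂ) ≤ ‖(1 : ℂ) - hip Z V‖ := by
      have h3 : Complex.re ((1 : ℂ) - hip Z V) ≤ ‖(1 : ℂ) - hip Z V‖ := by
        exact Complex.re_le_norm _
      have h5 : Complex.re ((1 : ℂ) - hip Z V) = 1 - Complex.re (inner ℂ V Z : ℂ) := by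
        rw [Complex.sub_re, Complex.one_re]; rfl
      linarith
    have h4 := re_inner_symm' Z V
    nlinarith [norm_nonneg Z, norm_nonneg V]
  have hWV : ‖W - V‖ ^ 2 ≤ 2 * ‖(1 : ℂ) - hip V W‖ - (1 - ‖V‖ ^ 2) := by
    have h1 := norm_sub_sq' W V
    have h2 : 1 - Complex.re (inner ℂ W V : ℂ) ≤ ‖(1 : ℂ) - hip V W‖ := by
      have h3 : Complex.re ((1 : ℂ) - hip V W) ≤ ‖(1 : ℂ) - hip V W‖ := by
        exact Complex.re_le_norm _
      have h5 : Complex.re ((1 : ℂ) - hip V W) = 1 - Complex.re (inner ℂ W V : ℂ) := by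
        rw [Complex.sub_re, Complex.one_re]; rfl
      linarith
    nlinarith [norm_nonneg W, norm_nonneg V]
  have h2As : 0 ≤ 2 * ‖(1 : ℂ) - hip Z V‖ - (1 - ‖V‖ ^ 2) := le_trans (sq_nonneg _) hZV
  have h2Bs : 0 ≤ 2 * ‖(1 : ℂ) - hip V W‖ - (1 - ‖V‖ ^ 2) := le_trans (sq_nonneg _) hWV
  have hmain : ‖(1 : ℂ) - hip Z W‖ ≤ ‖(1 : ℂ) - hip Z V‖ + ‖(1 : ℂ) - hip V W‖ +
      (1 - ‖V‖ ^ 2) + ‖W - V‖ * ‖Z - V‖ := by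
    rw [hid]
    have t1 := norm_sub_le
      (((1 : ℂ) - hip Z V) + ((1 : ℂ) - hip V W) - ((1 - ‖V‖ ^ 2 : ℝ) : ℂ))
      (inner ℂ (W - V) (Z - V) : ℂ)
    have t2 := norm_sub_le (((1 : ℂ) - hip Z V) + ((1 : ℂ) - hip V W)) ((1 - ‖V‖ ^ 2 : ℝ) : ℂ)
    have t3 := norm_add_le ((1 : ℂ) - hip Z V) ((1 : ℂ) - hip V W)
    have t4 : ‖((1 - ‖V‖ ^ 2 : ℝ) : ℂ)‖ = 1 - ‖V‖ ^ 2 := by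
      rw [Complex.norm_real]; exact abs_of_nonneg hs0
    have t5 : ‖(inner ℂ (W - V) (Z - V) : ℂ)‖ ≤ ‖W - V‖ * ‖Z - V‖ := norm_inner_le_norm _ _
    rw [t4] at t2
    linarith
  have hZV' : ‖Z - V‖ ≤ Real.sqrt (2 * ‖(1 : ℂ) - hip Z V‖ - (1 - ‖V‖ ^ 2)) := by
    rw [← Real.sqrt_sq (norm_nonneg (Z - V))]
    exact Real.sqrt_le_sqrt hZV
  have hWV' : ‖W - V‖ ≤ Real.sqrt (2 * ‖(1 : ℂ) - hip V W‖ - (1 - ‖V‖ ^ 2)) := by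
    rw [← Real.sqrt_sq (norm_nonneg (W - V))]
    exact Real.sqrt_le_sqrt hWV
  have hcross : ‖W - V‖ * ‖Z - V‖ ≤
      Real.sqrt (2 * ‖(1 : ℂ) - hip V W‖ - (1 - ‖V‖ ^ 2)) *
        Real.sqrt (2 * ‖(1 : ℂ) - hip Z V‖ - (1 - ‖V‖ ^ 2)) :=
    mul_le_mul hWV' hZV' (norm_nonneg _) (Real.sqrt_nonneg _)
  have hfin := tri_real hA0 hB0 hs0 h2As h2Bs (by linarith : ‖(1 : ℂ) - hip Z W‖ ≤
      ‖(1 : ℂ) - hip Z V‖ + ‖(1 : ℂ) - hip V W‖ + (1 - ‖V‖ ^ 2) +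
      Real.sqrt (2 * ‖(1 : ℂ) - hip V W‖ - (1 - ‖V‖ ^ 2)) *
        Real.sqrt (2 * ‖(1 : ℂ) - hip Z V‖ - (1 - ‖V‖ ^ 2)))
  calc Real.sqrt ‖(1 : ℂ) - hip Z W‖
      ≤ Real.sqrt ((Real.sqrt ‖(1 : ℂ) - hip Z V‖ + Real.sqrt ‖(1 : ℂ) - hip V W‖) ^ 2) :=
        Real.sqrt_le_sqrt hfin
    _ = Real.sqrt ‖(1 : ℂ) - hip Z V‖ + Real.sqrt ‖(1 : ℂ) - hip V W‖ :=
        Real.sqrt_sq (by positivity)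

set_option maxHeartbeats 1000000 in
lemma chainLim {N : ℕ} (Zs : ℕ → EuclideanSpace ℂ (Fin N)) (hZ1 : ∀ j, ‖Zs j‖ ≤ 1)
    (q : EuclideanSpace ℂ (Fin N)) (hq : Tendsto Zs atTop (𝓝 q))
    (k : ℕ) (C r : ℝ) (hC : 0 ≤ C) (hr0 : 0 ≤ r) (hr1 : r < 1)
    (hb : ∀ j, k ≤ j → Real.sqrt ‖(1 : ℂ) - hip (Zs j) (Zs (j + 1))‖ ≤ C * r ^ (j - k)) :
    Real.sqrt ‖(1 : ℂ) - hip (Zs k) q‖ ≤ C / (1 - r) := by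
  have h1r : 0 < 1 - r := by linarith
  have key : ∀ m, k + 1 ≤ m →
      Real.sqrt ‖(1 : ℂ) - hip (Zs k) (Zs m)‖ ≤ C / (1 - r) - C * r ^ (m - k) / (1 - r) := by
    intro m hm
    induction m, hm using Nat.le_induction with
    | base =>
      have h0 := hb k le_rfl
      rw [Nat.sub_self, pow_zero, mul_one] at h0
      have hidx : k + 1 - k = 1 := by omega
      rw [hidx, pow_one]
      have heq : C / (1 - r) - C * r / (1 - r) = C := by
        field_simp
      linarith
    | succ m hm ih =>
      have tri := hip_tri (hZ1 k) (hZ1 m) (hZ1 (m + 1))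
      have hbm := hb m (by omega)
      have hidx : m + 1 - k = (m - k) + 1 := by omega
      rw [hidx, pow_succ]
      have heq : (C / (1 - r) - C * r ^ (m - k) / (1 - r)) + C * r ^ (m - k) =
          C / (1 - r) - C * (r ^ (m - k) * r) / (1 - r) := by
        field_simp
        ring
      linarith [tri, ih, hbm]
  have hcont : Continuous (fun W : EuclideanSpace ℂ (Fin N) =>
      Real.sqrt ‖(1 : ℂ) - hip (Zs k) W‖) := by
    apply Real.continuous_sqrt.comp
    exact (continuous_const.sub (continuous_id.inner continuous_const)).norm
  have hten : Tendsto (fun n => Real.sqrt ‖(1 : ℂ) - hip (Zs k) (Zs n)‖) atTop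
      (𝓝 (Real.sqrt ‖(1 : ℂ) - hip (Zs k) q‖)) := (hcont.tendsto q).comp hq
  apply le_of_tendsto hten
  filter_upwards [eventually_ge_atTop (k + 1)] with m hm
  have h1 := key m hm
  have h2 : 0 ≤ C * r ^ (m - k) / (1 - r) :=
    div_nonneg (mul_nonneg hC (pow_nonneg hr0 _)) h1r.le
  linarith

lemma phd_ineq {N : ℕ} {Z W : EuclideanSpace ℂ (Fin N)} (hZ : ‖Z‖ < 1) (hW : ‖W‖ < 1)
    {a : ℝ} (h : phd Z W ≤ a) :
    (1 - a ^ 2) * ‖(1 : ℂ) - hip Z W‖ ^ 2 ≤ (1 - ‖Z‖ ^ 2) * (1 - ‖W‖ ^ 2) := by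
  have hA1 := one_sub_hip_ge Z W
  have hZW1 : ‖Z‖ * ‖W‖ < 1 := by nlinarith [norm_nonneg Z, norm_nonneg W]
  have hA0 : 0 < ‖(1 : ℂ) - hip Z W‖ := by linarith
  have hA2 : (0 : ℝ) < ‖(1 : ℂ) - hip Z W‖ ^ 2 := by positivity
  have hxyA : (1 - ‖Z‖ ^ 2) * (1 - ‖W‖ ^ 2) ≤ ‖(1 : ℂ) - hip Z W‖ ^ 2 := by
    nlinarith [sq_nonneg (‖Z‖ - ‖W‖), norm_nonneg Z, norm_nonneg W,
      sq_nonneg (‖(1 : ℂ) - hip Z W‖ - (1 - ‖Z‖ * ‖W‖))]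
  have ht0 : 0 ≤ 1 - (1 - ‖Z‖ ^ 2) * (1 - ‖W‖ ^ 2) / ‖(1 : ℂ) - hip Z W‖ ^ 2 := by
    rw [sub_nonneg, div_le_one hA2]; exact hxyA
  have h4 : Real.sqrt (1 - (1 - ‖Z‖ ^ 2) * (1 - ‖W‖ ^ 2) / ‖(1 : ℂ) - hip Z W‖ ^ 2) ≤ a := h
  have h3 := Real.sq_sqrt ht0
  have h2 : 1 - (1 - ‖Z‖ ^ 2) * (1 - ‖W‖ ^ 2) / ‖(1 : ℂ) - hip Z W‖ ^ 2 ≤ a ^ 2 := by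
    nlinarith [Real.sqrt_nonneg (1 - (1 - ‖Z‖ ^ 2) * (1 - ‖W‖ ^ 2) / ‖(1 : ℂ) - hip Z W‖ ^ 2)]
  have h5 : (1 - a ^ 2) ≤ (1 - ‖Z‖ ^ 2) * (1 - ‖W‖ ^ 2) / ‖(1 : ℂ) - hip Z W‖ ^ 2 := by linarith
  calc (1 - a ^ 2) * ‖(1 : ℂ) - hip Z W‖ ^ 2
      ≤ ((1 - ‖Z‖ ^ 2) * (1 - ‖W‖ ^ 2) / ‖(1 : ℂ) - hip Z W‖ ^ 2) * ‖(1 : ℂ) - hip Z W‖ ^ 2 :=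
        mul_le_mul_of_nonneg_right h5 hA2.le
    _ = (1 - ‖Z‖ ^ 2) * (1 - ‖W‖ ^ 2) := div_mul_cancel₀ _ hA2.ne'

end Stmt1Aux

set_option maxHeartbeats 4000000 in
/-- under the same hypotheses as Statement 0, the limit point `q ∈ ∂B^N`
exists with `q ≠ p`, and moreover the sequence stays in a Koranyi region `K(q,M)`
for some amplitude `M > 1`. -/
theorem stmt1 {N : ℕ} (hN : 1 ≤ N)
    (f : EuclideanSpace ℂ (Fin N) → EuclideanSpace ℂ (Fin N))
    (hmaps : Set.MapsTo f (unitBall N) (unitBall N))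
    (hhol : DifferentiableOn ℂ f (unitBall N))
    (p : EuclideanSpace ℂ (Fin N)) (hp : ‖p‖ = 1)
    (c : ℝ) (hc0 : 0 < c) (hc1 : c < 1)
    (hJulia : ∀ R : ℝ, 0 < R → f '' horo p R ⊆ horo p (c * R))
    (Z : ℕ → EuclideanSpace ℂ (Fin N)) (hZ : ∀ k, Z k ∈ unitBall N)
    (hback : ∀ k, f (Z (k + 1)) = Z k)
    (a : ℝ) (ha0 : 0 < a) (ha1 : a < 1)
    (hstep : ∀ k, phd (Z k) (Z (k + 1)) ≤ a) :
    ∃ (q : EuclideanSpace ℂ (Fin N)) (M : ℝ), ‖q‖ = 1 ∧ q ≠ p ∧ 1 < M ∧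
      Tendsto Z atTop (𝓝 q) ∧ ∀ k, Z k ∈ koranyi q M := by
  classical
  have hZlt : ∀ k, ‖Z k‖ < 1 := hZ
  have hZle : ∀ k, ‖Z k‖ ≤ 1 := fun k => (hZlt k).le
  set x : ℕ → ℝ := fun k => 1 - ‖Z k‖ ^ 2 with hxdef
  set v : ℕ → ℝ := fun k => ‖(1 : ℂ) - hip (Z k) p‖ with hvdef
  set u : ℕ → ℝ := fun k => v k ^ 2 / x k with hudef
  clear_value u
  clear_value v
  clear_value x
  have hxk : ∀ k, x k = 1 - ‖Z k‖ ^ 2 := fun k => by rw [hxdef]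
  have hvk : ∀ k, v k = ‖(1 : ℂ) - hip (Z k) p‖ := fun k => by rw [hvdef]
  have huk : ∀ k, u k = v k ^ 2 / x k := fun k => by rw [hudef]
  have hx0 : ∀ k, 0 < x k := by
    intro k; rw [hxk]; nlinarith [hZlt k, norm_nonneg (Z k)]
  have hv0 : ∀ k, 0 < v k := by
    intro k; rw [hvk]
    have h := Stmt1Aux.one_sub_hip_ge (Z k) p
    rw [hp, mul_one] at h
    linarith [hZlt k]
  have hv2 : ∀ k, v k ≤ 2 := by
    intro k; rw [hvk]; exact Stmt1Aux.one_sub_hip_le _ _ (hZle k) hp.le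
  have hu0 : ∀ k, 0 < u k := fun k => by
    rw [huk]; exact div_pos (pow_pos (hv0 k) 2) (hx0 k)
  have hux : ∀ k, u k * x k = v k ^ 2 := fun k => by
    rw [huk]; exact div_mul_cancel₀ _ (hx0 k).ne'
  -- Julia-type contraction of the horosphere level
  have hJ : ∀ k, u k ≤ c * u (k + 1) := by
    intro k
    apply le_of_forall_pos_le_add
    intro ε hε
    have hεc : 0 < ε / c := div_pos hε hc0
    have hR : 0 < u (k + 1) + ε / c := add_pos (hu0 (k + 1)) hεc
    have hmem : Z (k + 1) ∈ horo p (u (k + 1) + ε / c) := by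
      simp only [horo, Set.mem_setOf_eq]
      refine ⟨hZlt (k + 1), ?_⟩
      rw [← hvk (k + 1), ← hxk (k + 1)]
      have h1 : v (k + 1) ^ 2 = u (k + 1) * x (k + 1) := (hux (k + 1)).symm
      have h2 : u (k + 1) * x (k + 1) < (u (k + 1) + ε / c) * x (k + 1) :=
        mul_lt_mul_of_pos_right (by linarith) (hx0 (k + 1))
      linarith
    have himg : Z k ∈ horo p (c * (u (k + 1) + ε / c)) :=
      hJulia _ hR ⟨Z (k + 1), hmem, hback k⟩
    simp only [horo, Set.mem_setOf_eq] at himg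
    obtain ⟨-, h2⟩ := himg
    have h3 : u k < c * (u (k + 1) + ε / c) := by
      rw [huk, div_lt_iff₀ (hx0 k)]
      calc v k ^ 2 = ‖(1 : ℂ) - hip (Z k) p‖ ^ 2 := by rw [hvk]
        _ < c * (u (k + 1) + ε / c) * (1 - ‖Z k‖ ^ 2) := h2
        _ = c * (u (k + 1) + ε / c) * x k := by rw [hxk]
    have h4 : c * (u (k + 1) + ε / c) = c * u (k + 1) + ε := by
      field_simp
    linarith
  have hukj : ∀ k j, u k ≤ c ^ j * u (k + j) := by
    intro k j
    induction j with
    | zero => simpa using le_refl (u k)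
    | succ j ih =>
      calc u k ≤ c ^ j * u (k + j) := ih
        _ ≤ c ^ j * (c * u (k + j + 1)) :=
            mul_le_mul_of_nonneg_left (hJ (k + j)) (pow_nonneg hc0.le j)
        _ = c ^ (j + 1) * u (k + (j + 1)) := by
            rw [show k + (j + 1) = k + j + 1 from rfl, pow_succ]; ring
  have hx4 : ∀ k, x k * u k ≤ 4 := by
    intro k
    have h := hux k
    nlinarith [hv2 k, hv0 k]
  have hx4c : ∀ k j, x (k + j) * u k ≤ 4 * c ^ j := by
    intro k j
    calc x (k + j) * u k ≤ x (k + j) * (c ^ j * u (k + j)) :=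
          mul_le_mul_of_nonneg_left (hukj k j) (hx0 (k + j)).le
      _ = c ^ j * (x (k + j) * u (k + j)) := by ring
      _ ≤ c ^ j * 4 := mul_le_mul_of_nonneg_left (hx4 (k + j)) (pow_nonneg hc0.le j)
      _ = 4 * c ^ j := by ring
  have ha2 : (0 : ℝ) < 1 - a ^ 2 := by nlinarith
  set s' := Real.sqrt (1 - a ^ 2) with hs'def
  have hs'v : s' = Real.sqrt (1 - a ^ 2) := hs'def
  clear_value s'
  have hs'0 : 0 < s' := by rw [hs'v]; exact Real.sqrt_pos.2 ha2
  have hs'2 : s' ^ 2 = 1 - a ^ 2 := by rw [hs'v]; exact Real.sq_sqrt ha2.le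
  have hAx : ∀ k, (1 - a ^ 2) * ‖(1 : ℂ) - hip (Z k) (Z (k + 1))‖ ^ 2 ≤ x k * x (k + 1) := by
    intro k
    have h := Stmt1Aux.phd_ineq (hZlt k) (hZlt (k + 1)) (hstep k)
    rw [hxk k, hxk (k + 1)]
    exact h
  set K := (1 - a ^ 2) / 4 with hKdef
  clear_value K
  have hK0 : 0 < K := by rw [hKdef]; linarith [ha2]
  have hxK : ∀ k, K * x k ≤ x (k + 1) := by
    intro k
    have hge := Stmt1Aux.one_sub_hip_ge (Z k) (Z (k + 1))
    have hA := hAx k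
    have h1 : x k / 2 ≤ ‖(1 : ℂ) - hip (Z k) (Z (k + 1))‖ := by
      rw [hxk]
      nlinarith [hge, hZle k, hZle (k + 1), norm_nonneg (Z k), norm_nonneg (Z (k + 1)),
        sq_nonneg (1 - ‖Z k‖), mul_nonneg (norm_nonneg (Z k))
          (by linarith [hZle (k + 1)] : (0 : ℝ) ≤ 1 - ‖Z (k + 1)‖)]
    have h2 : (0 : ℝ) ≤ ‖(1 : ℂ) - hip (Z k) (Z (k + 1))‖ := norm_nonneg _
    have h12 : (x k / 2) ^ 2 ≤ ‖(1 : ℂ) - hip (Z k) (Z (k + 1))‖ ^ 2 :=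
      pow_le_pow_left₀ (by linarith [hx0 k]) h1 2
    have h3 : (1 - a ^ 2) * (x k / 2) ^ 2 ≤ x k * x (k + 1) :=
      le_trans (mul_le_mul_of_nonneg_left h12 ha2.le) hA
    rw [hKdef]
    nlinarith [h3, hx0 k, hx0 (k + 1)]
  have hxKk : ∀ k, x 0 * K ^ k ≤ x k := by
    intro k
    induction k with
    | zero => simp
    | succ k ih =>
      calc x 0 * K ^ (k + 1) = K * (x 0 * K ^ k) := by ring
        _ ≤ K * x k := mul_le_mul_of_nonneg_left ih hK0.le
        _ ≤ x (k + 1) := hxK k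
  set γ := Real.sqrt c with hγdef
  have hγv : γ = Real.sqrt c := hγdef
  clear_value γ
  have hγ0 : 0 < γ := by rw [hγv]; exact Real.sqrt_pos.2 hc0
  have hγ2 : γ ^ 2 = c := by rw [hγv]; exact Real.sq_sqrt hc0.le
  have hγ1 : γ < 1 := by nlinarith [hγ0, hγ2, hc1]
  have h1γ : 0 < 1 - γ := by linarith
  have hγpow : ∀ n : ℕ, (γ ^ n) ^ 2 = c ^ n := by
    intro n
    rw [← pow_mul, mul_comm, pow_mul, hγ2]
  have hpow2 : ∀ (m j : ℕ), ((γ ^ m) ^ j) ^ 2 = (c ^ m) ^ j := by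
    intro m j
    rw [← pow_mul γ m j, ← pow_mul γ (m * j) 2, ← pow_mul c m j, ← hγ2, ← pow_mul γ 2 (m * j)]
    congr 1
    ring
  have hxn : ∀ n, x n ≤ 4 / u 0 * c ^ n := by
    intro n
    have h := hx4c 0 n
    rw [zero_add] at h
    rw [div_mul_eq_mul_div, le_div_iff₀ (hu0 0)]
    linarith
  -- geometric bound on the steps
  have hAn : ∀ n, ‖(1 : ℂ) - hip (Z n) (Z (n + 1))‖ * (u 0 * s') ≤ 4 * c ^ n := by
    intro n
    have h1 := hx4c 0 n
    rw [zero_add] at h1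
    have h2 : x (n + 1) * u 0 ≤ 4 * c ^ n := by
      have h2a := hx4c 0 (n + 1)
      rw [zero_add] at h2a
      have h2b := pow_le_pow_of_le_one hc0.le hc1.le (show n ≤ n + 1 by omega)
      linarith
    have h3 := hAx n
    apply Stmt1Aux.my_sq_le (mul_nonneg (by norm_num) (pow_nonneg hc0.le n))
    have hexp : (‖(1 : ℂ) - hip (Z n) (Z (n + 1))‖ * (u 0 * s')) ^ 2 =
        (1 - a ^ 2) * ‖(1 : ℂ) - hip (Z n) (Z (n + 1))‖ ^ 2 * u 0 ^ 2 := by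
      rw [mul_pow, mul_pow, hs'2]; ring
    rw [hexp]
    calc (1 - a ^ 2) * ‖(1 : ℂ) - hip (Z n) (Z (n + 1))‖ ^ 2 * u 0 ^ 2
        ≤ (x n * x (n + 1)) * u 0 ^ 2 := by
          nlinarith [mul_le_mul_of_nonneg_right h3 (sq_nonneg (u 0))]
      _ = (x n * u 0) * (x (n + 1) * u 0) := by ring
      _ ≤ (4 * c ^ n) * (4 * c ^ n) :=
          mul_le_mul h1 h2 (mul_nonneg (hx0 _).le (hu0 0).le)
            (mul_nonneg (by norm_num) (pow_nonneg hc0.le n))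
      _ = (4 * c ^ n) ^ 2 := by ring
  set D := Real.sqrt (8 / (u 0 * s')) with hDdef
  clear_value D
  have hw00 : 0 < u 0 * s' := mul_pos (hu0 0) hs'0
  have hD0 : 0 ≤ D := by rw [hDdef]; exact Real.sqrt_nonneg _
  have hdist : ∀ n, dist (Z n) (Z (n + 1)) ≤ D * γ ^ n := by
    intro n
    rw [dist_eq_norm]
    apply Stmt1Aux.my_sq_le (mul_nonneg hD0 (pow_nonneg hγ0.le n))
    have h1 := Stmt1Aux.norm_sub_sq_le_hip (Z n) (Z (n + 1)) (hZle n) (hZle (n + 1))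
    have h2 := hAn n
    have hA4 : ‖(1 : ℂ) - hip (Z n) (Z (n + 1))‖ ≤ 4 * c ^ n / (u 0 * s') := by
      rw [le_div_iff₀ hw00]; linarith
    have h4 : (D * γ ^ n) ^ 2 = 8 * c ^ n / (u 0 * s') := by
      rw [mul_pow, hγpow n, hDdef, Real.sq_sqrt (div_nonneg (by norm_num) hw00.le)]
      ring
    rw [h4]
    calc ‖Z n - Z (n + 1)‖ ^ 2 ≤ 2 * ‖(1 : ℂ) - hip (Z n) (Z (n + 1))‖ := h1
      _ ≤ 2 * (4 * c ^ n / (u 0 * s')) := by linarith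
      _ = 8 * c ^ n / (u 0 * s') := by ring
  have hcauchy : CauchySeq Z := cauchySeq_of_le_geometric γ D hγ1 hdist
  obtain ⟨q, hq⟩ := cauchySeq_tendsto_of_complete hcauchy
  have hxto : Tendsto x atTop (𝓝 0) := by
    apply squeeze_zero (fun n => (hx0 n).le) hxn
    have h := tendsto_pow_atTop_nhds_zero_of_lt_one hc0.le hc1
    simpa using h.const_mul (4 / u 0)
  have hq1 : ‖q‖ = 1 := by
    have h1 : Tendsto (fun n => ‖Z n‖ ^ 2) atTop (𝓝 (‖q‖ ^ 2)) := (hq.norm).pow 2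
    have h2 : Tendsto (fun n => ‖Z n‖ ^ 2) atTop (𝓝 1) := by
      have heq : (fun n => ‖Z n‖ ^ 2) = fun n => 1 - x n := by
        funext n; rw [hxk]; ring
      rw [heq]
      simpa using tendsto_const_nhds.sub hxto
    have h3 : ‖q‖ ^ 2 = 1 := tendsto_nhds_unique h1 h2
    nlinarith [norm_nonneg q]
  set C₀ := 4 / (s' * (1 - γ) ^ 2) with hC₀def
  clear_value C₀
  have hC₀0 : 0 < C₀ := by
    rw [hC₀def]
    exact div_pos (by norm_num) (mul_pos hs'0 (pow_pos h1γ 2))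
  -- the key Koranyi-region estimate
  have hv'u : ∀ k, ‖(1 : ℂ) - hip (Z k) q‖ * u k ≤ C₀ := by
    intro k
    have hw0 : 0 < u k * s' := mul_pos (hu0 k) hs'0
    have hCk0 : 0 < 2 / Real.sqrt (u k * s') := by
      apply div_pos (by norm_num) (Real.sqrt_pos.2 hw0)
    have hb : ∀ j, k ≤ j → Real.sqrt ‖(1 : ℂ) - hip (Z j) (Z (j + 1))‖ ≤
        (2 / Real.sqrt (u k * s')) * γ ^ (j - k) := by
      intro j hj
      obtain ⟨m, rfl⟩ : ∃ m, j = k + m := ⟨j - k, by omega⟩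
      rw [Nat.add_sub_cancel_left]
      have h1 := hx4c k m
      have h2 : x (k + m + 1) * u k ≤ 4 * c ^ m := by
        have h2a := hx4c k (m + 1)
        rw [show k + (m + 1) = k + m + 1 from rfl] at h2a
        have h2b := pow_le_pow_of_le_one hc0.le hc1.le (show m ≤ m + 1 by omega)
        linarith
      have h3 := hAx (k + m)
      have hAm : ‖(1 : ℂ) - hip (Z (k + m)) (Z (k + m + 1))‖ * (u k * s') ≤ 4 * c ^ m := by
        apply Stmt1Aux.my_sq_le (mul_nonneg (by norm_num) (pow_nonneg hc0.le m))
        have hexp : (‖(1 : ℂ) - hip (Z (k + m)) (Z (k + m + 1))‖ * (u k * s')) ^ 2 =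
            (1 - a ^ 2) * ‖(1 : ℂ) - hip (Z (k + m)) (Z (k + m + 1))‖ ^ 2 * u k ^ 2 := by
          rw [mul_pow, mul_pow, hs'2]; ring
        rw [hexp]
        calc (1 - a ^ 2) * ‖(1 : ℂ) - hip (Z (k + m)) (Z (k + m + 1))‖ ^ 2 * u k ^ 2
            ≤ (x (k + m) * x (k + m + 1)) * u k ^ 2 := by
              nlinarith [mul_le_mul_of_nonneg_right h3 (sq_nonneg (u k))]
          _ = (x (k + m) * u k) * (x (k + m + 1) * u k) := by ring
          _ ≤ (4 * c ^ m) * (4 * c ^ m) :=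
              mul_le_mul h1 h2 (mul_nonneg (hx0 _).le (hu0 k).le)
                (mul_nonneg (by norm_num) (pow_nonneg hc0.le m))
          _ = (4 * c ^ m) ^ 2 := by ring
      have hCkγ : ((2 / Real.sqrt (u k * s')) * γ ^ m) ^ 2 = 4 * c ^ m / (u k * s') := by
        rw [mul_pow, hγpow m, div_pow, Real.sq_sqrt hw0.le]
        ring
      have hA4 : ‖(1 : ℂ) - hip (Z (k + m)) (Z (k + m + 1))‖ ≤
          ((2 / Real.sqrt (u k * s')) * γ ^ m) ^ 2 := by
        rw [hCkγ, le_div_iff₀ hw0]; exact hAm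
      calc Real.sqrt ‖(1 : ℂ) - hip (Z (k + m)) (Z (k + m + 1))‖
          ≤ Real.sqrt (((2 / Real.sqrt (u k * s')) * γ ^ m) ^ 2) := Real.sqrt_le_sqrt hA4
        _ = (2 / Real.sqrt (u k * s')) * γ ^ m :=
            Real.sqrt_sq (mul_nonneg hCk0.le (pow_nonneg hγ0.le m))
    have hchain := Stmt1Aux.chainLim Z hZle q hq k (2 / Real.sqrt (u k * s')) γ
      hCk0.le hγ0.le hγ1 hb
    have hv' : ‖(1 : ℂ) - hip (Z k) q‖ ≤ ((2 / Real.sqrt (u k * s')) / (1 - γ)) ^ 2 := by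
      rw [← Real.sq_sqrt (norm_nonneg ((1 : ℂ) - hip (Z k) q))]
      exact pow_le_pow_left₀ (Real.sqrt_nonneg _) hchain 2
    have h6 : ((2 / Real.sqrt (u k * s')) / (1 - γ)) ^ 2 * u k = C₀ := by
      have hu' := (hu0 k).ne'
      have hs'' := hs'0.ne'
      have h1γ' := h1γ.ne'
      rw [div_pow, div_pow, Real.sq_sqrt hw0.le, hC₀def]
      field_simp
      ring
    calc ‖(1 : ℂ) - hip (Z k) q‖ * u k
        ≤ ((2 / Real.sqrt (u k * s')) / (1 - γ)) ^ 2 * u k :=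
          mul_le_mul_of_nonneg_right hv' (hu0 k).le
      _ = C₀ := h6
  -- q ≠ p via the bootstrap argument
  have hqne : q ≠ p := by
    intro hqp
    have boot : ∀ n : ℕ, ∃ B : ℝ, 0 < B ∧ ∀ k, v k ≤ B * (c ^ (n + 1)) ^ k := by
      intro n
      induction n with
      | zero =>
        refine ⟨C₀ / u 0, div_pos hC₀0 (hu0 0), ?_⟩
        intro k
        have h1 : v k * u k ≤ C₀ := by
          have h1' := hv'u k
          rw [hqp, ← hvk k] at h1'
          exact h1'
        have h2 : v k * u 0 ≤ c ^ k * C₀ := by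
          calc v k * u 0 ≤ v k * (c ^ k * u k) :=
                mul_le_mul_of_nonneg_left (by simpa using hukj 0 k) (hv0 k).le
            _ = c ^ k * (v k * u k) := by ring
            _ ≤ c ^ k * C₀ := mul_le_mul_of_nonneg_left h1 (pow_nonneg hc0.le k)
        rw [show (0 : ℕ) + 1 = 1 from rfl, pow_one, div_mul_eq_mul_div, le_div_iff₀ (hu0 0)]
        linarith
      | succ n ih =>
        obtain ⟨B, hB0, hB⟩ := ih
        have hxB : ∀ k, x k * u 0 ≤ B ^ 2 * (c ^ (2 * n + 3)) ^ k := by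
          intro k
          have hpow : c ^ k * ((c ^ (n + 1)) ^ k) ^ 2 = (c ^ (2 * n + 3)) ^ k := by
            rw [← pow_mul c (n + 1) k, ← pow_mul c ((n + 1) * k) 2,
              ← pow_add c k ((n + 1) * k * 2), ← pow_mul c (2 * n + 3) k]
            congr 1
            ring
          calc x k * u 0 ≤ x k * (c ^ k * u k) :=
                mul_le_mul_of_nonneg_left (by simpa using hukj 0 k) (hx0 k).le
            _ = c ^ k * (u k * x k) := by ring
            _ = c ^ k * v k ^ 2 := by rw [hux k]
            _ ≤ c ^ k * (B * (c ^ (n + 1)) ^ k) ^ 2 :=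
                mul_le_mul_of_nonneg_left (pow_le_pow_left₀ (hv0 k).le (hB k) 2)
                  (pow_nonneg hc0.le k)
            _ = B ^ 2 * (c ^ k * ((c ^ (n + 1)) ^ k) ^ 2) := by rw [mul_pow]; ring
            _ = B ^ 2 * (c ^ (2 * n + 3)) ^ k := by rw [hpow]
        have hr0 : 0 < γ ^ (2 * n + 3) := pow_pos hγ0 _
        have hr1 : γ ^ (2 * n + 3) < 1 := pow_lt_one₀ hγ0.le hγ1 (by omega)
        have hrsq : (γ ^ (2 * n + 3)) ^ 2 = c ^ (2 * n + 3) := hγpow _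
        have hw0 : 0 < u 0 * s' := hw00
        have hC'0 : 0 < B / Real.sqrt (u 0 * s') := div_pos hB0 (Real.sqrt_pos.2 hw0)
        have hstepb : ∀ j, Real.sqrt ‖(1 : ℂ) - hip (Z j) (Z (j + 1))‖ ≤
            (B / Real.sqrt (u 0 * s')) * (γ ^ (2 * n + 3)) ^ j := by
          intro j
          have h1 := hxB j
          have h2 : x (j + 1) * u 0 ≤ B ^ 2 * (c ^ (2 * n + 3)) ^ j := by
            have h2a := hxB (j + 1)
            have h2b : (c ^ (2 * n + 3)) ^ (j + 1) ≤ (c ^ (2 * n + 3)) ^ j :=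
              pow_le_pow_of_le_one (pow_nonneg hc0.le _)
                (pow_le_one₀ hc0.le hc1.le) (show j ≤ j + 1 by omega)
            nlinarith [sq_nonneg B]
          have h3 := hAx j
          have hAm : ‖(1 : ℂ) - hip (Z j) (Z (j + 1))‖ * (u 0 * s') ≤
              B ^ 2 * (c ^ (2 * n + 3)) ^ j := by
            apply Stmt1Aux.my_sq_le
              (mul_nonneg (sq_nonneg B) (pow_nonneg (pow_nonneg hc0.le _) j))
            have hexp : (‖(1 : ℂ) - hip (Z j) (Z (j + 1))‖ * (u 0 * s')) ^ 2 =
                (1 - a ^ 2) * ‖(1 : ℂ) - hip (Z j) (Z (j + 1))‖ ^ 2 * u 0 ^ 2 := by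
              rw [mul_pow, mul_pow, hs'2]; ring
            rw [hexp]
            calc (1 - a ^ 2) * ‖(1 : ℂ) - hip (Z j) (Z (j + 1))‖ ^ 2 * u 0 ^ 2
                ≤ (x j * x (j + 1)) * u 0 ^ 2 := by
                  nlinarith [mul_le_mul_of_nonneg_right h3 (sq_nonneg (u 0))]
              _ = (x j * u 0) * (x (j + 1) * u 0) := by ring
              _ ≤ (B ^ 2 * (c ^ (2 * n + 3)) ^ j) * (B ^ 2 * (c ^ (2 * n + 3)) ^ j) :=
                  mul_le_mul h1 h2 (mul_nonneg (hx0 _).le (hu0 0).le)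
                    (mul_nonneg (sq_nonneg B) (pow_nonneg (pow_nonneg hc0.le _) j))
              _ = (B ^ 2 * (c ^ (2 * n + 3)) ^ j) ^ 2 := by ring
          have hrj : ((γ ^ (2 * n + 3)) ^ j) ^ 2 = (c ^ (2 * n + 3)) ^ j := hpow2 _ _
          have hC'j : ((B / Real.sqrt (u 0 * s')) * (γ ^ (2 * n + 3)) ^ j) ^ 2 =
              B ^ 2 * (c ^ (2 * n + 3)) ^ j / (u 0 * s') := by
            rw [mul_pow, hrj, div_pow, Real.sq_sqrt hw0.le]
            ring
          have hA4 : ‖(1 : ℂ) - hip (Z j) (Z (j + 1))‖ ≤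
              ((B / Real.sqrt (u 0 * s')) * (γ ^ (2 * n + 3)) ^ j) ^ 2 := by
            rw [hC'j, le_div_iff₀ hw0]; exact hAm
          calc Real.sqrt ‖(1 : ℂ) - hip (Z j) (Z (j + 1))‖
              ≤ Real.sqrt (((B / Real.sqrt (u 0 * s')) * (γ ^ (2 * n + 3)) ^ j) ^ 2) :=
                Real.sqrt_le_sqrt hA4
            _ = (B / Real.sqrt (u 0 * s')) * (γ ^ (2 * n + 3)) ^ j :=
                Real.sqrt_sq (mul_nonneg hC'0.le (pow_nonneg hr0.le j))
        refine ⟨B ^ 2 / (u 0 * s') / (1 - γ ^ (2 * n + 3)) ^ 2, ?_, ?_⟩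
        · apply div_pos (div_pos (by positivity) hw0)
          have : 0 < 1 - γ ^ (2 * n + 3) := by linarith
          positivity
        intro k
        have hb : ∀ j, k ≤ j → Real.sqrt ‖(1 : ℂ) - hip (Z j) (Z (j + 1))‖ ≤
            ((B / Real.sqrt (u 0 * s')) * (γ ^ (2 * n + 3)) ^ k) * (γ ^ (2 * n + 3)) ^ (j - k) := by
          intro j hj
          obtain ⟨m, rfl⟩ : ∃ m, j = k + m := ⟨j - k, by omega⟩
          rw [Nat.add_sub_cancel_left]
          calc Real.sqrt ‖(1 : ℂ) - hip (Z (k + m)) (Z (k + m + 1))‖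
              ≤ (B / Real.sqrt (u 0 * s')) * (γ ^ (2 * n + 3)) ^ (k + m) := hstepb (k + m)
            _ = ((B / Real.sqrt (u 0 * s')) * (γ ^ (2 * n + 3)) ^ k) * (γ ^ (2 * n + 3)) ^ m := by
                rw [pow_add]; ring
        have hchain := Stmt1Aux.chainLim Z hZle q hq k
          ((B / Real.sqrt (u 0 * s')) * (γ ^ (2 * n + 3)) ^ k) (γ ^ (2 * n + 3))
          (mul_nonneg hC'0.le (pow_nonneg hr0.le k)) hr0.le hr1 hb
        have hv' : v k ≤ (((B / Real.sqrt (u 0 * s')) * (γ ^ (2 * n + 3)) ^ k) /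
            (1 - γ ^ (2 * n + 3))) ^ 2 := by
          rw [hvk k, ← hqp, ← Real.sq_sqrt (norm_nonneg ((1 : ℂ) - hip (Z k) q))]
          exact pow_le_pow_left₀ (Real.sqrt_nonneg _) hchain 2
        have hrk : ((γ ^ (2 * n + 3)) ^ k) ^ 2 = (c ^ (2 * n + 3)) ^ k := hpow2 _ _
        have h7 : (((B / Real.sqrt (u 0 * s')) * (γ ^ (2 * n + 3)) ^ k) /
            (1 - γ ^ (2 * n + 3))) ^ 2 =
            (B ^ 2 / (u 0 * s') / (1 - γ ^ (2 * n + 3)) ^ 2) * (c ^ (2 * n + 3)) ^ k := by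
          rw [div_pow, mul_pow, hrk, div_pow, Real.sq_sqrt hw0.le]
          ring
        have h8 : (c ^ (2 * n + 3)) ^ k ≤ (c ^ (n + 1 + 1)) ^ k := by
          apply pow_le_pow_left₀ (pow_nonneg hc0.le _)
          exact pow_le_pow_of_le_one hc0.le hc1.le (by omega)
        calc v k ≤ (((B / Real.sqrt (u 0 * s')) * (γ ^ (2 * n + 3)) ^ k) /
              (1 - γ ^ (2 * n + 3))) ^ 2 := hv'
          _ = (B ^ 2 / (u 0 * s') / (1 - γ ^ (2 * n + 3)) ^ 2) * (c ^ (2 * n + 3)) ^ k := h7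
          _ ≤ (B ^ 2 / (u 0 * s') / (1 - γ ^ (2 * n + 3)) ^ 2) * (c ^ (n + 1 + 1)) ^ k := by
              apply mul_le_mul_of_nonneg_left h8
              apply div_nonneg (div_nonneg (sq_nonneg B) hw00.le) (sq_nonneg _)
    obtain ⟨n, hn⟩ : ∃ n : ℕ, c ^ (n + 1) < K := by
      obtain ⟨n, hn⟩ :=
        ((tendsto_pow_atTop_nhds_zero_of_lt_one hc0.le hc1).eventually (gt_mem_nhds hK0)).exists
      refine ⟨n, lt_of_le_of_lt ?_ hn⟩
      exact pow_le_pow_of_le_one hc0.le hc1.le (show n ≤ n + 1 by omega)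
    obtain ⟨B, hB0, hB⟩ := boot n
    have hxB : ∀ k, x k * u 0 ≤ B ^ 2 * (c ^ (n + 1)) ^ k := by
      intro k
      have e1 : c ^ k ≤ 1 := pow_le_one₀ hc0.le hc1.le
      have ht0 : (0 : ℝ) ≤ (c ^ (n + 1)) ^ k := pow_nonneg (pow_nonneg hc0.le _) k
      have e2 : ((c ^ (n + 1)) ^ k) ^ 2 ≤ (c ^ (n + 1)) ^ k := by
        have ht1 : (c ^ (n + 1)) ^ k ≤ 1 := pow_le_one₀ (pow_nonneg hc0.le _)
          (pow_le_one₀ hc0.le hc1.le)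
        nlinarith
      calc x k * u 0 ≤ x k * (c ^ k * u k) :=
            mul_le_mul_of_nonneg_left (by simpa using hukj 0 k) (hx0 k).le
        _ = c ^ k * (u k * x k) := by ring
        _ = c ^ k * v k ^ 2 := by rw [hux k]
        _ ≤ c ^ k * (B * (c ^ (n + 1)) ^ k) ^ 2 :=
            mul_le_mul_of_nonneg_left (pow_le_pow_left₀ (hv0 k).le (hB k) 2)
              (pow_nonneg hc0.le k)
        _ ≤ B ^ 2 * (c ^ (n + 1)) ^ k := by
            nlinarith [sq_nonneg B, pow_nonneg hc0.le k, sq_nonneg (B * (c ^ (n + 1)) ^ k),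
              mul_nonneg (mul_nonneg (sq_nonneg B) ht0) ht0]
    have hcontra : ∀ k, (K / c ^ (n + 1)) ^ k ≤ B ^ 2 / (x 0 * u 0) := by
      intro k
      have h1 := hxKk k
      have h3 : x 0 * K ^ k * u 0 ≤ B ^ 2 * (c ^ (n + 1)) ^ k := by
        calc x 0 * K ^ k * u 0 ≤ x k * u 0 := mul_le_mul_of_nonneg_right h1 (hu0 0).le
          _ ≤ B ^ 2 * (c ^ (n + 1)) ^ k := hxB k
      rw [div_pow, div_le_div_iff₀ (pow_pos (pow_pos hc0 (n + 1)) k) (mul_pos (hx0 0) (hu0 0))]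
      calc K ^ k * (x 0 * u 0) = x 0 * K ^ k * u 0 := by ring
        _ ≤ B ^ 2 * (c ^ (n + 1)) ^ k := h3
    have ht1 : 1 < K / c ^ (n + 1) := (one_lt_div (pow_pos hc0 (n + 1))).2 hn
    obtain ⟨k, hk⟩ :=
      ((tendsto_pow_atTop_atTop_of_one_lt ht1).eventually_gt_atTop (B ^ 2 / (x 0 * u 0))).exists
    exact absurd (hcontra k) (not_le.2 hk)
  -- the limit of v is positive
  have hL0 : 0 < ‖(1 : ℂ) - hip q p‖ := by
    rcases (norm_nonneg ((1 : ℂ) - hip q p)).lt_or_eq with h | h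
    · exact h
    · exfalso
      have h1 : (1 : ℂ) - hip q p = 0 := norm_eq_zero.mp h.symm
      have h2 : (inner ℂ p q : ℂ) = 1 := by
        have h2' : hip q p = 1 := (sub_eq_zero.mp h1).symm
        simpa [hip] using h2'
      apply hqne
      have h4 : Complex.re (inner ℂ q p : ℂ) = 1 := by
        rw [Stmt1Aux.re_inner_symm' q p, h2]; simp
      have h3 : ‖q - p‖ ^ 2 = 0 := by
        rw [Stmt1Aux.norm_sub_sq' q p, h4, hq1, hp]; norm_num
      have h5 : ‖q - p‖ = 0 := by nlinarith [norm_nonneg (q - p)]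
      simpa [sub_eq_zero] using norm_eq_zero.mp h5
  have hvten : Tendsto v atTop (𝓝 ‖(1 : ℂ) - hip q p‖) := by
    have hcont : Continuous (fun W : EuclideanSpace ℂ (Fin N) => ‖(1 : ℂ) - (inner ℂ p W : ℂ)‖) :=
      (continuous_const.sub (continuous_const.inner continuous_id)).norm
    have h := (hcont.tendsto q).comp hq
    rw [hvdef]
    exact h
  obtain ⟨k0, hk0⟩ := eventually_atTop.1
    (hvten.eventually (lt_mem_nhds (show ‖(1 : ℂ) - hip q p‖ / 2 < ‖(1 : ℂ) - hip q p‖ by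
      linarith)))
  have hrange : (Finset.range (k0 + 1)).Nonempty := ⟨0, by simp⟩
  set δ := min (‖(1 : ℂ) - hip q p‖ / 2) ((Finset.range (k0 + 1)).inf' hrange v) with hδdef
  have hδ0 : 0 < δ := by
    rw [hδdef]
    apply lt_min (by linarith)
    obtain ⟨i, -, hi⟩ := Finset.exists_mem_eq_inf' hrange v
    rw [hi]; exact hv0 i
  have hδle : ∀ k, δ ≤ v k := by
    intro k
    rcases le_or_gt k k0 with hk | hk
    · exact le_trans (min_le_right _ _) (Finset.inf'_le v (Finset.mem_range.2 (by omega)))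
    · exact le_trans (min_le_left _ _) (hk0 k (by omega)).le
  have hδ2 : (0 : ℝ) < δ ^ 2 := pow_pos hδ0 2
  refine ⟨q, 2 * C₀ / δ ^ 2 + 2, hq1, hqne, ?_, hq, ?_⟩
  · have h : 0 < 2 * C₀ / δ ^ 2 := div_pos (by linarith) hδ2
    linarith
  · intro k
    simp only [koranyi, Set.mem_setOf_eq]
    refine ⟨hZlt k, ?_⟩
    have h1 := hv'u k
    have h2 : ‖(1 : ℂ) - hip (Z k) q‖ * δ ^ 2 ≤ C₀ * x k := by
      calc ‖(1 : ℂ) - hip (Z k) q‖ * δ ^ 2 ≤ ‖(1 : ℂ) - hip (Z k) q‖ * v k ^ 2 :=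
            mul_le_mul_of_nonneg_left (pow_le_pow_left₀ hδ0.le (hδle k) 2) (norm_nonneg _)
        _ = (‖(1 : ℂ) - hip (Z k) q‖ * u k) * x k := by rw [← hux k]; ring
        _ ≤ C₀ * x k := mul_le_mul_of_nonneg_right h1 (hx0 k).le
    have h3 : x k ≤ 2 * (1 - ‖Z k‖) := by
      rw [hxk]; nlinarith [hZle k, norm_nonneg (Z k)]
    have h4 : 0 < 1 - ‖Z k‖ := by linarith [hZlt k]
    have h5 : ‖(1 : ℂ) - hip (Z k) q‖ * δ ^ 2 < (2 * C₀ / δ ^ 2 + 2) * (1 - ‖Z k‖) * δ ^ 2 := by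
      have he : (2 * C₀ / δ ^ 2 + 2) * (1 - ‖Z k‖) * δ ^ 2 =
          (2 * C₀ + 2 * δ ^ 2) * (1 - ‖Z k‖) := by
        field_simp
      rw [he]
      nlinarith [h2, mul_le_mul_of_nonneg_left h3 hC₀0.le, mul_pos hδ2 h4]
    exact lt_of_mul_lt_mul_right h5 hδ2.le
end
end

section
/- Let N ≥ 1, let f : B^N → B^N be holomorphic, and let p, q ∈ ∂B^N with p ≠ q. Suppose c > 0 and α > 0 are such that f(H(p,R)) ⊆ H(p,cR) for every R > 0 and f(H(q,R)) ⊆ H(q,αR) for every R > 0. Then cα ≥ 1; in particular, if c < 1 then α > 1. -/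
noncomputable section

open Filter Topology

set_option maxHeartbeats 1000000 in
theorem stmt3_aux {N : ℕ} (hN : 1 ≤ N)
    (f : EuclideanSpace ℂ (Fin N) → EuclideanSpace ℂ (Fin N))
    (hmaps : Set.MapsTo f (unitBall N) (unitBall N))
    (hhol : DifferentiableOn ℂ f (unitBall N))
    (p q : EuclideanSpace ℂ (Fin N)) (hp : ‖p‖ = 1) (hq : ‖q‖ = 1) (hpq : p ≠ q)
    (c α : ℝ) (hc : 0 < c) (hα : 0 < α)
    (hJp : ∀ R : ℝ, 0 < R → f '' horo p R ⊆ horo p (c * R))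
    (hJq : ∀ R : ℝ, 0 < R → f '' horo q R ⊆ horo q (α * R)) :
    1 ≤ c * α ∧ (c < 1 → 1 < α) := by
  classical
  have hs : ∀ Z : EuclideanSpace ℂ (Fin N), ‖Z‖ < 1 → 0 < 1 - ‖Z‖ ^ 2 := by
    intro Z hZ; nlinarith [norm_nonneg Z]
  -- pointwise form of Julia's lemma
  have key : ∀ (X : EuclideanSpace ℂ (Fin N)) (γ : ℝ), 0 < γ →
      (∀ R : ℝ, 0 < R → f '' horo X R ⊆ horo X (γ * R)) →
      ∀ Z : EuclideanSpace ℂ (Fin N), ‖Z‖ < 1 →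
      ‖(1 : ℂ) - hip (f Z) X‖ ^ 2 / (1 - ‖f Z‖ ^ 2) ≤
        γ * (‖(1 : ℂ) - hip Z X‖ ^ 2 / (1 - ‖Z‖ ^ 2)) := by
    intro X γ hγ hJ Z hZ
    have hsZ := hs Z hZ
    have hfZ : ‖f Z‖ < 1 := hmaps hZ
    have hsf := hs (f Z) hfZ
    set RZ := ‖(1 : ℂ) - hip Z X‖ ^ 2 / (1 - ‖Z‖ ^ 2) with hRZ
    have hRZ0 : 0 ≤ RZ := div_nonneg (by positivity) hsZ.le
    have hεstep : ∀ ε : ℝ, 0 < ε →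
        ‖(1 : ℂ) - hip (f Z) X‖ ^ 2 / (1 - ‖f Z‖ ^ 2) ≤ γ * (RZ + ε) := by
      intro ε hε
      have hmemZ : Z ∈ horo X (RZ + ε) := by
        refine ⟨hZ, ?_⟩
        have hEq : ‖(1 : ℂ) - hip Z X‖ ^ 2 = RZ * (1 - ‖Z‖ ^ 2) := by
          rw [hRZ]; field_simp
        nlinarith
      have hmem := hJ (RZ + ε) (by linarith) ⟨Z, hmemZ, rfl⟩
      obtain ⟨-, h2⟩ := hmem
      rw [div_le_iff₀ hsf]
      nlinarith
    by_contra hcon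
    push_neg at hcon
    set L := ‖(1 : ℂ) - hip (f Z) X‖ ^ 2 / (1 - ‖f Z‖ ^ 2) with hL
    have hLK : 0 < L - γ * RZ := by nlinarith
    have hεpos : 0 < (L - γ * RZ) / (2 * γ) := div_pos hLK (by linarith)
    have hthis := hεstep ((L - γ * RZ) / (2 * γ)) hεpos
    have heq : γ * ((L - γ * RZ) / (2 * γ)) = (L - γ * RZ) / 2 := by
      field_simp
    rw [mul_add, heq] at hthis
    linarith
  -- the function g and its lower bound
  set g : EuclideanSpace ℂ (Fin N) → ℝ := fun Z =>
    (‖(1 : ℂ) - hip Z p‖ ^ 2 / (1 - ‖Z‖ ^ 2)) * (‖(1 : ℂ) - hip Z q‖ ^ 2 / (1 - ‖Z‖ ^ 2))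
    with hg
  have hd : 0 < ‖p - q‖ := norm_pos_iff.mpr (sub_ne_zero_of_ne hpq)
  set m0 : ℝ := (‖p - q‖ ^ 2 / 8) ^ 2 with hm0
  have hm0pos : 0 < m0 := by positivity
  have lower : ∀ Z : EuclideanSpace ℂ (Fin N), ‖Z‖ < 1 → m0 ≤ g Z := by
    intro Z hZ
    have hsZ := hs Z hZ
    set A := ‖(1 : ℂ) - (inner ℂ p Z : ℂ)‖ with hA
    set B := ‖(1 : ℂ) - (inner ℂ q Z : ℂ)‖ with hB
    have hA0 : 0 ≤ A := norm_nonneg _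
    have hB0 : 0 ≤ B := norm_nonneg _
    have hgZ : g Z = A ^ 2 / (1 - ‖Z‖ ^ 2) * (B ^ 2 / (1 - ‖Z‖ ^ 2)) := rfl
    -- A, B ≥ 1 - ‖Z‖
    have hAlow : 1 - ‖Z‖ ≤ A := by
      have h1 : ‖(inner ℂ p Z : ℂ)‖ ≤ ‖Z‖ := by
        have := norm_inner_le_norm (𝕜 := ℂ) p Z; rw [hp, one_mul] at this; exact this
      have h2 : ‖(1 : ℂ)‖ - ‖(inner ℂ p Z : ℂ)‖ ≤ A := norm_sub_norm_le _ _
      rw [norm_one] at h2; linarith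
    have hBlow : 1 - ‖Z‖ ≤ B := by
      have h1 : ‖(inner ℂ q Z : ℂ)‖ ≤ ‖Z‖ := by
        have := norm_inner_le_norm (𝕜 := ℂ) q Z; rw [hq, one_mul] at this; exact this
      have h2 : ‖(1 : ℂ)‖ - ‖(inner ℂ q Z : ℂ)‖ ≤ B := norm_sub_norm_le _ _
      rw [norm_one] at h2; linarith
    -- A + B ≥ ‖p-q‖²/4 + (1 - ‖Z‖²)
    have hrep : 1 - RCLike.re (inner ℂ p Z : ℂ) ≤ A := by
      have h1 : RCLike.re ((1 : ℂ) - inner ℂ p Z) ≤ A := RCLike.re_le_norm _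
      have h2 : RCLike.re ((1 : ℂ) - (inner ℂ p Z : ℂ)) = 1 - RCLike.re (inner ℂ p Z : ℂ) := by
        simp
      linarith [h2 ▸ h1]
    have hreq : 1 - RCLike.re (inner ℂ q Z : ℂ) ≤ B := by
      have h1 : RCLike.re ((1 : ℂ) - inner ℂ q Z) ≤ B := RCLike.re_le_norm _
      have h2 : RCLike.re ((1 : ℂ) - (inner ℂ q Z : ℂ)) = 1 - RCLike.re (inner ℂ q Z : ℂ) := by
        simp
      linarith [h2 ▸ h1]
    have hZp : ‖Z - p‖ ^ 2 = ‖Z‖ ^ 2 - 2 * RCLike.re (inner ℂ Z p : ℂ) + ‖p‖ ^ 2 :=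
      norm_sub_sq Z p
    have hZq : ‖Z - q‖ ^ 2 = ‖Z‖ ^ 2 - 2 * RCLike.re (inner ℂ Z q : ℂ) + ‖q‖ ^ 2 :=
      norm_sub_sq Z q
    have hsymp : RCLike.re (inner ℂ Z p : ℂ) = RCLike.re (inner ℂ p Z : ℂ) :=
      inner_re_symm (𝕜 := ℂ) Z p
    have hsymq : RCLike.re (inner ℂ Z q : ℂ) = RCLike.re (inner ℂ q Z : ℂ) :=
      inner_re_symm (𝕜 := ℂ) Z q
    have htri : ‖p - q‖ ≤ ‖p - Z‖ + ‖Z - q‖ := norm_sub_le_norm_sub_add_norm_sub p Z q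
    have hpz : ‖p - Z‖ = ‖Z - p‖ := norm_sub_rev p Z
    have hsum : ‖p - q‖ ^ 2 / 4 + (1 - ‖Z‖ ^ 2) ≤ A + B := by
      have htri' : ‖p - q‖ ≤ ‖Z - p‖ + ‖Z - q‖ := by rw [← hpz]; exact htri
      have h2 : ‖p - q‖ ^ 2 ≤ 2 * ‖Z - p‖ ^ 2 + 2 * ‖Z - q‖ ^ 2 := by
        nlinarith [norm_nonneg (Z - p), norm_nonneg (Z - q), norm_nonneg (p - q), htri',
          sq_nonneg (‖Z - p‖ - ‖Z - q‖)]
      have hZp2 : ‖Z - p‖ ^ 2 ≤ 2 * A - (1 - ‖Z‖ ^ 2) := by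
        rw [hZp, hp, hsymp]; nlinarith
      have hZq2 : ‖Z - q‖ ^ 2 ≤ 2 * B - (1 - ‖Z‖ ^ 2) := by
        rw [hZq, hq, hsymq]; nlinarith
      nlinarith
    -- product bound
    have hAB : (1 - ‖Z‖ ^ 2) * (‖p - q‖ ^ 2 / 4) / 2 ≤ A * B := by
      have hA2 : (1 - ‖Z‖ ^ 2) / 2 ≤ A := by nlinarith [norm_nonneg Z]
      have hB2 : (1 - ‖Z‖ ^ 2) / 2 ≤ B := by nlinarith [norm_nonneg Z]
      nlinarith [mul_nonneg (sub_nonneg.mpr hA2) (sub_nonneg.mpr hB2), sq_nonneg ‖p - q‖]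
    have hgZ2 : g Z = (A * B) ^ 2 / (1 - ‖Z‖ ^ 2) ^ 2 := by
      rw [hgZ]; rw [div_mul_div_comm, ← mul_pow, ← sq]
    rw [hgZ2, hm0, le_div_iff₀ (by positivity)]
    nlinarith [hAB, mul_nonneg hA0 hB0,
      mul_pos hsZ (by positivity : (0:ℝ) < ‖p - q‖ ^ 2 / 4)]
  -- infimum argument
  set T : Set ℝ := g '' unitBall N with hT
  have hTne : T.Nonempty := ⟨g 0, ⟨0, by simp [unitBall], rfl⟩⟩
  have hTbdd : BddBelow T := ⟨m0, by rintro y ⟨Z, hZ, rfl⟩; exact lower Z hZ⟩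
  set m : ℝ := sInf T with hm
  have hmlow : m0 ≤ m := le_csInf hTne (by rintro y ⟨Z, hZ, rfl⟩; exact lower Z hZ)
  have hmpos : 0 < m := lt_of_lt_of_le hm0pos hmlow
  have hcα0 : 0 < c * α := mul_pos hc hα
  have hstep : ∀ Z : EuclideanSpace ℂ (Fin N), ‖Z‖ < 1 → m ≤ (c * α) * g Z := by
    intro Z hZ
    have hfZ : ‖f Z‖ < 1 := hmaps hZ
    have h1 := key p c hc hJp Z hZ
    have h2 := key q α hα hJq Z hZ
    have hgle : g (f Z) ≤ (c * α) * g Z := by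
      have hn2 : 0 ≤ ‖(1 : ℂ) - hip (f Z) q‖ ^ 2 / (1 - ‖f Z‖ ^ 2) :=
        div_nonneg (by positivity) (hs _ hfZ).le
      have hn4 : 0 ≤ c * (‖(1 : ℂ) - hip Z p‖ ^ 2 / (1 - ‖Z‖ ^ 2)) :=
        mul_nonneg hc.le (div_nonneg (by positivity) (hs _ hZ).le)
      calc g (f Z) ≤ (c * (‖(1 : ℂ) - hip Z p‖ ^ 2 / (1 - ‖Z‖ ^ 2))) *
            (α * (‖(1 : ℂ) - hip Z q‖ ^ 2 / (1 - ‖Z‖ ^ 2))) :=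
          mul_le_mul h1 h2 hn2 hn4
        _ = (c * α) * g Z := by rw [hg]; ring
    have hmem : g (f Z) ∈ T := ⟨f Z, hfZ, rfl⟩
    exact (csInf_le hTbdd hmem).trans hgle
  have hfin : m / (c * α) ≤ m := by
    refine le_csInf hTne ?_
    rintro y ⟨Z, hZ, rfl⟩
    rw [div_le_iff₀ hcα0]
    have := hstep Z hZ
    linarith [this, (mul_comm (g Z) (c * α)) ▸ this]
  have hcα : 1 ≤ c * α := by
    rw [div_le_iff₀ hcα0] at hfin
    nlinarith
  exact ⟨hcα, fun hc1 => by nlinarith⟩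


/-- if a holomorphic `f : B^N → B^N` satisfies Julia's lemma at two distinct
boundary points `p ≠ q` with constants `c > 0` and `α > 0` respectively, then `cα ≥ 1`;
in particular, if `c < 1` then `α > 1`. -/
theorem stmt3 {N : ℕ} (hN : 1 ≤ N)
    (f : EuclideanSpace ℂ (Fin N) → EuclideanSpace ℂ (Fin N))
    (hmaps : Set.MapsTo f (unitBall N) (unitBall N))
    (hhol : DifferentiableOn ℂ f (unitBall N))
    (p q : EuclideanSpace ℂ (Fin N)) (hp : ‖p‖ = 1) (hq : ‖q‖ = 1) (hpq : p ≠ q)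
    (c α : ℝ) (hc : 0 < c) (hα : 0 < α)
    (hJp : ∀ R : ℝ, 0 < R → f '' horo p R ⊆ horo p (c * R))
    (hJq : ∀ R : ℝ, 0 < R → f '' horo q R ⊆ horo q (α * R)) :
    1 ≤ c * α ∧ (c < 1 → 1 < α) := by
  exact stmt3_aux hN f hmaps hhol p q hp hq hpq c α hc hα hJp hJq
end
end

section
/- Let N ≥ 1 and let f : B^N → B^N be holomorphic with f(0) = 0, and assume f is not unitary on any slice: there do not exist ζ, η ∈ ∂B^N such that f(λζ) = λη for all λ in the unit disk 𝔻 ⊂ ℂ. For r ∈ (0,1) set M(r) = sup{‖f(Z)‖ : Z ∈ ℂ^N, ‖Z‖ < r}. Then for every r₀ ∈ (0,1) there exists c = c(r₀) < 1 such that 1 − r ≤ c·(1 − M(r)) for all r ∈ [r₀, 1). -/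
noncomputable section

open Filter Topology

set_option maxHeartbeats 1000000

open Metric Complex

private lemma quadstep5 {a t x : ℝ} (ha : 0 ≤ a) (ha1 : a < 1) (ht : 0 ≤ t) (ht1 : t < 1)
    (hx : 0 ≤ x)
    (h : (1 - a^2*t^2)*x^2 - 2*a*(1-t^2)*x + (a^2 - t^2) ≤ 0) :
    x*(1+a*t) ≤ a + t := by
  have hfac : ((1+a*t)*x - (a+t)) * ((1-a*t)*x - (a-t)) ≤ 0 := by nlinarith [h]
  by_contra hc
  push_neg at hc
  have h1 : 0 < (1+a*t)*x - (a+t) := by nlinarith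
  have h2 : (1-a*t)*x - (a-t) ≤ 0 := by nlinarith
  have h3 : 0 < 1 - a*t := by nlinarith
  nlinarith [mul_pos h3 h1, mul_nonneg (by nlinarith : (0:ℝ) ≤ 1 + a*t) (neg_nonneg.mpr h2),
    mul_nonneg ht (by nlinarith : (0:ℝ) ≤ 1 - a^2)]

private lemma monostep5 {x a b t s : ℝ} (hx : 0 ≤ x) (ha : 0 ≤ a) (hab : a ≤ b) (hb : b ≤ 1)
    (ht : 0 ≤ t) (hts : t ≤ s) (hs : s ≤ 1)
    (h : x*(1+a*t) ≤ t*(a+t)) : x*(1+b*s) ≤ s*(b+s) := by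
  have hs0 : 0 ≤ s := le_trans ht hts
  have hpt : (0:ℝ) < 1 + a*t := by nlinarith
  have hps : (0:ℝ) < 1 + a*s := by nlinarith
  have key : t*(a+t)*(1+a*s) ≤ s*(a+s)*(1+a*t) := by
    nlinarith [mul_nonneg (sub_nonneg.2 hts) (show (0:ℝ) ≤ a+s+t+a*s*t by positivity)]
  have h1 : x*(1+a*s) ≤ s*(a+s) := by
    by_contra hc
    push_neg at hc
    nlinarith [mul_le_mul_of_nonneg_right h hps.le, mul_lt_mul_of_pos_right hc hpt]
  have key2 : s*(a+s)*(1+b*s) ≤ s*(b+s)*(1+a*s) := by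
    nlinarith [mul_nonneg (mul_nonneg hs0 (sub_nonneg.2 hab)) (show (0:ℝ) ≤ 1 - s^2 by nlinarith)]
  by_contra hc
  push_neg at hc
  have hpb : (0:ℝ) < 1 + b*s := by nlinarith
  nlinarith [mul_le_mul_of_nonneg_right h1 hpb.le, mul_lt_mul_of_pos_right hc hps]

private lemma pick5 {w : ℂ → ℂ} (hd : DifferentiableOn ℂ w (ball 0 1))
    (hb : ∀ ζ ∈ ball (0:ℂ) 1, ‖w ζ‖ ≤ 1) {z : ℂ} (hz : z ∈ ball (0:ℂ) 1) :
    ‖w z‖ * (1 + ‖w 0‖ * ‖z‖) ≤ ‖w 0‖ + ‖z‖ := by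
  have h0ball : (0:ℂ) ∈ ball (0:ℂ) 1 := mem_ball_self one_pos
  have htz : ‖z‖ < 1 := mem_ball_zero_iff.mp hz
  by_cases hmax : ∃ z₀ ∈ ball (0:ℂ) 1, ‖w z₀‖ = 1
  · obtain ⟨z₀, hz₀, h1⟩ := hmax
    have maxon : IsMaxOn (norm ∘ w) (ball (0:ℂ) 1) z₀ := fun ζ hζ => by
      simp only [Function.comp_apply, Set.mem_setOf_eq, h1]; exact hb ζ hζ
    have heq := Complex.eqOn_of_isPreconnected_of_isMaxOn_norm
      (convex_ball (0:ℂ) 1).isPreconnected isOpen_ball hd hz₀ maxon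
    have e0 : w 0 = w z₀ := heq h0ball
    have ez : w z = w z₀ := heq hz
    rw [e0, ez, h1]
    have : (0:ℝ) ≤ ‖z‖ := norm_nonneg z
    nlinarith
  · push_neg at hmax
    set a := w 0 with ha_def
    have ha1 : ‖a‖ < 1 := lt_of_le_of_ne (hb 0 h0ball) (hmax 0 h0ball)
    have hwlt : ∀ ζ ∈ ball (0:ℂ) 1, ‖w ζ‖ < 1 := fun ζ hζ =>
      lt_of_le_of_ne (hb ζ hζ) (hmax ζ hζ)
    set h : ℂ → ℂ := fun ζ => (w ζ - a) / (1 - (starRingEnd ℂ) a * w ζ) with hh_def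
    have hden : ∀ ζ ∈ ball (0:ℂ) 1, (1:ℂ) - (starRingEnd ℂ) a * w ζ ≠ 0 := by
      intro ζ hζ
      have h2 : ‖(starRingEnd ℂ) a * w ζ‖ < 1 := by
        rw [norm_mul, RCLike.norm_conj]
        calc ‖a‖ * ‖w ζ‖ ≤ 1 * ‖w ζ‖ :=
              mul_le_mul_of_nonneg_right ha1.le (norm_nonneg _)
          _ = ‖w ζ‖ := one_mul _
          _ < 1 := hwlt ζ hζ
      intro hc
      rw [sub_eq_zero] at hc
      rw [← hc] at h2
      simp at h2
    have hd' : DifferentiableOn ℂ h (ball 0 1) :=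
      DifferentiableOn.div (hd.sub (differentiableOn_const a))
        ((differentiableOn_const 1).sub ((differentiableOn_const _).mul hd)) hden
    have hkey : ∀ v : ℂ, normSq (1 - (starRingEnd ℂ) a * v) - normSq (v - a)
        = (1 - normSq a) * (1 - normSq v) := by
      intro v
      simp only [normSq_sub, normSq_mul, normSq_conj, normSq_one, normSq_apply, Complex.mul_re,
        Complex.mul_im, Complex.one_re, Complex.one_im, Complex.conj_re, Complex.conj_im,
        Complex.sub_re, Complex.sub_im]
      ring
    have hmaps : Set.MapsTo h (ball (0:ℂ) 1) (ball (0:ℂ) 1) := by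
      intro ζ hζ
      have hDpos : (0:ℝ) < ‖(1:ℂ) - (starRingEnd ℂ) a * w ζ‖ :=
        norm_pos_iff.mpr (hden ζ hζ)
      rw [mem_ball_zero_iff, hh_def]
      simp only
      rw [norm_div, div_lt_one hDpos]
      have hlt : normSq (w ζ - a) < normSq (1 - (starRingEnd ℂ) a * w ζ) := by
        have e := hkey (w ζ)
        have p1 : normSq a < 1 := by
          rw [← Complex.sq_norm]
          nlinarith [ha1, norm_nonneg a]
        have p2 : normSq (w ζ) < 1 := by
          have := hwlt ζ hζ
          rw [← Complex.sq_norm]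
          nlinarith [this, norm_nonneg (w ζ)]
        nlinarith [e]
      have := Real.sqrt_lt_sqrt (normSq_nonneg _) hlt
      rwa [Complex.norm_def, Complex.norm_def]
    have h00 : h 0 = 0 := by
      simp [hh_def, ← ha_def]
    have habs := Complex.norm_le_norm_of_mapsTo_ball hd' (hmaps.mono_right ball_subset_closedBall) h00 (by
      exact htz)
    -- unpack
    have hDpos : (0:ℝ) < ‖(1:ℂ) - (starRingEnd ℂ) a * w z‖ := norm_pos_iff.mpr (hden z hz)
    have hineq : ‖w z - a‖ ≤ ‖z‖ * ‖(1:ℂ) - (starRingEnd ℂ) a * w z‖ := by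
      rw [hh_def] at habs
      simp only at habs
      rw [norm_div, div_le_iff₀ hDpos] at habs
      linarith [habs]
    -- move to normSq
    have hsq : normSq (w z - a) ≤ ‖z‖^2 * normSq (1 - (starRingEnd ℂ) a * w z) := by
      have h2 := mul_le_mul hineq hineq (norm_nonneg _) (by positivity)
      rw [← Complex.sq_norm, ← Complex.sq_norm]
      nlinarith [h2]
    set x := ‖w z‖ with hx_def
    set α := ‖a‖ with hα_def
    set t := ‖z‖ with ht_def
    set s := (w z * (starRingEnd ℂ) a).re with hs_def
    have e1 : normSq (w z - a) = x^2 - 2*s + α^2 := by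
      rw [normSq_sub, ← Complex.sq_norm, ← Complex.sq_norm, ← hx_def, ← hα_def]
      ring
    have hα2 : normSq a = α^2 := by rw [← Complex.sq_norm]
    have hx2 : normSq (w z) = x^2 := by rw [← Complex.sq_norm]
    have e2 : normSq (1 - (starRingEnd ℂ) a * w z) = 1 - 2*s + α^2 * x^2 := by
      rw [normSq_sub, normSq_mul, normSq_conj, normSq_one, hα2, hx2, hs_def]
      simp only [one_mul, map_mul, Complex.conj_conj, Complex.mul_re, Complex.conj_re,
        Complex.conj_im]
      ring
    have hsle : s ≤ x * α := by
      calc s ≤ ‖w z * (starRingEnd ℂ) a‖ := Complex.re_le_norm _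
        _ = x * α := by
          rw [norm_mul, Complex.norm_conj]
    have ht1 : t < 1 := htz
    have hα1 : α < 1 := ha1
    have hquad : (1 - α^2*t^2)*x^2 - 2*α*(1-t^2)*x + (α^2 - t^2) ≤ 0 := by
      rw [e1, e2] at hsq
      nlinarith [hsq, mul_le_mul_of_nonneg_left hsle (show (0:ℝ) ≤ 2*(1-t^2) by nlinarith [norm_nonneg z, htz])]
    exact quadstep5 (norm_nonneg a) hα1 (norm_nonneg z) ht1 (norm_nonneg (w z)) hquad

private lemma unitBall_eq5 (N : ℕ) : unitBall N = Metric.ball 0 1 := by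
  ext Z; simp [unitBall, Metric.mem_ball, dist_zero_right]

private lemma slice_facts5 {N : ℕ} (f : EuclideanSpace ℂ (Fin N) → EuclideanSpace ℂ (Fin N))
    (hmaps : Set.MapsTo f (unitBall N) (unitBall N))
    (hhol : DifferentiableOn ℂ f (unitBall N)) (hf0 : f 0 = 0)
    {ζ : EuclideanSpace ℂ (Fin N)} (hζ : ‖ζ‖ = 1) :
    DifferentiableOn ℂ (fun lam : ℂ => f (lam • ζ)) (Metric.ball 0 1) ∧
    Set.MapsTo (fun lam : ℂ => f (lam • ζ)) (Metric.ball 0 1) (Metric.ball 0 1) ∧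
    HasDerivAt (fun lam : ℂ => f (lam • ζ)) (fderiv ℂ f 0 ζ) 0 := by
  have hmem : ∀ lam : ℂ, lam ∈ Metric.ball (0:ℂ) 1 → lam • ζ ∈ unitBall N := by
    intro lam hlam
    have h1 : ‖lam • ζ‖ = ‖lam‖ := by rw [norm_smul, hζ, mul_one]
    simpa [unitBall, h1] using mem_ball_zero_iff.mp hlam
  have hdiff : DifferentiableOn ℂ (fun lam : ℂ => f (lam • ζ)) (Metric.ball 0 1) :=
    DifferentiableOn.comp hhol ((differentiable_id.smul_const ζ).differentiableOn) hmem
  refine ⟨hdiff, ?_, ?_⟩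
  · intro lam hlam
    have := hmaps (hmem lam hlam)
    rw [unitBall_eq5] at this
    exact this
  · have h0mem : (0 : EuclideanSpace ℂ (Fin N)) ∈ unitBall N := by
      simp [unitBall]
    have hopen : IsOpen (unitBall N) := by rw [unitBall_eq5]; exact isOpen_ball
    have hfd : HasFDerivAt f (fderiv ℂ f 0) 0 :=
      (hhol.differentiableAt (hopen.mem_nhds h0mem)).hasFDerivAt
    have hsm : HasDerivAt (fun lam : ℂ => lam • ζ) ((1:ℂ) • ζ) 0 :=
      (hasDerivAt_id 0).smul_const ζ
    have hfd2 : HasFDerivAt f (fderiv ℂ f 0) ((fun lam : ℂ => lam • ζ) 0) := by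
      simpa using hfd
    have := hfd2.comp_hasDerivAt 0 hsm
    rw [one_smul] at this; exact this

private lemma slice_g5 {N : ℕ} (f : EuclideanSpace ℂ (Fin N) → EuclideanSpace ℂ (Fin N))
    (hmaps : Set.MapsTo f (unitBall N) (unitBall N))
    (hhol : DifferentiableOn ℂ f (unitBall N)) (hf0 : f 0 = 0)
    {ζ η : EuclideanSpace ℂ (Fin N)} (hζ : ‖ζ‖ = 1) (hη : ‖η‖ = 1) :
    DifferentiableOn ℂ (fun lam : ℂ => (inner ℂ η (f (lam • ζ)) : ℂ)) (Metric.ball 0 1) ∧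
    Set.MapsTo (fun lam : ℂ => (inner ℂ η (f (lam • ζ)) : ℂ)) (Metric.ball 0 1) (Metric.ball 0 1) ∧
    (inner ℂ η (f ((0:ℂ) • ζ)) : ℂ) = 0 ∧
    HasDerivAt (fun lam : ℂ => (inner ℂ η (f (lam • ζ)) : ℂ))
      (inner ℂ η (fderiv ℂ f 0 ζ) : ℂ) 0 := by
  obtain ⟨hdF, hmF, hdF0⟩ := slice_facts5 f hmaps hhol hf0 hζ
  have hL : Differentiable ℂ (innerSL ℂ η) := (innerSL ℂ η).differentiable
  refine ⟨hL.comp_differentiableOn hdF, ?_, by simp [hf0], ?_⟩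
  · intro lam hlam
    rw [mem_ball_zero_iff]
    calc ‖(inner ℂ η (f (lam • ζ)) : ℂ)‖ ≤ ‖η‖ * ‖f (lam • ζ)‖ := norm_inner_le_norm η _
      _ = ‖f (lam • ζ)‖ := by rw [hη, one_mul]
      _ < 1 := mem_ball_zero_iff.mp (hmF hlam)
  · have := ((innerSL ℂ η).hasFDerivAt (x := f ((0:ℂ) • ζ))).comp_hasDerivAt 0 hdF0
    simp at this; exact this

/-- growth lemma for elliptic maps. If `f : B^N → B^N` is holomorphic with
`f(0)=0` and not unitary on any slice, and `M(r) = sup{‖f(Z)‖ : ‖Z‖ < r}`, then for every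
`r₀ ∈ (0,1)` there is a `c = c(r₀) < 1` with `1 − r ≤ c·(1 − M(r))` for all `r ∈ [r₀,1)`. -/
theorem stmt5 {N : ℕ} (hN : 1 ≤ N)
    (f : EuclideanSpace ℂ (Fin N) → EuclideanSpace ℂ (Fin N))
    (hmaps : Set.MapsTo f (unitBall N) (unitBall N))
    (hhol : DifferentiableOn ℂ f (unitBall N))
    (hf0 : f 0 = 0)
    (hslice : ¬ ∃ (ζ η : EuclideanSpace ℂ (Fin N)), ‖ζ‖ = 1 ∧ ‖η‖ = 1 ∧
      ∀ lam : ℂ, ‖lam‖ < 1 → f (lam • ζ) = lam • η)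
    (M : ℝ → ℝ)
    (hM : ∀ r : ℝ, M r = sSup ((fun Z => ‖f Z‖) '' {Z : EuclideanSpace ℂ (Fin N) | ‖Z‖ < r})) :
    ∀ r₀ : ℝ, 0 < r₀ → r₀ < 1 →
      ∃ c : ℝ, c < 1 ∧ ∀ r : ℝ, r₀ ≤ r → r < 1 → 1 - r ≤ c * (1 - M r) := by
  intro r₀ hr₀0 hr₀1
  classical
  have hopen : IsOpen (unitBall N) := by rw [unitBall_eq5]; exact isOpen_ball
  have h0mem : (0 : EuclideanSpace ℂ (Fin N)) ∈ unitBall N := by simp [unitBall]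
  set T := fderiv ℂ f 0 with hT_def
  haveI : Nontrivial (EuclideanSpace ℂ (Fin N)) := by
    refine ⟨EuclideanSpace.single (⟨0, hN⟩ : Fin N) (1:ℂ), 0, fun h => ?_⟩
    have := congrArg norm h
    rw [EuclideanSpace.norm_single] at this
    simp at this
  obtain ⟨ζ₀, hζ₀mem, hmax⟩ := (isCompact_sphere (0 : EuclideanSpace ℂ (Fin N)) 1).exists_isMaxOn
    (NormedSpace.sphere_nonempty.mpr zero_le_one) (T.continuous.norm.continuousOn)
  set m := ‖T ζ₀‖ with hm_def
  have hζ₀ : ‖ζ₀‖ = 1 := by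
    simpa using mem_sphere_zero_iff_norm.mp hζ₀mem
  have hm0 : 0 ≤ m := norm_nonneg _
  have hFnorm : ∀ ζ : EuclideanSpace ℂ (Fin N), ‖ζ‖ = 1 →
      ∀ lam : ℂ, ‖lam‖ < 1 → ‖f (lam • ζ)‖ ≤ ‖lam‖ := by
    intro ζ hζ lam hlam
    obtain ⟨hdF, hmF, _⟩ := slice_facts5 f hmaps hhol hf0 hζ
    have hF0 : (fun lam : ℂ => f (lam • ζ)) 0 = 0 := by simp [hf0]
    have hmF2 : Set.MapsTo (fun lam : ℂ => f (lam • ζ)) (Metric.ball 0 1)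
        (Metric.ball ((fun lam : ℂ => f (lam • ζ)) 0) 1) := by
      rw [hF0]; exact hmF
    have := Complex.dist_le_div_mul_dist_of_mapsTo_ball hdF (hmF2.mono_right ball_subset_closedBall)
      (mem_ball_zero_iff.mpr hlam)
    simpa [hF0, hf0, dist_zero_right, dist_eq_norm] using this
  have hTle : ∀ ζ : EuclideanSpace ℂ (Fin N), ‖ζ‖ = 1 → ‖T ζ‖ ≤ 1 := by
    intro ζ hζ
    obtain ⟨hdF, hmF, hder⟩ := slice_facts5 f hmaps hhol hf0 hζ
    have hF0 : (fun lam : ℂ => f (lam • ζ)) 0 = 0 := by simp [hf0]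
    have hmF2 : Set.MapsTo (fun lam : ℂ => f (lam • ζ)) (Metric.ball 0 1)
        (Metric.ball ((fun lam : ℂ => f (lam • ζ)) 0) 1) := by
      rw [hF0]; exact hmF
    have h1 := Complex.norm_deriv_le_div_of_mapsTo_ball hdF (hmF2.mono_right ball_subset_closedBall) one_pos
    rw [hder.deriv] at h1
    simpa using h1
  have hm1 : m ≤ 1 := hTle ζ₀ hζ₀
  have hmlt : m < 1 := by
    rcases lt_or_eq_of_le hm1 with h | h
    · exact h
    exfalso
    set η := T ζ₀ with hη_def
    have hη : ‖η‖ = 1 := h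
    obtain ⟨hgd, hgm, hg0, hgder⟩ := slice_g5 f hmaps hhol hf0 hζ₀ hη
    set g := fun lam : ℂ => (inner ℂ η (f (lam • ζ₀)) : ℂ) with hg_def
    set w := dslope g 0 with hw_def
    have hwd : DifferentiableOn ℂ w (Metric.ball 0 1) :=
      (differentiableOn_dslope (isOpen_ball.mem_nhds (mem_ball_self one_pos))).mpr hgd
    have hg00 : g 0 = 0 := hg0
    have hwb : ∀ z ∈ Metric.ball (0:ℂ) 1, ‖w z‖ ≤ 1 := by
      intro z hz
      have hgm2 : Set.MapsTo g (Metric.ball 0 1) (Metric.ball (g 0) 1) := by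
        rw [hg00]; exact hgm
      simpa using Complex.norm_dslope_le_div_of_mapsTo_ball hgd (hgm2.mono_right ball_subset_closedBall) hz
    have hw0 : w 0 = 1 := by
      rw [hw_def, dslope_same, hgder.deriv, ← hη_def, inner_self_eq_norm_sq_to_K, hη]
      norm_num
    have hmaxw : IsMaxOn (norm ∘ w) (Metric.ball (0:ℂ) 1) 0 := fun z hz => by
      simp only [Function.comp_apply, Set.mem_setOf_eq, hw0, norm_one]
      exact hwb z hz
    have heqw := Complex.eqOn_of_isPreconnected_of_isMaxOn_norm
      (convex_ball (0:ℂ) 1).isPreconnected isOpen_ball hwd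
      (mem_ball_self one_pos) hmaxw
    apply hslice
    refine ⟨ζ₀, η, hζ₀, hη, fun lam hlam => ?_⟩
    have hwlam : w lam = 1 := by
      have h6 := heqw (mem_ball_zero_iff.mpr hlam)
      rwa [Function.const_apply, hw0] at h6
    have hglam : g lam = lam := by
      have h2 := sub_smul_dslope g 0 lam
      rw [sub_zero, hg00, sub_zero, ← hw_def, hwlam, smul_eq_mul, mul_one] at h2
      exact h2.symm
    set X := f (lam • ζ₀) with hX_def
    have hXnorm : ‖X‖ ≤ ‖lam‖ := hFnorm ζ₀ hζ₀ lam hlam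
    have hinner : (inner ℂ η X : ℂ) = lam := hglam
    have hsub : ‖X - lam • η‖ ^ 2 ≤ 0 := by
      have hns := norm_sub_sq (𝕜 := ℂ) X (lam • η)
      have h3 : (inner ℂ X (lam • η) : ℂ) = lam * (starRingEnd ℂ) lam := by
        rw [inner_smul_right, ← inner_conj_symm, hinner]
      have h4 : RCLike.re (inner ℂ X (lam • η) : ℂ) = ‖lam‖^2 := by
        rw [h3, Complex.mul_conj]
        simp [Complex.normSq_eq_norm_sq, sq]
      rw [hns, h4, norm_smul, hη, mul_one]
      nlinarith [hXnorm, norm_nonneg lam, norm_nonneg X]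
    have : X = lam • η := by
      have h5 : ‖X - lam • η‖ = 0 := by
        nlinarith [norm_nonneg (X - lam • η), sq_nonneg ‖X - lam • η‖]
      rw [← sub_eq_zero]
      exact norm_eq_zero.mp h5
    exact this
  -- quantitative part
  have hTm : ∀ ζ : EuclideanSpace ℂ (Fin N), ‖ζ‖ = 1 → ‖T ζ‖ ≤ m := fun ζ hζ =>
    hmax (mem_sphere_zero_iff_norm.mpr hζ)
  refine ⟨(1 + m*r₀)/(1+r₀), ?_, ?_⟩
  · rw [div_lt_one (by linarith)]
    nlinarith
  · intro r hrr₀ hr1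
    have hr0 : 0 < r := lt_of_lt_of_le hr₀0 hrr₀
    have hmr : (0:ℝ) < 1 + m*r := by nlinarith
    -- pointwise bound
    have claim : ∀ Z : EuclideanSpace ℂ (Fin N), ‖Z‖ < r → ‖f Z‖ * (1 + m*r) ≤ r*(m+r) := by
      intro Z hZ
      by_cases hfZ : f Z = 0
      · rw [hfZ, norm_zero, zero_mul]; positivity
      by_cases hZ0 : Z = 0
      · exact absurd (hZ0 ▸ hf0) hfZ
      have ht0 : 0 < ‖Z‖ := norm_pos_iff.mpr hZ0
      have hx0 : 0 < ‖f Z‖ := norm_pos_iff.mpr hfZ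
      set ζ : EuclideanSpace ℂ (Fin N) := ((‖Z‖ : ℂ))⁻¹ • Z with hζ_def
      set η : EuclideanSpace ℂ (Fin N) := ((‖f Z‖ : ℂ))⁻¹ • f Z with hη_def
      have hζn : ‖ζ‖ = 1 := by
        rw [hζ_def, norm_smul, norm_inv, Complex.norm_real, Real.norm_eq_abs,
          abs_of_pos ht0, inv_mul_cancel₀ ht0.ne']
      have hηn : ‖η‖ = 1 := by
        rw [hη_def, norm_smul, norm_inv, Complex.norm_real, Real.norm_eq_abs,
          abs_of_pos hx0, inv_mul_cancel₀ hx0.ne']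
      obtain ⟨hgd, hgm, hg0, hgder⟩ := slice_g5 f hmaps hhol hf0 hζn hηn
      set g := fun lam : ℂ => (inner ℂ η (f (lam • ζ)) : ℂ) with hg_def
      set w := dslope g 0 with hw_def
      have hwd : DifferentiableOn ℂ w (Metric.ball 0 1) :=
        (differentiableOn_dslope (isOpen_ball.mem_nhds
          (mem_ball_self one_pos))).mpr hgd
      have hg00 : g 0 = 0 := hg0
      have hwb : ∀ z ∈ Metric.ball (0:ℂ) 1, ‖w z‖ ≤ 1 := by
        intro z hz
        have hgm2 : Set.MapsTo g (Metric.ball 0 1) (Metric.ball (g 0) 1) := by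
          rw [hg00]; exact hgm
        simpa using Complex.norm_dslope_le_div_of_mapsTo_ball hgd (hgm2.mono_right ball_subset_closedBall) hz
      have ha_le : ‖w 0‖ ≤ m := by
        rw [hw_def, dslope_same, hgder.deriv]
        calc ‖(inner ℂ η (T ζ) : ℂ)‖ ≤ ‖η‖ * ‖T ζ‖ := norm_inner_le_norm _ _
          _ = ‖T ζ‖ := by rw [hηn, one_mul]
          _ ≤ m := hTm ζ hζn
      -- evaluate at lam = ‖Z‖
      have htball : ((‖Z‖ : ℂ)) ∈ Metric.ball (0:ℂ) 1 := by
        rw [mem_ball_zero_iff, Complex.norm_real, Real.norm_eq_abs, abs_of_pos ht0]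
        linarith
      have hpick := pick5 hwd hwb htball
      have hsmul : ((‖Z‖ : ℂ)) • ζ = Z := by
        rw [hζ_def, smul_smul, mul_inv_cancel₀ (by
          simpa using ht0.ne' : ((‖Z‖ : ℂ)) ≠ 0), one_smul]
      have hgt : g ((‖Z‖ : ℂ)) = (‖f Z‖ : ℂ) := by
        rw [hg_def]
        simp only [hsmul]
        rw [hη_def, inner_smul_left, inner_self_eq_norm_sq_to_K]
        have hne : ((‖f Z‖ : ℂ)) ≠ 0 := by simpa using hx0.ne'
        rw [map_inv₀, Complex.conj_ofReal]
        field_simp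
        rfl
      have hgw : g ((‖Z‖ : ℂ)) = ((‖Z‖ : ℂ)) * w ((‖Z‖ : ℂ)) := by
        have h2 := sub_smul_dslope g 0 ((‖Z‖ : ℂ))
        rw [sub_zero, hg00, sub_zero, ← hw_def, smul_eq_mul] at h2
        exact h2.symm
      have hnormt : ‖((‖Z‖ : ℂ))‖ = ‖Z‖ := by
        rw [Complex.norm_real, Real.norm_eq_abs, abs_of_pos ht0]
      have hfZnorm : ‖f Z‖ = ‖Z‖ * ‖w ((‖Z‖ : ℂ))‖ := by
        have := congrArg norm (hgt.symm.trans hgw)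
        rw [norm_mul, hnormt, Complex.norm_real, Real.norm_eq_abs, abs_of_pos hx0] at this
        exact this
      rw [hnormt] at hpick
      -- ‖w t‖ * (1 + a*‖Z‖) ≤ a + ‖Z‖ with a = ‖w 0‖; multiply by ‖Z‖
      have hstep : ‖f Z‖ * (1 + ‖w 0‖ * ‖Z‖) ≤ ‖Z‖ * (‖w 0‖ + ‖Z‖) := by
        rw [hfZnorm]
        calc ‖Z‖ * ‖w ((‖Z‖:ℂ))‖ * (1 + ‖w 0‖ * ‖Z‖)
            = ‖Z‖ * (‖w ((‖Z‖:ℂ))‖ * (1 + ‖w 0‖ * ‖Z‖)) := by ring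
          _ ≤ ‖Z‖ * (‖w 0‖ + ‖Z‖) :=
            mul_le_mul_of_nonneg_left hpick (norm_nonneg Z)
      exact monostep5 (norm_nonneg _) (norm_nonneg _) ha_le hm1 (norm_nonneg Z) hZ.le hr1.le
        hstep
    have hMr : M r * (1 + m*r) ≤ r*(m+r) := by
      rw [hM r]
      have hb : sSup ((fun Z => ‖f Z‖) '' {Z : EuclideanSpace ℂ (Fin N) | ‖Z‖ < r})
          ≤ r*(m+r) / (1 + m*r) := by
        apply Real.sSup_le
        · rintro y ⟨Z, hZ, rfl⟩
          rw [le_div_iff₀ hmr]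
          exact claim Z hZ
        · positivity
      calc sSup _ * (1 + m*r) ≤ (r*(m+r) / (1 + m*r)) * (1 + m*r) :=
            mul_le_mul_of_nonneg_right hb hmr.le
        _ = r*(m+r) := div_mul_cancel₀ _ hmr.ne'
    -- final arithmetic
    rw [div_mul_eq_mul_div, le_div_iff₀ (by linarith : (0:ℝ) < 1 + r₀)]
    by_contra hc
    push_neg at hc
    have h7 := mul_lt_mul_of_pos_right hc hmr
    have h8 := mul_le_mul_of_nonneg_left hMr (by positivity : (0:ℝ) ≤ 1 + m*r₀)
    nlinarith [h7, h8, mul_nonneg (mul_nonneg (sub_nonneg.2 hrr₀) (sub_nonneg.2 hmlt.le))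
      (sub_nonneg.2 hr1.le), hr₀0, hr0, hm0]
end
end

section
/- Let N ≥ 1, a ∈ (0,1) and c ∈ (0,1). Let (z_n, w_n) ∈ H^N (n ≥ 0) be a sequence with heights t_n := Re z_n − ‖w_n‖², such that d((z_n,w_n),(z_{n+1},w_{n+1})) ≤ a for all n and t_{n+k} ≤ c^k · t_n for all n, k ≥ 0. Define the boundary projection pr(z,w) = (i·Im z + ‖w‖², w) ∈ ℂ × ℂ^{N−1}. Then there exists a constant C̃ > 0, independent of n, such that ‖pr(z_n,w_n) − pr(z_{n+1},w_{n+1})‖ ≤ C̃·√t_n for all n, where the norm is the Euclidean norm on ℂ × ℂ^{N−1}. -/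
noncomputable section

open Filter Topology

/-- The Siegel domain `H^N = {(z,w) ∈ ℂ × ℂ^{N−1} : Re z > ‖w‖²}` (here `n = N − 1`). -/
def siegel (n : ℕ) : Set (ℂ × EuclideanSpace ℂ (Fin n)) := {Z | ‖Z.2‖ ^ 2 < Z.1.re}

/-- The height `t(z,w) = Re z − ‖w‖²` of a point of the Siegel domain. -/
def ht {n : ℕ} (Z : ℂ × EuclideanSpace ℂ (Fin n)) : ℝ := Z.1.re - ‖Z.2‖ ^ 2

/-- The Hermitian inner product `⟨w,w̃⟩ = Σ_j w_j * conj (w̃_j)` of the paper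
(which is `inner w̃ w` in Mathlib's conjugate-linear-in-the-first-slot convention). -/
def hip' {n : ℕ} (w w' : EuclideanSpace ℂ (Fin n)) : ℂ := inner ℂ w' w

/-- The pseudo-hyperbolic distance on the Siegel domain: the number `d ∈ [0,1)` with
`d² = 1 − 4·t(z,w)·t(z̃,w̃)/|z + conj z̃ − 2⟨w,w̃⟩|²`. -/
def sphd {n : ℕ} (Z W : ℂ × EuclideanSpace ℂ (Fin n)) : ℝ :=
  Real.sqrt (1 - 4 * ht Z * ht W / ‖Z.1 + (starRingEnd ℂ) W.1 - 2 * hip' Z.2 W.2‖ ^ 2)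

/-- The Euclidean projection `pr(z,w) = (i·Im z + ‖w‖², w)` onto the boundary
of the Siegel domain. -/
def bpr {n : ℕ} (Z : ℂ × EuclideanSpace ℂ (Fin n)) : ℂ × EuclideanSpace ℂ (Fin n) :=
  ((Z.1.im : ℂ) * Complex.I + ((‖Z.2‖ ^ 2 : ℝ) : ℂ), Z.2)

/-- The Euclidean norm on `ℂ × ℂ^{N−1}`. -/
def enorm' {n : ℕ} (Z : ℂ × EuclideanSpace ℂ (Fin n)) : ℝ :=
  Real.sqrt (‖Z.1‖ ^ 2 + ‖Z.2‖ ^ 2)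

private lemma aux_sq (x y d M : ℝ) (h1 : |x - y| ≤ d) (h2 : x ≤ M) (h3 : y ≤ M)
    (h4 : 0 ≤ x) (h5 : 0 ≤ y) : |x ^ 2 - y ^ 2| ≤ 2 * M * d := by
  rw [abs_le] at h1 ⊢
  constructor <;> nlinarith

set_option maxHeartbeats 1000000 in
private theorem stmt6_aux {n : ℕ} (a c : ℝ) (ha0 : 0 < a) (ha1 : a < 1) (hc0 : 0 < c) (hc1 : c < 1)
    (Z : ℕ → ℂ × EuclideanSpace ℂ (Fin n)) (hZ : ∀ k, Z k ∈ siegel n)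
    (hstep : ∀ k, sphd (Z k) (Z (k + 1)) ≤ a)
    (hdecay : ∀ k m : ℕ, ht (Z (k + m)) ≤ c ^ m * ht (Z k)) :
    ∃ C : ℝ, 0 < C ∧ ∀ k,
      enorm' (bpr (Z k) - bpr (Z (k + 1))) ≤ C * Real.sqrt (ht (Z k)) := by
  have ht_pos : ∀ k, 0 < ht (Z k) := fun k => sub_pos.2 (hZ k)
  have ha2 : 0 < 1 - a ^ 2 := by nlinarith
  set B : ℝ := 2 / Real.sqrt (1 - a ^ 2) with hBdef
  have hBpos : 0 < B := div_pos two_pos (Real.sqrt_pos.2 ha2)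
  have hB2 : B ^ 2 = 4 / (1 - a ^ 2) := by
    rw [hBdef, div_pow, Real.sq_sqrt ha2.le]; norm_num
  -- the denominator
  set D : ℕ → ℂ := fun k => (Z k).1 + (starRingEnd ℂ) ((Z (k+1)).1) - 2 * hip' (Z k).2 (Z (k+1)).2 with hDdef
  -- step inequality squared
  have hDsq : ∀ k, (1 - a ^ 2) * ‖D k‖ ^ 2 ≤ 4 * ht (Z k) * ht (Z (k+1)) := by
    intro k
    have hs := hstep k
    rw [sphd] at hs
    have hD0 : ‖D k‖ ^ 2 ≠ 0 := by
      intro h0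
      rw [show (‖(Z k).1 + (starRingEnd ℂ) ((Z (k+1)).1) - 2 * hip' (Z k).2 (Z (k+1)).2‖ : ℝ) = ‖D k‖ from rfl, h0, div_zero, sub_zero, Real.sqrt_one] at hs
      linarith
    have hDpos : 0 < ‖D k‖ ^ 2 := lt_of_le_of_ne (sq_nonneg _) (Ne.symm hD0)
    have hx : 1 - 4 * ht (Z k) * ht (Z (k+1)) / ‖D k‖ ^ 2 ≤ a ^ 2 := by
      set x := 1 - 4 * ht (Z k) * ht (Z (k+1)) / ‖D k‖ ^ 2 with hxd
      by_cases hx0 : 0 ≤ x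
      · have := Real.sq_sqrt hx0
        nlinarith [Real.sqrt_nonneg x]
      · nlinarith
    have h1 : 1 - a ^ 2 ≤ 4 * ht (Z k) * ht (Z (k+1)) / ‖D k‖ ^ 2 := by linarith
    calc (1 - a ^ 2) * ‖D k‖ ^ 2
        ≤ (4 * ht (Z k) * ht (Z (k+1)) / ‖D k‖ ^ 2) * ‖D k‖ ^ 2 :=
          mul_le_mul_of_nonneg_right h1 hDpos.le
      _ = 4 * ht (Z k) * ht (Z (k+1)) := div_mul_cancel₀ _ hD0
  -- t_{k+1} ≤ c * t_k and t_k ≤ c^k t_0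
  have htc : ∀ k, ht (Z (k+1)) ≤ c * ht (Z k) := by
    intro k
    have := hdecay k 1
    simpa using this
  have ht0 : ∀ k, ht (Z k) ≤ c ^ k * ht (Z 0) := by
    intro k
    have := hdecay 0 k
    simpa using this
  have htle0 : ∀ k, ht (Z k) ≤ ht (Z 0) := by
    intro k
    have h1 := ht0 k
    have h2 : c ^ k ≤ 1 := pow_le_one₀ hc0.le hc1.le
    nlinarith [ht_pos 0]
  -- ‖D k‖ ≤ B * t k
  have hDle : ∀ k, ‖D k‖ ≤ B * ht (Z k) := by
    intro k
    have h1 := hDsq k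
    have h2 := htc k
    have h3 : (1 - a ^ 2) * ‖D k‖ ^ 2 ≤ 4 * ht (Z k) ^ 2 := by nlinarith [ht_pos k, ht_pos (k+1)]
    have h4 : ‖D k‖ ^ 2 ≤ (B * ht (Z k)) ^ 2 := by
      rw [mul_pow, hB2]
      rw [div_mul_eq_mul_div, le_div_iff₀ ha2]
      nlinarith
    nlinarith [norm_nonneg (D k), mul_pos hBpos (ht_pos k)]
  -- real part of D
  have hReD : ∀ k, (D k).re = ht (Z k) + ht (Z (k+1)) + ‖(Z k).2 - (Z (k+1)).2‖ ^ 2 := by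
    intro k
    have hn := norm_sub_sq (𝕜 := ℂ) ((Z k).2) ((Z (k+1)).2)
    have hsym := inner_re_symm (𝕜 := ℂ) ((Z k).2) ((Z (k+1)).2)
    simp only [RCLike.re_to_complex] at hn hsym
    have h2 : (D k).re = (Z k).1.re + (Z (k+1)).1.re - 2 * (inner ℂ ((Z (k+1)).2) ((Z k).2) : ℂ).re := by
      simp [hDdef, hip', Complex.add_re, Complex.sub_re, Complex.conj_re, Complex.mul_re,
        Complex.re_ofNat, Complex.im_ofNat]
    rw [h2, ht, ht]
    rw [hn, ← hsym]
    ring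
  -- step bound on w
  have hwsq : ∀ k, ‖(Z k).2 - (Z (k+1)).2‖ ^ 2 ≤ B * ht (Z k) := by
    intro k
    have h1 : (D k).re ≤ ‖D k‖ := by
      exact Complex.re_le_norm _
    have h2 := hDle k
    have h3 := hReD k
    nlinarith [ht_pos k, ht_pos (k+1)]
  have hw : ∀ k, ‖(Z k).2 - (Z (k+1)).2‖ ≤ Real.sqrt B * Real.sqrt (ht (Z k)) := by
    intro k
    rw [← Real.sqrt_mul hBpos.le]
    rw [← Real.sqrt_sq (norm_nonneg ((Z k).2 - (Z (k+1)).2))]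
    exact Real.sqrt_le_sqrt (hwsq k)
  -- geometric bound for steps
  set r : ℝ := Real.sqrt c with hrdef
  have hr0 : 0 ≤ r := Real.sqrt_nonneg c
  have hr1 : r < 1 := by
    nlinarith [Real.sq_sqrt hc0.le, Real.sqrt_nonneg c]
  set S : ℝ := Real.sqrt (B * ht (Z 0)) with hSdef
  have hS0 : 0 ≤ S := Real.sqrt_nonneg _
  have hgeom : ∀ k, ‖(Z k).2 - (Z (k+1)).2‖ ≤ S * r ^ k := by
    intro k
    have h1 : ‖(Z k).2 - (Z (k+1)).2‖ ^ 2 ≤ B * (c ^ k * ht (Z 0)) := by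
      have := hwsq k
      have h2 := ht0 k
      nlinarith
    have h3 : Real.sqrt (B * (c ^ k * ht (Z 0))) = S * r ^ k := by
      have hck : Real.sqrt (c ^ k) = r ^ k := by
        rw [hrdef, ← Real.sqrt_sq (pow_nonneg (Real.sqrt_nonneg c) k)]
        congr 1
        rw [← pow_mul, mul_comm, pow_mul, Real.sq_sqrt hc0.le]
      rw [show B * (c ^ k * ht (Z 0)) = (B * ht (Z 0)) * c ^ k by ring,
        Real.sqrt_mul (mul_nonneg hBpos.le (ht_pos 0).le), hck, hSdef]
    rw [← h3, ← Real.sqrt_sq (norm_nonneg ((Z k).2 - (Z (k+1)).2))]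
    exact Real.sqrt_le_sqrt h1
  -- boundedness of w
  have hsum : ∀ k, ‖(Z k).2 - (Z 0).2‖ * (1 - r) ≤ S * (1 - r ^ k) := by
    intro k
    induction k with
    | zero => simp
    | succ k ih =>
      have htri : ‖(Z (k+1)).2 - (Z 0).2‖ ≤ ‖(Z k).2 - (Z 0).2‖ + ‖(Z k).2 - (Z (k+1)).2‖ := by
        have := norm_sub_le ((Z k).2 - (Z 0).2) ((Z k).2 - (Z (k+1)).2)
        simpa [sub_sub_sub_cancel_left] using this
      have hg := hgeom k
      have hrk : (0:ℝ) ≤ r ^ k := pow_nonneg hr0 k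
      have : r ^ (k+1) = r ^ k * r := pow_succ r k
      nlinarith [norm_nonneg ((Z k).2 - (Z 0).2)]
  set M : ℝ := ‖(Z 0).2‖ + S / (1 - r) with hMdef
  have hM : ∀ k, ‖(Z k).2‖ ≤ M := by
    intro k
    have h1 : ‖(Z k).2‖ ≤ ‖(Z 0).2‖ + ‖(Z k).2 - (Z 0).2‖ := by
      have := norm_sub_le ((Z k).2 - (Z 0).2) (- (Z 0).2)
      simpa [norm_sub_rev] using norm_sub_norm_le ((Z k).2) ((Z 0).2) |>.trans (le_refl _) |> fun h => by
        nlinarith [norm_sub_norm_le ((Z k).2) ((Z 0).2), abs_norm_sub_norm_le ((Z k).2) ((Z 0).2)]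
    have h2 : ‖(Z k).2 - (Z 0).2‖ ≤ S / (1 - r) := by
      rw [le_div_iff₀ (by linarith)]
      have := hsum k
      have hrk : (0:ℝ) ≤ r ^ k := pow_nonneg hr0 k
      nlinarith
    rw [hMdef]; linarith
  have hM0 : 0 ≤ M := le_trans (norm_nonneg _) (hM 0)
  -- imaginary part of D
  have hImD : ∀ k, (Z k).1.im - (Z (k+1)).1.im
      = (D k).im + 2 * (inner ℂ ((Z (k+1)).2) ((Z k).2) : ℂ).im := by
    intro k
    simp [hDdef, hip', Complex.add_im, Complex.sub_im, Complex.conj_im, Complex.mul_im,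
      Complex.re_ofNat, Complex.im_ofNat]
    ring
  -- bound on the imaginary part of the inner product
  have hinner : ∀ k, |(inner ℂ ((Z (k+1)).2) ((Z k).2) : ℂ).im| ≤ M * ‖(Z k).2 - (Z (k+1)).2‖ := by
    intro k
    have h0 : (inner ℂ ((Z (k+1)).2) ((Z (k+1)).2) : ℂ).im = 0 := by
      have := inner_self_im (𝕜 := ℂ) (x := (Z (k+1)).2)
      simpa using this
    have hdec : (inner ℂ ((Z (k+1)).2) ((Z k).2) : ℂ)
        = inner ℂ ((Z (k+1)).2) ((Z k).2 - (Z (k+1)).2) + inner ℂ ((Z (k+1)).2) ((Z (k+1)).2) := by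
      rw [inner_sub_right]; ring
    rw [hdec, Complex.add_im, h0, add_zero]
    have h1 : |(inner ℂ ((Z (k+1)).2) ((Z k).2 - (Z (k+1)).2) : ℂ).im|
        ≤ ‖(inner ℂ ((Z (k+1)).2) ((Z k).2 - (Z (k+1)).2) : ℂ)‖ := by
      exact Complex.abs_im_le_norm _
    have h2 := norm_inner_le_norm (𝕜 := ℂ) ((Z (k+1)).2) ((Z k).2 - (Z (k+1)).2)
    have h3 := hM (k+1)
    exact h1.trans (h2.trans (mul_le_mul_of_nonneg_right h3 (norm_nonneg _)))
  -- bound on the difference of squared norms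
  have hsqn : ∀ k, |‖(Z k).2‖ ^ 2 - ‖(Z (k+1)).2‖ ^ 2| ≤ 2 * M * ‖(Z k).2 - (Z (k+1)).2‖ := by
    intro k
    exact aux_sq _ _ _ _ (abs_norm_sub_norm_le ((Z k).2) ((Z (k+1)).2)) (hM k) (hM (k+1))
      (norm_nonneg _) (norm_nonneg _)
  -- the constant
  refine ⟨B * Real.sqrt (ht (Z 0)) + 4 * M * Real.sqrt B + Real.sqrt B + 1, by positivity, ?_⟩
  intro k
  have hsk : 0 ≤ Real.sqrt (ht (Z k)) := Real.sqrt_nonneg _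
  have hsB : 0 ≤ Real.sqrt B := Real.sqrt_nonneg _
  -- t_k ≤ √t_0 √t_k
  have htk : ht (Z k) ≤ Real.sqrt (ht (Z 0)) * Real.sqrt (ht (Z k)) := by
    have h1 : Real.sqrt (ht (Z k)) ≤ Real.sqrt (ht (Z 0)) := Real.sqrt_le_sqrt (htle0 k)
    calc ht (Z k) = Real.sqrt (ht (Z k)) * Real.sqrt (ht (Z k)) :=
          (Real.mul_self_sqrt (ht_pos k).le).symm
      _ ≤ Real.sqrt (ht (Z 0)) * Real.sqrt (ht (Z k)) :=
          mul_le_mul_of_nonneg_right h1 hsk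
  -- components of the difference
  have hfst : (bpr (Z k) - bpr (Z (k+1))).1
      = (((Z k).1.im - (Z (k+1)).1.im : ℝ) : ℂ) * Complex.I
        + (((‖(Z k).2‖ ^ 2 - ‖(Z (k+1)).2‖ ^ 2 : ℝ)) : ℂ) := by
    rw [Prod.fst_sub]
    simp only [bpr, Complex.ofReal_sub]
    push_cast
    ring
  have hsnd : (bpr (Z k) - bpr (Z (k+1))).2 = (Z k).2 - (Z (k+1)).2 := rfl
  have hfstn : ‖(bpr (Z k) - bpr (Z (k+1))).1‖
      ≤ |(Z k).1.im - (Z (k+1)).1.im| + |‖(Z k).2‖ ^ 2 - ‖(Z (k+1)).2‖ ^ 2| := by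
    rw [hfst]
    refine le_trans (norm_add_le _ _) ?_
    simp [← Complex.ofReal_sub, ← Complex.ofReal_pow, Complex.norm_real]
  -- bound |Im z - Im z'|
  have hIm : |(Z k).1.im - (Z (k+1)).1.im|
      ≤ B * ht (Z k) + 2 * M * ‖(Z k).2 - (Z (k+1)).2‖ := by
    rw [hImD k]
    refine le_trans (abs_add_le _ _) ?_
    have h1 : |(D k).im| ≤ ‖D k‖ := by
      exact Complex.abs_im_le_norm _
    have h2 := hDle k
    have h3 := hinner k
    rw [abs_mul, abs_two]
    linarith
  -- put everything together
  have hen : enorm' (bpr (Z k) - bpr (Z (k+1)))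
      ≤ ‖(bpr (Z k) - bpr (Z (k+1))).1‖ + ‖(bpr (Z k) - bpr (Z (k+1))).2‖ := by
    rw [enorm']
    rw [← Real.sqrt_sq (by positivity : (0:ℝ) ≤ ‖(bpr (Z k) - bpr (Z (k+1))).1‖ + ‖(bpr (Z k) - bpr (Z (k+1))).2‖)]
    apply Real.sqrt_le_sqrt
    nlinarith [norm_nonneg (bpr (Z k) - bpr (Z (k+1))).1, norm_nonneg (bpr (Z k) - bpr (Z (k+1))).2]
  have hwk := hw k
  have hsq := hsqn k
  have hwn : (0:ℝ) ≤ ‖(Z k).2 - (Z (k+1)).2‖ := norm_nonneg _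
  rw [hsnd] at hen
  calc enorm' (bpr (Z k) - bpr (Z (k+1)))
      ≤ ‖(bpr (Z k) - bpr (Z (k+1))).1‖ + ‖(Z k).2 - (Z (k+1)).2‖ := hen
    _ ≤ (B * ht (Z k) + 2 * M * ‖(Z k).2 - (Z (k+1)).2‖)
        + 2 * M * ‖(Z k).2 - (Z (k+1)).2‖ + ‖(Z k).2 - (Z (k+1)).2‖ := by
        have := hfstn
        linarith [hIm]
    _ ≤ B * (Real.sqrt (ht (Z 0)) * Real.sqrt (ht (Z k)))
        + 4 * M * (Real.sqrt B * Real.sqrt (ht (Z k)))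
        + Real.sqrt B * Real.sqrt (ht (Z k)) := by
        nlinarith [mul_le_mul_of_nonneg_left htk hBpos.le,
          mul_le_mul_of_nonneg_left hwk (by positivity : (0:ℝ) ≤ 4 * M)]
    _ ≤ (B * Real.sqrt (ht (Z 0)) + 4 * M * Real.sqrt B + Real.sqrt B + 1) * Real.sqrt (ht (Z k)) := by
        nlinarith



/-- if a sequence in the Siegel domain has pseudo-hyperbolic steps bounded
by `a < 1` and heights decaying geometrically (`t_{n+k} ≤ c^k t_n`), then the Euclidean
distance between boundary projections of consecutive points is `≤ C̃·√t_n`. -/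
theorem stmt6 {n : ℕ} (a c : ℝ) (ha0 : 0 < a) (ha1 : a < 1) (hc0 : 0 < c) (hc1 : c < 1)
    (Z : ℕ → ℂ × EuclideanSpace ℂ (Fin n)) (hZ : ∀ k, Z k ∈ siegel n)
    (hstep : ∀ k, sphd (Z k) (Z (k + 1)) ≤ a)
    (hdecay : ∀ k m : ℕ, ht (Z (k + m)) ≤ c ^ m * ht (Z k)) :
    ∃ C : ℝ, 0 < C ∧ ∀ k,
      enorm' (bpr (Z k) - bpr (Z (k + 1))) ≤ C * Real.sqrt (ht (Z k)) :=
  stmt6_aux a c ha0 ha1 hc0 hc1 Z hZ hstep hdecay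
end
end

section
/- Let N ≥ 1, α > 1 and a = (α−1)/(α+1). Let (z_n, w_n) ∈ H^N (n ≥ 0) be a sequence with heights t_n := Re z_n − ‖w_n‖² satisfying: (z_n,w_n) → (0,0) as n → ∞; d((z_n,w_n),(z_{n+1},w_{n+1})) ≤ a for all n; and liminf_{n→∞} t_n/t_{n+1} ≥ α. Then: t_n/t_{n+1} → α; Re z_n / t_n → 1; Im z_n / t_n → 0; ‖w_n‖² / t_n → 0. In particular the sequence is special, i.e. ‖w_n‖² / Re z_n → 0. -/
noncomputable section

open Filter Topology Finset

lemma aux_telescope {E : Type*} [NormedAddCommGroup E] {f : ℕ → E} {τ : ℕ → ℝ} {c γ : ℝ}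
    (hf : Tendsto f atTop (𝓝 0)) (hc : 0 ≤ c) (hγ0 : 0 ≤ γ) (hγ1 : γ < 1)
    {K : ℕ} (hτ : ∀ j, 0 ≤ τ j)
    (hst : ∀ j, K ≤ j → ‖f j - f (j+1)‖ ≤ c * τ j)
    (hdec : ∀ j, K ≤ j → τ (j+1) ≤ γ * τ j) {k : ℕ} (hk : K ≤ k) :
    (1 - γ) * ‖f k‖ ≤ c * τ k := by
  have hcτ : 0 ≤ c * τ k := mul_nonneg hc (hτ k)
  have main : ∀ m : ℕ, τ (k+m) ≤ γ^m * τ k ∧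
      ‖f k - f (k+m)‖ ≤ c * τ k * ∑ i ∈ range m, γ^i := by
    intro m
    induction m with
    | zero => simp [hτ k]
    | succ m ih =>
      constructor
      · calc τ (k+(m+1)) = τ ((k+m)+1) := by ring_nf
          _ ≤ γ * τ (k+m) := hdec _ (by omega)
          _ ≤ γ * (γ^m * τ k) := mul_le_mul_of_nonneg_left ih.1 hγ0
          _ = γ^(m+1) * τ k := by ring
      · have htri : ‖f k - f (k+(m+1))‖ ≤ ‖f k - f (k+m)‖ + ‖f (k+m) - f ((k+m)+1)‖ := by
          have := dist_triangle (f k) (f (k+m)) (f ((k+m)+1))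
          simpa [dist_eq_norm, show k+(m+1) = (k+m)+1 by ring] using this
        have h2 : ‖f (k+m) - f ((k+m)+1)‖ ≤ c * (γ^m * τ k) := by
          calc ‖f (k+m) - f ((k+m)+1)‖ ≤ c * τ (k+m) := hst _ (by omega)
            _ ≤ c * (γ^m * τ k) := mul_le_mul_of_nonneg_left ih.1 hc
        calc ‖f k - f (k+(m+1))‖ ≤ c * τ k * ∑ i ∈ range m, γ^i + c * (γ^m * τ k) :=
              htri.trans (add_le_add ih.2 h2)
          _ = c * τ k * ∑ i ∈ range (m+1), γ^i := by rw [sum_range_succ]; ring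
  have hbound : ∀ m : ℕ, (1 - γ) * ‖f k - f (k+m)‖ ≤ c * τ k := by
    intro m
    have hsum : (1 - γ) * ∑ i ∈ range m, γ^i = 1 - γ^m := by
      have := geom_sum_mul γ m
      nlinarith [this]
    have h1 : (1 - γ) * ‖f k - f (k+m)‖ ≤ (1 - γ) * (c * τ k * ∑ i ∈ range m, γ^i) :=
      mul_le_mul_of_nonneg_left (main m).2 (by linarith)
    have h2 : (1 - γ) * (c * τ k * ∑ i ∈ range m, γ^i) = c * τ k * (1 - γ^m) := by
      rw [← hsum]; ring
    have h3 : c * τ k * (1 - γ^m) ≤ c * τ k * 1 :=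
      mul_le_mul_of_nonneg_left (by nlinarith [pow_nonneg hγ0 m]) hcτ
    linarith
  have hten : Tendsto (fun m => (1 - γ) * ‖f k - f (k+m)‖) atTop (𝓝 ((1-γ) * ‖f k‖)) := by
    have h0 : Tendsto (fun m => f (k+m)) atTop (𝓝 0) := by
      have := hf.comp (tendsto_add_atTop_nat k)
      simpa [Function.comp_def, Nat.add_comm] using this
    have : Tendsto (fun m => f k - f (k+m)) atTop (𝓝 (f k - 0)) := tendsto_const_nhds.sub h0
    simpa using (this.norm.const_mul (1-γ))
  exact le_of_tendsto hten (Eventually.of_forall hbound)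

lemma aux_key_ineq {n : ℕ} {α : ℝ} (hα : 1 < α) {Z W : ℂ × EuclideanSpace ℂ (Fin n)}
    (hZs : Z ∈ siegel n) (hWs : W ∈ siegel n)
    (h : sphd Z W ≤ (α - 1)/(α + 1)) :
    (ht Z + ht W + ‖Z.2 - W.2‖^2)^2 + (Z.1.im - W.1.im - 2 * (hip' Z.2 W.2).im)^2
      ≤ ht Z * ht W * (α+1)^2 / α := by
  have hαp : (0:ℝ) < α := by linarith
  have hα1 : (0:ℝ) < α + 1 := by linarith
  have htZ : 0 < ht Z := sub_pos.2 hZs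
  have htW : 0 < ht W := sub_pos.2 hWs
  set A : ℂ := Z.1 + (starRingEnd ℂ) W.1 - 2 * hip' Z.2 W.2 with hA
  set a : ℝ := (α - 1)/(α + 1) with ha
  have ha0 : 0 ≤ a := div_nonneg (by linarith) (by linarith)
  have ha1 : a < 1 := by rw [ha, div_lt_one hα1]; linarith
  have hx : 1 - 4 * ht Z * ht W / ‖A‖ ^ 2 ≤ a^2 := by
    rcases le_or_gt (1 - 4 * ht Z * ht W / ‖A‖ ^ 2) 0 with h'|h'
    · exact h'.trans (sq_nonneg a)
    · have := Real.sq_sqrt h'.le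
      calc 1 - 4 * ht Z * ht W / ‖A‖ ^ 2 = (sphd Z W)^2 := by rw [sphd, ← hA, this]
        _ ≤ a^2 := pow_le_pow_left₀ (Real.sqrt_nonneg _) h 2
  have hApos : 0 < ‖A‖^2 := by
    rcases eq_or_ne (‖A‖^2) 0 with h0|h0
    · rw [h0] at hx; simp at hx; rw [abs_of_nonneg ha0] at hx; linarith
    · positivity
  have hmain : ‖A‖^2 * α ≤ ht Z * ht W * (α+1)^2 := by
    have h1 : 1 - a^2 ≤ 4 * ht Z * ht W / ‖A‖^2 := by linarith
    have h2 : (1 - a^2) * ‖A‖^2 ≤ 4 * ht Z * ht W := by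
      rw [← le_div_iff₀ hApos]; linarith [h1]
    have h3 : 1 - a^2 = 4*α/(α+1)^2 := by rw [ha]; field_simp; ring
    rw [h3] at h2
    have h4 : 4*α/(α+1)^2 * ‖A‖^2 * (α+1)^2 ≤ 4 * ht Z * ht W * (α+1)^2 := by
      nlinarith [sq_nonneg (α+1)]
    have h5 : 4*α/(α+1)^2 * ‖A‖^2 * (α+1)^2 = 4 * (‖A‖^2 * α) := by field_simp
    nlinarith
  have hre : A.re = ht Z + ht W + ‖Z.2 - W.2‖^2 := by
    have hns : ‖Z.2 - W.2‖^2 = ‖Z.2‖^2 - 2*(inner ℂ Z.2 W.2 : ℂ).re + ‖W.2‖^2 := by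
      have := @norm_sub_sq ℂ _ _ _ _ Z.2 W.2
      simpa using this
    have hsym : (inner ℂ Z.2 W.2 : ℂ).re = (inner ℂ W.2 Z.2 : ℂ).re := by
      simpa using inner_re_symm (𝕜 := ℂ) Z.2 W.2
    have : A.re = Z.1.re + W.1.re - 2 * (inner ℂ W.2 Z.2 : ℂ).re := by
      rw [hA]; simp [hip', Complex.add_re, Complex.sub_re, Complex.mul_re]
    rw [this, ht, ht, hns, hsym]; ring
  have him : A.im = Z.1.im - W.1.im - 2 * (hip' Z.2 W.2).im := by
    rw [hA]; simp [Complex.add_im, Complex.sub_im, Complex.mul_im]; ring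
  have hA2 : ‖A‖^2 = A.re^2 + A.im^2 := by
    rw [Complex.sq_norm, Complex.normSq_apply]; ring
  rw [← hre, ← him, ← hA2, le_div_iff₀ hαp]
  exact hmain

lemma aux_sqle (x y : ℝ) (hx : 0 ≤ x) (hy : 0 ≤ y) (h : x^2 ≤ y^2) : x ≤ y := by
  nlinarith [sq_nonneg (x - y), sq_nonneg (x + y)]

set_option maxHeartbeats 2000000 in
/-- if a sequence in the Siegel domain tends to `0`, has pseudo-hyperbolic
steps bounded by `a = (α−1)/(α+1)`, and `liminf t_n/t_{n+1} ≥ α`, then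
`t_n/t_{n+1} → α`, `Re z_n/t_n → 1`, `Im z_n/t_n → 0`, `‖w_n‖²/t_n → 0`; in particular
the sequence is special: `‖w_n‖²/Re z_n → 0`. -/
theorem stmt11 {n : ℕ} (α : ℝ) (hα : 1 < α)
    (Z : ℕ → ℂ × EuclideanSpace ℂ (Fin n)) (hZ : ∀ k, Z k ∈ siegel n)
    (hlim : Tendsto Z atTop (𝓝 0))
    (hstep : ∀ k, sphd (Z k) (Z (k + 1)) ≤ (α - 1) / (α + 1))
    (hliminf : α ≤ Filter.liminf (fun k => ht (Z k) / ht (Z (k + 1))) atTop) :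
    Tendsto (fun k => ht (Z k) / ht (Z (k + 1))) atTop (𝓝 α) ∧
    Tendsto (fun k => (Z k).1.re / ht (Z k)) atTop (𝓝 1) ∧
    Tendsto (fun k => (Z k).1.im / ht (Z k)) atTop (𝓝 0) ∧
    Tendsto (fun k => ‖(Z k).2‖ ^ 2 / ht (Z k)) atTop (𝓝 0) ∧
    Tendsto (fun k => ‖(Z k).2‖ ^ 2 / (Z k).1.re) atTop (𝓝 0) := by
  have hαp : (0:ℝ) < α := by linarith
  obtain ⟨t, htdef⟩ : ∃ t : ℕ → ℝ, t = fun k => ht (Z k) := ⟨_, rfl⟩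
  have htp : ∀ k, 0 < t k := by
    intro k; rw [htdef]; exact sub_pos.2 (hZ k)
  obtain ⟨s, hsdef⟩ : ∃ s : ℕ → ℝ, s = fun k => ‖(Z k).2 - (Z (k+1)).2‖^2 := ⟨_, rfl⟩
  obtain ⟨u, hudef⟩ : ∃ u : ℕ → ℝ,
      u = fun k => (Z k).1.im - (Z (k+1)).1.im - 2 * (hip' (Z k).2 (Z (k+1)).2).im := ⟨_, rfl⟩
  have hs0 : ∀ k, 0 ≤ s k := by intro k; rw [hsdef]; positivity
  have key : ∀ k, (t k + t (k+1) + s k)^2 + (u k)^2 ≤ t k * t (k+1) * (α+1)^2 / α := by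
    intro k
    simp only [htdef, hsdef, hudef]
    exact aux_key_ineq hα (hZ k) (hZ (k+1)) (hstep k)
  -- PART 1 --
  have hX : ∀ k, (t k + t (k+1))^2 * α ≤ t k * t (k+1) * (α+1)^2 := by
    intro k
    have h1 : (t k + t (k+1))^2 ≤ t k * t (k+1) * (α+1)^2 / α := by
      nlinarith [key k, sq_nonneg (u k), hs0 k, (htp k).le, (htp (k+1)).le,
        mul_nonneg (by linarith [(htp k).le, (htp (k+1)).le] : (0:ℝ) ≤ t k + t (k+1)) (hs0 k)]
    exact (le_div_iff₀ hαp).1 h1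
  have hr_le : ∀ k, t k ≤ α * t (k+1) := by
    intro k
    by_contra hcon
    push_neg at hcon
    have h1 : 0 < t k - α * t (k+1) := sub_pos.2 hcon
    have h2 : 0 < α * t k - t (k+1) := by
      nlinarith [htp (k+1), mul_lt_mul_of_pos_left hcon hαp,
        mul_pos (show (0:ℝ) < α*α - 1 by nlinarith) (htp (k+1))]
    nlinarith [mul_pos h1 h2, hX k]
  have hr_ge : ∀ k, t (k+1) ≤ α * t k := by
    intro k
    by_contra hcon
    push_neg at hcon
    have h1 : 0 < t (k+1) - α * t k := sub_pos.2 hcon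
    have h2 : 0 < α * t (k+1) - t k := by
      nlinarith [htp k, mul_lt_mul_of_pos_left hcon hαp,
        mul_pos (show (0:ℝ) < α*α - 1 by nlinarith) (htp k)]
    nlinarith [mul_pos h1 h2, hX k]
  have hliminf' : α ≤ Filter.liminf (fun k => t k / t (k + 1)) atTop := by
    rw [htdef]; exact hliminf
  have hrlim : Tendsto (fun k => t k / t (k+1)) atTop (𝓝 α) := by
    have h2 : ∀ k, t k / t (k+1) ≤ α := fun k => by
      rw [div_le_iff₀ (htp (k+1))]; linarith [hr_le k]
    have h3 : ∀ k : ℕ, (0:ℝ) ≤ t k / t (k+1) := fun k => (div_pos (htp k) (htp (k+1))).le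
    have hb : IsBoundedUnder (· ≤ ·) atTop (fun k => t k / t (k+1)) := isBoundedUnder_of ⟨α, h2⟩
    have hb' : IsBoundedUnder (· ≥ ·) atTop (fun k => t k / t (k+1)) := isBoundedUnder_of ⟨0, h3⟩
    have hsup : limsup (fun k => t k / t (k+1)) atTop ≤ α :=
      limsup_le_of_le hb'.isCoboundedUnder_le (Eventually.of_forall h2)
    exact tendsto_of_le_liminf_of_limsup_le hliminf' hsup hb hb'
  obtain ⟨δ, hδdef⟩ : ∃ δ : ℕ → ℝ, δ = fun k => α + 1/α - t k / t (k+1) - t (k+1) / t k :=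
    ⟨_, rfl⟩
  have hδtt : ∀ k, δ k * (t k * t (k+1)) = t k * t (k+1) * (α+1)^2/α - (t k + t (k+1))^2 := by
    intro k
    have h1 := (htp k).ne'
    have h2 := (htp (k+1)).ne'
    simp only [hδdef]
    field_simp
    ring
  have h2s : ∀ k, 2*(t k + t (k+1)) * s k ≤ δ k * (t k * t (k+1)) := by
    intro k
    rw [hδtt k]
    nlinarith [key k, sq_nonneg (u k), hs0 k, htp k, htp (k+1)]
  have hδ0 : ∀ k, 0 ≤ δ k := by
    intro k
    nlinarith [h2s k, hs0 k, htp k, htp (k+1), mul_pos (htp k) (htp (k+1)),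
      mul_nonneg (by linarith [(htp k).le, (htp (k+1)).le] : (0:ℝ) ≤ 2*(t k + t (k+1))) (hs0 k)]
  have hs_le : ∀ k, s k ≤ δ k * t k / 2 := by
    intro k
    have hpos : 0 < t k + t (k+1) := by linarith [htp k, htp (k+1)]
    have h1 : 2 * s k * (t k + t (k+1)) ≤ (δ k * t k) * (t k + t (k+1)) := by
      nlinarith [h2s k, mul_nonneg (mul_nonneg (hδ0 k) (htp k).le) (htp k).le]
    have h2 := le_of_mul_le_mul_right h1 hpos
    linarith
  have hu_le : ∀ k, u k^2 ≤ δ k * (t k * t (k+1)) := by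
    intro k
    rw [hδtt k]
    nlinarith [key k, hs0 k, htp k, htp (k+1),
      mul_nonneg (by linarith [(htp k).le, (htp (k+1)).le] : (0:ℝ) ≤ t k + t (k+1)) (hs0 k)]
  have hrinv : Tendsto (fun k => t (k+1) / t k) atTop (𝓝 (1/α)) := by
    have he : ∀ k, t (k+1) / t k = (t k / t (k+1))⁻¹ := fun k => by rw [inv_div]
    have := hrlim.inv₀ (ne_of_gt hαp)
    rw [one_div]
    exact this.congr fun k => (he k).symm
  have hδlim : Tendsto δ atTop (𝓝 0) := by
    have : Tendsto (fun k => α + 1/α - t k / t (k+1) - t (k+1) / t k) atTop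
        (𝓝 (α + 1/α - α - 1/α)) := (tendsto_const_nhds.sub hrlim).sub hrinv
    simpa [hδdef] using this
  obtain ⟨q, hqdef⟩ : ∃ q : ℝ, q = 2/(α+1) := ⟨_, rfl⟩
  have hq0 : (0:ℝ) < q := by rw [hqdef]; positivity
  have hq1 : q < 1 := by rw [hqdef, div_lt_one (by linarith)]; linarith
  have hgeom : ∀ᶠ j in atTop, t (j+1) ≤ q * t j := by
    have hev : ∀ᶠ j in atTop, (α+1)/2 < t j / t (j+1) :=
      hrlim.eventually (eventually_gt_nhds (by linarith))
    filter_upwards [hev] with j hj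
    rw [lt_div_iff₀ (htp (j+1))] at hj
    have h2 : t (j+1) * (α+1) ≤ 2 * t j := by nlinarith [hj]
    rw [hqdef, div_mul_eq_mul_div, le_div_iff₀ (by linarith : (0:ℝ) < α+1)]
    linarith
  -- PART 2 : ‖w‖²/t → 0 --
  have hw0 : Tendsto (fun k => (Z k).2) atTop (𝓝 0) := by
    have := (continuous_snd.tendsto (0 : ℂ × EuclideanSpace ℂ (Fin n))).comp hlim
    simpa [Function.comp_def] using this
  have hW2 : Tendsto (fun k => ‖(Z k).2‖ ^ 2 / t k) atTop (𝓝 0) := by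
    rw [Metric.tendsto_atTop]
    intro ε hε
    set γ : ℝ := Real.sqrt q with hγdef
    have hγ0 : 0 ≤ γ := Real.sqrt_nonneg _
    have hγ1 : γ < 1 := by
      have h := Real.sqrt_lt_sqrt hq0.le hq1
      rw [Real.sqrt_one] at h
      rw [hγdef]; exact h
    have h1γ : 0 < 1 - γ := by linarith
    have hε'0 : 0 < (1-γ)^2 * ε := by positivity
    obtain ⟨K₁, hK₁⟩ := (Metric.tendsto_atTop.1 hδlim) ((1-γ)^2 * ε) hε'0
    obtain ⟨K₂, hK₂⟩ := eventually_atTop.1 hgeom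
    refine ⟨max K₁ K₂, fun k hk => ?_⟩
    have hδle : ∀ j, max K₁ K₂ ≤ j → δ j ≤ (1-γ)^2 * ε := by
      intro j hj
      have := hK₁ j (le_trans (le_max_left _ _) hj)
      rw [Real.dist_eq, sub_zero] at this
      exact (le_abs_self _).trans this.le
    have hst : ∀ j, max K₁ K₂ ≤ j →
        ‖(Z j).2 - (Z (j+1)).2‖ ≤ Real.sqrt ((1-γ)^2 * ε / 2) * Real.sqrt (t j) := by
      intro j hj
      have h1 : s j ≤ (1-γ)^2 * ε / 2 * t j := by
        have := hs_le j
        have h2 := hδle j hj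
        nlinarith [htp j]
      calc ‖(Z j).2 - (Z (j+1)).2‖ = Real.sqrt (s j) := by
            rw [hsdef]; exact (Real.sqrt_sq (norm_nonneg _)).symm
        _ ≤ Real.sqrt ((1-γ)^2 * ε / 2 * t j) := Real.sqrt_le_sqrt h1
        _ = Real.sqrt ((1-γ)^2 * ε / 2) * Real.sqrt (t j) := Real.sqrt_mul (by positivity) _
    have hdec : ∀ j, max K₁ K₂ ≤ j → Real.sqrt (t (j+1)) ≤ γ * Real.sqrt (t j) := by
      intro j hj
      calc Real.sqrt (t (j+1)) ≤ Real.sqrt (q * t j) :=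
            Real.sqrt_le_sqrt (hK₂ j (le_trans (le_max_right _ _) hj))
        _ = γ * Real.sqrt (t j) := by rw [hγdef]; exact Real.sqrt_mul hq0.le _
    have htele := aux_telescope hw0 (Real.sqrt_nonneg ((1-γ)^2 * ε / 2))
      hγ0 hγ1 (fun j => Real.sqrt_nonneg (t j)) hst hdec hk
    have hsq : (1-γ)^2 * ‖(Z k).2‖^2 ≤ ((1-γ)^2 * ε / 2) * t k := by
      have hnn : 0 ≤ (1-γ) * ‖(Z k).2‖ := mul_nonneg h1γ.le (norm_nonneg _)
      have h2 := mul_le_mul htele htele hnn (by positivity)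
      calc (1-γ)^2 * ‖(Z k).2‖^2 = ((1-γ) * ‖(Z k).2‖) * ((1-γ) * ‖(Z k).2‖) := by ring
        _ ≤ (Real.sqrt ((1-γ)^2 * ε / 2) * Real.sqrt (t k)) *
            (Real.sqrt ((1-γ)^2 * ε / 2) * Real.sqrt (t k)) := h2
        _ = (Real.sqrt ((1-γ)^2 * ε / 2))^2 * (Real.sqrt (t k))^2 := by ring
        _ = ((1-γ)^2 * ε / 2) * t k := by
            rw [Real.sq_sqrt (by positivity), Real.sq_sqrt (htp k).le]
    rw [Real.dist_eq, sub_zero, abs_of_nonneg (div_nonneg (by positivity) (htp k).le),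
      div_lt_iff₀ (htp k)]
    nlinarith [mul_pos hε (htp k), sq_nonneg (1-γ),
      mul_pos (mul_pos (mul_pos h1γ h1γ) hε) (htp k)]
  -- PART 3 : Im/t → 0 --
  have hIm : Tendsto (fun k => (Z k).1.im / t k) atTop (𝓝 0) := by
    have him0 : Tendsto (fun k => (Z k).1.im) atTop (𝓝 0) := by
      have := ((Complex.continuous_im.comp continuous_fst).tendsto
        (0 : ℂ × EuclideanSpace ℂ (Fin n))).comp hlim
      simpa [Function.comp_def] using this
    rw [Metric.tendsto_atTop]
    intro ε hε
    have h1q : 0 < 1 - q := by linarith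
    set σ : ℝ := (1 - q) * ε / 8 with hσdef
    have hσ0 : 0 < σ := by positivity
    obtain ⟨K₁, hK₁⟩ := (Metric.tendsto_atTop.1 hδlim) (σ^2) (by positivity)
    obtain ⟨K₂, hK₂⟩ := eventually_atTop.1 hgeom
    obtain ⟨K₃, hK₃⟩ := (Metric.tendsto_atTop.1 hW2) σ hσ0
    set K := max (max K₁ K₂) K₃ with hKdef
    refine ⟨K, fun k hk => ?_⟩
    have hδle : ∀ j, K ≤ j → δ j ≤ σ^2 := by
      intro j hj
      have := hK₁ j (le_trans (le_trans (le_max_left _ _) (le_max_left _ _)) hj)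
      rw [Real.dist_eq, sub_zero] at this
      exact (le_abs_self _).trans this.le
    have hdec : ∀ j, K ≤ j → t (j+1) ≤ q * t j :=
      fun j hj => hK₂ j (le_trans (le_trans (le_max_right _ _) (le_max_left _ _)) hj)
    have htle : ∀ j, K ≤ j → t (j+1) ≤ t j := by
      intro j hj
      have := hdec j hj
      nlinarith [htp j]
    have hw_bound : ∀ j, K ≤ j → ‖(Z j).2‖^2 ≤ σ * t j := by
      intro j hj
      have := hK₃ j (le_trans (le_max_right _ _) hj)
      rw [Real.dist_eq, sub_zero, abs_of_nonneg (div_nonneg (by positivity) (htp j).le)] at this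
      rw [div_lt_iff₀ (htp j)] at this
      linarith
    have hst : ∀ j, K ≤ j → ‖(Z j).1.im - (Z (j+1)).1.im‖ ≤ (3*σ) * t j := by
      intro j hj
      have h3 : t (j+1) ≤ t j := htle j hj
      have hu2 : u j^2 ≤ (σ * t j)^2 := by
        have h1 := hu_le j
        have h2 := hδle j hj
        nlinarith [htp j, htp (j+1), hδ0 j, hσ0,
          mul_nonneg (sub_nonneg.2 h2) (mul_pos (htp j) (htp (j+1))).le,
          mul_nonneg (mul_nonneg (sq_nonneg σ) (htp j).le) (sub_nonneg.2 h3)]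
      have huabs : |u j| ≤ σ * t j :=
        aux_sqle _ _ (abs_nonneg _) (mul_nonneg hσ0.le (htp j).le) (by rwa [sq_abs])
      have hprod : ‖(Z j).2‖ * ‖(Z (j+1)).2‖ ≤ σ * t j := by
        have ha := hw_bound j hj
        have hb := hw_bound (j+1) (le_trans hj (Nat.le_succ j))
        refine aux_sqle _ _ (by positivity) (mul_nonneg hσ0.le (htp j).le) ?_
        have hab : ‖(Z j).2‖^2 * ‖(Z (j+1)).2‖^2 ≤ (σ * t j) * (σ * t (j+1)) :=
          mul_le_mul ha hb (by positivity) (mul_nonneg hσ0.le (htp j).le)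
        nlinarith [mul_nonneg (mul_nonneg (mul_nonneg hσ0.le hσ0.le) (htp j).le)
          (sub_nonneg.2 h3)]
      have hdecomp : (Z j).1.im - (Z (j+1)).1.im = u j + 2*(hip' (Z j).2 (Z (j+1)).2).im := by
        rw [hudef]; ring
      have hinner : |(hip' (Z j).2 (Z (j+1)).2).im| ≤ ‖(Z j).2‖ * ‖(Z (j+1)).2‖ := by
        have h1 : |(hip' (Z j).2 (Z (j+1)).2).im| ≤ ‖(hip' (Z j).2 (Z (j+1)).2)‖ := by
          simpa using Complex.abs_im_le_norm (hip' (Z j).2 (Z (j+1)).2)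
        have h2 : ‖(hip' (Z j).2 (Z (j+1)).2)‖ ≤ ‖(Z (j+1)).2‖ * ‖(Z j).2‖ := by
          simpa [hip'] using norm_inner_le_norm (𝕜 := ℂ) (Z (j+1)).2 (Z j).2
        calc |(hip' (Z j).2 (Z (j+1)).2).im| ≤ ‖(Z (j+1)).2‖ * ‖(Z j).2‖ := h1.trans h2
          _ = ‖(Z j).2‖ * ‖(Z (j+1)).2‖ := mul_comm _ _
      calc ‖(Z j).1.im - (Z (j+1)).1.im‖
          = |u j + 2*(hip' (Z j).2 (Z (j+1)).2).im| := by rw [Real.norm_eq_abs, hdecomp]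
        _ ≤ |u j| + |2*(hip' (Z j).2 (Z (j+1)).2).im| := abs_add_le _ _
        _ = |u j| + 2*|(hip' (Z j).2 (Z (j+1)).2).im| := by rw [abs_mul, abs_two]
        _ ≤ σ*t j + 2*(‖(Z j).2‖ * ‖(Z (j+1)).2‖) := by linarith [huabs, hinner]
        _ ≤ (3*σ) * t j := by linarith [hprod]
    have htele := aux_telescope him0 (c := 3*σ) (by positivity) hq0.le hq1
      (fun j => (htp j).le) hst hdec hk
    rw [Real.norm_eq_abs] at htele
    rw [Real.dist_eq, sub_zero, abs_div, abs_of_pos (htp k), div_lt_iff₀ (htp k)]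
    have hσval : 3*σ = 3*(1-q)*ε/8 := by rw [hσdef]; ring
    rw [hσval] at htele
    nlinarith [htp k, mul_pos hε (htp k), h1q, htele,
      mul_pos h1q (mul_pos hε (htp k)), abs_nonneg ((Z k).1.im)]
  -- PART 4 : Re/t → 1, specialness --
  have hRe : Tendsto (fun k => (Z k).1.re / t k) atTop (𝓝 1) := by
    have heq : ∀ k, (Z k).1.re / t k = 1 + ‖(Z k).2‖^2 / t k := by
      intro k
      have h1 := (htp k).ne'
      have h2 : (Z k).1.re = t k + ‖(Z k).2‖^2 := by rw [htdef]; simp [ht]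
      rw [h2, add_div, div_self h1]
    have h2 : Tendsto (fun k => 1 + ‖(Z k).2‖^2 / t k) atTop (𝓝 (1+0)) :=
      tendsto_const_nhds.add hW2
    rw [add_zero] at h2
    exact h2.congr fun k => (heq k).symm
  have hfin : Tendsto (fun k => ‖(Z k).2‖ ^ 2 / (Z k).1.re) atTop (𝓝 0) := by
    have hre_pos : ∀ k, 0 < (Z k).1.re := fun k => lt_of_le_of_lt (by positivity) (hZ k)
    have heq : ∀ k, ‖(Z k).2‖^2 / (Z k).1.re = (‖(Z k).2‖^2 / t k) / ((Z k).1.re / t k) := by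
      intro k
      rw [div_div_div_eq, mul_comm (t k) ((Z k).1.re), mul_div_mul_right _ _ (htp k).ne']
    have h3 := hW2.div hRe one_ne_zero
    rw [zero_div] at h3
    exact h3.congr fun k => (heq k).symm
  rw [htdef] at hrlim hRe hIm hW2
  exact ⟨hrlim, hRe, hIm, hW2, hfin⟩
end
end

section
/- Let N ≥ 1 and α > 1. Let (z_n, w_n) ∈ H^N be a sequence with t_n := Re z_n − ‖w_n‖² > 0 and y_n := Im z_n, satisfying Re z_n / t_n → 1, y_n / t_n → 0, ‖w_n‖² / t_n → 0, and t_n / t_{n+1} → α. For each n define τ_n : H^N → H^N by τ_n(z,w) = (t_n z + ‖w_n‖² + i y_n + 2√(t_n) ⟨w, w_n⟩, √(t_n) w + w_n), and for k ≥ 1 define η_k(z,w) = (α^k z, α^{k/2} w). Then each τ_n is a biholomorphic automorphism of H^N, and: (1) for every fixed k ≥ 1, the maps τ_{n+k}^{-1} ∘ τ_n converge to η_k uniformly on compact subsets of H^N as n → ∞; (2) the maps τ_{n+1}^{-1} ∘ η_1^{-1} ∘ τ_n converge to the identity map uniformly on compact subsets of H^N as n → ∞. -/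
noncomputable section

open Filter Topology

section AuxLemmas

lemma castC {f : ℕ → ℝ} (h : Tendsto f atTop (𝓝 0)) :
    Tendsto (fun m => ((f m : ℝ) : ℂ)) atTop (𝓝 0) := by
  have := (Complex.continuous_ofReal.tendsto (0 : ℝ)).comp h
  simpa [Function.comp_def] using this

lemma tuo_aux {n : ℕ} {K : Set (ℂ × EuclideanSpace ℂ (Fin n))} (hK : IsCompact K)
    (f : ℕ → ℂ × EuclideanSpace ℂ (Fin n) → ℂ × EuclideanSpace ℂ (Fin n))
    (g : ℂ × EuclideanSpace ℂ (Fin n) → ℂ × EuclideanSpace ℂ (Fin n))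
    (a b c : ℕ → ℂ) (v u : ℕ → EuclideanSpace ℂ (Fin n))
    (hf : ∀ m p, p ∈ K → f m p - g p =
      (a m * p.1 + c m + hip' p.2 (v m), b m • p.2 + u m))
    (ha : Tendsto a atTop (𝓝 0)) (hb : Tendsto b atTop (𝓝 0))
    (hc : Tendsto c atTop (𝓝 0))
    (hv : Tendsto v atTop (𝓝 0)) (hu : Tendsto u atTop (𝓝 0)) :
    TendstoUniformlyOn f g atTop K := by
  rcases K.eq_empty_or_nonempty with hKe | ⟨q, hq⟩
  · subst hKe; exact tendstoUniformlyOn_empty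
  obtain ⟨R, hR⟩ := hK.isBounded.exists_norm_le
  have hR0 : 0 ≤ R := le_trans (norm_nonneg q) (hR q hq)
  set D : ℕ → ℝ := fun m => (‖a m‖ + ‖b m‖ + ‖c m‖ + ‖v m‖ + ‖u m‖) * (R + 1) with hD
  have hDlim : Tendsto D atTop (𝓝 0) := by
    have := ((((ha.norm.add hb.norm).add hc.norm).add hv.norm).add hu.norm).mul_const (R+1)
    simpa using this
  rw [Metric.tendstoUniformlyOn_iff]
  intro ε hε
  filter_upwards [hDlim.eventually (gt_mem_nhds hε)] with m hm p hp
  have h1 : ‖p.1‖ ≤ R := (norm_fst_le p).trans (hR p hp)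
  have h2 : ‖p.2‖ ≤ R := (norm_snd_le p).trans (hR p hp)
  have hdist : dist (g p) (f m p) = ‖f m p - g p‖ := by
    rw [dist_eq_norm, norm_sub_rev]
  rw [hdist, hf m p hp, Prod.norm_def]
  have hb0 := norm_nonneg (b m); have ha0 := norm_nonneg (a m)
  have hc0 := norm_nonneg (c m); have hv0 := norm_nonneg (v m)
  have hu0 := norm_nonneg (u m)
  refine max_lt ?_ ?_
  · calc ‖a m * p.1 + c m + hip' p.2 (v m)‖
        ≤ ‖a m * p.1 + c m‖ + ‖hip' p.2 (v m)‖ := norm_add_le _ _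
      _ ≤ (‖a m * p.1‖ + ‖c m‖) + ‖v m‖ * ‖p.2‖ :=
        add_le_add (norm_add_le _ _) (norm_inner_le_norm _ _)
      _ ≤ (‖a m‖ * R + ‖c m‖) + ‖v m‖ * R := by
        rw [norm_mul]; gcongr
      _ ≤ D m := by show _ ≤ (‖a m‖ + ‖b m‖ + ‖c m‖ + ‖v m‖ + ‖u m‖) * (R + 1); nlinarith [mul_nonneg hb0 hR0, mul_nonneg ha0 hR0,
          mul_nonneg hc0 hR0, mul_nonneg hv0 hR0, mul_nonneg hu0 hR0]
      _ < ε := hm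
  · calc ‖b m • p.2 + u m‖
        ≤ ‖b m • p.2‖ + ‖u m‖ := norm_add_le _ _
      _ ≤ ‖b m‖ * R + ‖u m‖ := by rw [norm_smul]; gcongr
      _ ≤ D m := by show _ ≤ (‖a m‖ + ‖b m‖ + ‖c m‖ + ‖v m‖ + ‖u m‖) * (R + 1); nlinarith [mul_nonneg hb0 hR0, mul_nonneg ha0 hR0,
          mul_nonneg hc0 hR0, mul_nonneg hv0 hR0, mul_nonneg hu0 hR0]
      _ < ε := hm

end AuxLemmas

set_option maxHeartbeats 2000000 in
/-- the automorphisms `τ_n(z,w) = (t_n z + ‖w_n‖² + i y_n + 2√t_n⟨w,w_n⟩,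
√t_n w + w_n)` of `H^N` (with explicit inverses `σ_n`) satisfy:
(1) `τ_{n+k}⁻¹ ∘ τ_n → η_k` uniformly on compacta of `H^N`, where
`η_k(z,w) = (α^k z, α^{k/2} w)`; and
(2) `τ_{n+1}⁻¹ ∘ η_1⁻¹ ∘ τ_n → id` uniformly on compacta of `H^N`. -/
theorem stmt12 {n : ℕ} (α : ℝ) (hα : 1 < α)
    (Z : ℕ → ℂ × EuclideanSpace ℂ (Fin n)) (hZ : ∀ k, Z k ∈ siegel n)
    (t : ℕ → ℝ) (htdef : ∀ k, t k = ht (Z k))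
    (hre : Tendsto (fun k => (Z k).1.re / t k) atTop (𝓝 1))
    (him : Tendsto (fun k => (Z k).1.im / t k) atTop (𝓝 0))
    (hw : Tendsto (fun k => ‖(Z k).2‖ ^ 2 / t k) atTop (𝓝 0))
    (htr : Tendsto (fun k => t k / t (k + 1)) atTop (𝓝 α))
    (τ σ : ℕ → ℂ × EuclideanSpace ℂ (Fin n) → ℂ × EuclideanSpace ℂ (Fin n))
    (hτ : ∀ (k : ℕ) (z : ℂ) (w : EuclideanSpace ℂ (Fin n)), τ k (z, w) =
      ((t k : ℂ) * z + ((‖(Z k).2‖ ^ 2 : ℝ) : ℂ) + ((Z k).1.im : ℂ) * Complex.I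
          + 2 * ((Real.sqrt (t k) : ℝ) : ℂ) * hip' w (Z k).2,
        ((Real.sqrt (t k) : ℝ) : ℂ) • w + (Z k).2))
    (hσ : ∀ (k : ℕ) (z : ℂ) (w : EuclideanSpace ℂ (Fin n)), σ k (z, w) =
      ((z + ((‖(Z k).2‖ ^ 2 : ℝ) : ℂ) - ((Z k).1.im : ℂ) * Complex.I
          - 2 * hip' w (Z k).2) / (t k : ℂ),
        (((Real.sqrt (t k))⁻¹ : ℝ) : ℂ) • (w - (Z k).2)))
    (η : ℕ → ℂ × EuclideanSpace ℂ (Fin n) → ℂ × EuclideanSpace ℂ (Fin n))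
    (hη : ∀ (k : ℕ) (z : ℂ) (w : EuclideanSpace ℂ (Fin n)), η k (z, w) =
      (((α ^ k : ℝ) : ℂ) * z, (((Real.sqrt α ^ k : ℝ)) : ℂ) • w))
    (ηinv : ℂ × EuclideanSpace ℂ (Fin n) → ℂ × EuclideanSpace ℂ (Fin n))
    (hηinv : ∀ (z : ℂ) (w : EuclideanSpace ℂ (Fin n)), ηinv (z, w) =
      (((α⁻¹ : ℝ) : ℂ) * z, ((((Real.sqrt α)⁻¹ : ℝ)) : ℂ) • w)) :
    (∀ k, Differentiable ℂ (τ k) ∧ Differentiable ℂ (σ k) ∧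
      Function.LeftInverse (σ k) (τ k) ∧ Function.RightInverse (σ k) (τ k) ∧
      Set.BijOn (τ k) (siegel n) (siegel n)) ∧
    (∀ k : ℕ, 1 ≤ k → ∀ K : Set (ℂ × EuclideanSpace ℂ (Fin n)), K ⊆ siegel n →
      IsCompact K →
      TendstoUniformlyOn (fun m => σ (m + k) ∘ τ m) (η k) atTop K) ∧
    (∀ K : Set (ℂ × EuclideanSpace ℂ (Fin n)), K ⊆ siegel n → IsCompact K →
      TendstoUniformlyOn (fun m => σ (m + 1) ∘ ηinv ∘ τ m) id atTop K) := by
  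
  have hpart1 : ∀ k, Differentiable ℂ (τ k) ∧ Differentiable ℂ (σ k) ∧
      Function.LeftInverse (σ k) (τ k) ∧ Function.RightInverse (σ k) (τ k) ∧
      Set.BijOn (τ k) (siegel n) (siegel n) := by
    have hpos : ∀ m, 0 < t m := fun m => by
      rw [htdef m]; exact sub_pos.mpr (hZ m)
    have hs : ∀ m, 0 < Real.sqrt (t m) := fun m => Real.sqrt_pos.mpr (hpos m)
    have hts : ∀ m, t m = Real.sqrt (t m) ^ 2 := fun m => (Real.sq_sqrt (hpos m).le).symm
    have htne : ∀ m, ((t m : ℝ) : ℂ) ≠ 0 := fun m => by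
      exact_mod_cast Complex.ofReal_ne_zero.mpr (hpos m).ne'
    have hsne : ∀ m, ((Real.sqrt (t m) : ℝ) : ℂ) ≠ 0 := fun m =>
      Complex.ofReal_ne_zero.mpr (hs m).ne'
    have hself : ∀ (v : EuclideanSpace ℂ (Fin n)), (inner ℂ v v : ℂ) = ((‖v‖^2 : ℝ) : ℂ) :=
      fun v => by exact_mod_cast inner_self_eq_norm_sq_to_K (𝕜 := ℂ) v
    intro k
    have hdiffτ : Differentiable ℂ (τ k) := by
      have : τ k = fun p => ((t k : ℂ) * p.1 + (((‖(Z k).2‖ ^ 2 : ℝ) : ℂ) + ((Z k).1.im : ℂ) * Complex.I)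
            + 2 * ((Real.sqrt (t k) : ℝ) : ℂ) * (innerSL ℂ (Z k).2 p.2),
          ((Real.sqrt (t k) : ℝ) : ℂ) • p.2 + (Z k).2) := by
        funext p; obtain ⟨z, w⟩ := p
        rw [hτ]
        simp only [innerSL_apply_apply, hip']
        rw [Prod.mk.injEq]
        exact ⟨by ring, rfl⟩
      rw [this]
      exact Differentiable.prodMk
        (((differentiable_fst.const_mul _).add_const _).add
          (((innerSL ℂ (Z k).2).differentiable.comp differentiable_snd).const_mul _))
        (by fun_prop)
    have hdiffσ : Differentiable ℂ (σ k) := by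
      have : σ k = fun p => ((p.1 + (((‖(Z k).2‖ ^ 2 : ℝ) : ℂ) - ((Z k).1.im : ℂ) * Complex.I)
            - 2 * (innerSL ℂ (Z k).2 p.2)) * ((t k : ℂ))⁻¹,
          (((Real.sqrt (t k))⁻¹ : ℝ) : ℂ) • (p.2 - (Z k).2)) := by
        funext p; obtain ⟨z, w⟩ := p
        rw [hσ]
        simp only [innerSL_apply_apply, hip']
        rw [Prod.mk.injEq]
        exact ⟨by rw [div_eq_mul_inv]; ring, rfl⟩
      rw [this]
      refine Differentiable.prodMk (Differentiable.mul_const ?_ _) ?_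
      · exact (differentiable_fst.add_const _).sub
          (((innerSL ℂ (Z k).2).differentiable.comp differentiable_snd).const_mul _)
      · fun_prop
    have hLI : Function.LeftInverse (σ k) (τ k) := by
      intro p; obtain ⟨z, w⟩ := p
      rw [hτ, hσ, Prod.mk.injEq]
      constructor
      · simp only [hip', inner_add_right, inner_smul_right, hself]
        field_simp [htne k, hsne k]
        ring
      · rw [add_sub_cancel_right, smul_smul, ← Complex.ofReal_mul,
          inv_mul_cancel₀ (hs k).ne', Complex.ofReal_one, one_smul]
    have hRI : Function.RightInverse (σ k) (τ k) := by
      intro p; obtain ⟨z, w⟩ := p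
      rw [hσ, hτ, Prod.mk.injEq]
      constructor
      · simp only [hip', inner_smul_right, inner_sub_right, hself, Complex.ofReal_inv]
        have A : (inner ℂ (Z k).2 w : ℂ) = inner ℂ (Z k).2 w := rfl
        generalize (inner ℂ (Z k).2 w : ℂ) = A
        field_simp [htne k, hsne k, Complex.ofReal_inv]
        ring
      · rw [smul_smul, ← Complex.ofReal_mul, mul_inv_cancel₀ (hs k).ne',
          Complex.ofReal_one, one_smul, sub_add_cancel]
    have hre2 : ∀ (w v : EuclideanSpace ℂ (Fin n)), (inner ℂ w v : ℂ).re = (inner ℂ v w : ℂ).re :=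
      fun w v => by simpa using inner_re_symm (𝕜 := ℂ) w v
    have hnsq : ∀ (s : ℝ) (w v : EuclideanSpace ℂ (Fin n)),
        ‖(s:ℂ) • w + v‖^2 = s^2*‖w‖^2 + 2*(s*(inner ℂ w v : ℂ).re) + ‖v‖^2 := by
      intro s w v
      rw [norm_add_sq (𝕜 := ℂ), inner_smul_left, norm_smul]
      simp only [Complex.conj_ofReal, RCLike.re_to_complex, Complex.norm_real,
        Complex.re_ofReal_mul, mul_pow, sq_abs, Real.norm_eq_abs]
    have hhtτ : ∀ z w, ht (τ k (z, w)) = t k * ht (z, w) := by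
      intro z w
      rw [hτ]
      simp only [ht, hip']
      rw [hnsq]
      simp only [Complex.add_re, Complex.mul_re, Complex.ofReal_re, Complex.ofReal_im,
        Complex.I_re, Complex.I_im, Complex.mul_im, Complex.re_ofReal_mul]
      rw [hre2 w (Z k).2]
      simp only [Complex.re_ofNat, Complex.im_ofNat]
      rw [Real.sq_sqrt (hpos k).le]
      ring
    have hmapτ : Set.MapsTo (τ k) (siegel n) (siegel n) := by
      intro p hp; obtain ⟨z, w⟩ := p
      have h1 : 0 < ht (τ k (z, w)) := by
        rw [hhtτ]; exact mul_pos (hpos k) (sub_pos.mpr hp)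
      exact sub_pos.mp h1
    have hmapσ : Set.MapsTo (σ k) (siegel n) (siegel n) := by
      intro p hp; obtain ⟨z, w⟩ := p
      have h0 : 0 < ht (σ k (z, w)) := by
        have := hhtτ (σ k (z,w)).1 (σ k (z,w)).2
        rw [Prod.mk.eta] at this
        rw [hRI (z,w)] at this
        have h2 : ht (σ k (z, w)) = ht (z, w) / t k := by
          rw [eq_div_iff (hpos k).ne']
          linarith [this]
        rw [h2]
        exact div_pos (sub_pos.mpr hp) (hpos k)
      exact sub_pos.mp h0
    exact ⟨hdiffτ, hdiffσ, hLI, hRI,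
      Set.InvOn.bijOn ⟨fun p _ => hLI p, fun p _ => hRI p⟩ hmapτ hmapσ⟩
  have hpart2 : ∀ k : ℕ, 1 ≤ k → ∀ K : Set (ℂ × EuclideanSpace ℂ (Fin n)), K ⊆ siegel n →
      IsCompact K → TendstoUniformlyOn (fun m => σ (m + k) ∘ τ m) (η k) atTop K := by
    have hpos : ∀ m, 0 < t m := fun m => by
      rw [htdef m]; exact sub_pos.mpr (hZ m)
    set s : ℕ → ℝ := fun m => Real.sqrt (t m) with hsdef
    have hs : ∀ m, 0 < s m := fun m => Real.sqrt_pos.mpr (hpos m)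
    have hts : ∀ m, t m = s m ^ 2 := fun m => (Real.sq_sqrt (hpos m).le).symm
    have hα0 : 0 < α := by linarith
    have hsα : 0 < Real.sqrt α := Real.sqrt_pos.mpr hα0
    -- basic limits
    have hshift : ∀ {f : ℕ → ℝ} {L : ℝ}, Tendsto f atTop (𝓝 L) →
        ∀ j, Tendsto (fun m => f (m + j)) atTop (𝓝 L) :=
      fun h j => h.comp (tendsto_add_atTop_nat j)
    have hsr1 : Tendsto (fun m => s m / s (m + 1)) atTop (𝓝 (Real.sqrt α)) := by
      have h := (Real.continuous_sqrt.tendsto α).comp htr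
      apply h.congr
      intro m
      exact Real.sqrt_div (hpos m).le _
    have hsrk : ∀ j, Tendsto (fun m => s m / s (m + j)) atTop (𝓝 (Real.sqrt α ^ j)) := by
      intro j; induction j with
      | zero =>
        simp only [Nat.add_zero, pow_zero]
        exact tendsto_const_nhds.congr (fun m => (div_self (hs m).ne').symm)
      | succ j ih =>
        have h2 := hsr1.comp (tendsto_add_atTop_nat j)
        have h3 := ih.mul h2
        rw [← pow_succ] at h3
        apply h3.congr
        intro m
        exact div_mul_div_cancel₀ (hs (m + j)).ne' ..
    have htk : ∀ j, Tendsto (fun m => t m / t (m + j)) atTop (𝓝 (α ^ j)) := by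
      intro j
      have h := (hsrk j).mul (hsrk j)
      have hl : Real.sqrt α ^ j * Real.sqrt α ^ j = α ^ j := by
        rw [← mul_pow, Real.mul_self_sqrt hα0.le]
      rw [hl] at h
      apply h.congr
      intro m
      rw [div_mul_div_comm, Real.mul_self_sqrt (hpos m).le, Real.mul_self_sqrt (hpos (m + j)).le]
    have hWs : Tendsto (fun m => ‖(Z m).2‖ / s m) atTop (𝓝 0) := by
      have h := (Real.continuous_sqrt.tendsto 0).comp hw
      rw [Real.sqrt_zero] at h
      apply h.congr
      intro m
      show Real.sqrt (‖(Z m).2‖ ^ 2 / t m) = _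
      rw [Real.sqrt_div (sq_nonneg _), Real.sqrt_sq (norm_nonneg _)]
    have hya : Tendsto (fun m => |(Z m).1.im| / t m) atTop (𝓝 0) := by
      have h := him.abs
      rw [abs_zero] at h
      apply h.congr
      intro m
      rw [abs_div, abs_of_pos (hpos m)]
    -- bound sequences
    have hg : ∀ j, Tendsto (fun m =>
        (‖(Z m).2‖ / s m) ^ 2 * (s m / s (m + j)) ^ 2
        + (‖(Z (m + j)).2‖ / s (m + j)) ^ 2
        + (|(Z m).1.im| / t m) * (t m / t (m + j))
        + |(Z (m + j)).1.im| / t (m + j)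
        + 2 * ((‖(Z (m + j)).2‖ / s (m + j)) * ((‖(Z m).2‖ / s m) * (s m / s (m + j)))))
        atTop (𝓝 0) := by
      intro j
      have h := ((((hWs.pow 2).mul ((hsrk j).pow 2)).add ((hshift hWs j).pow 2)).add
        (hya.mul (htk j))).add (hshift hya j) |>.add
        ((tendsto_const_nhds (x := (2:ℝ))).mul ((hshift hWs j).mul (hWs.mul (hsrk j))))
      simpa using h
    have hgv : ∀ j, Tendsto (fun m =>
        2 * ((‖(Z m).2‖ / s m) * (s m / s (m + j)) ^ 2)
        + 2 * ((‖(Z (m + j)).2‖ / s (m + j)) * (s m / s (m + j)))) atTop (𝓝 0) := by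
      intro j
      have h := ((tendsto_const_nhds (x := (2:ℝ))).mul (hWs.mul ((hsrk j).pow 2))).add
        ((tendsto_const_nhds (x := (2:ℝ))).mul ((hshift hWs j).mul (hsrk j)))
      simpa using h
    have hgu : ∀ j, Tendsto (fun m =>
        (‖(Z m).2‖ / s m) * (s m / s (m + j)) + ‖(Z (m + j)).2‖ / s (m + j)) atTop (𝓝 0) := by
      intro j
      have h := (hWs.mul (hsrk j)).add (hshift hWs j)
      simpa using h
    have htne : ∀ m, ((t m : ℝ) : ℂ) ≠ 0 := fun m => Complex.ofReal_ne_zero.mpr (hpos m).ne'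
    have hsne : ∀ m, ((s m : ℝ) : ℂ) ≠ 0 := fun m => Complex.ofReal_ne_zero.mpr (hs m).ne'
    intro k _ K hKs hKc
    refine tuo_aux hKc _ _
      (fun m => ((t m / t (m + k) - α ^ k : ℝ) : ℂ))
      (fun m => ((s m / s (m + k) - Real.sqrt α ^ k : ℝ) : ℂ))
      (fun m => (((‖(Z m).2‖ ^ 2 : ℝ) : ℂ) + ((‖(Z (m + k)).2‖ ^ 2 : ℝ) : ℂ)
        + (((Z m).1.im : ℂ) - ((Z (m + k)).1.im : ℂ)) * Complex.I
        - 2 * hip' (Z m).2 (Z (m + k)).2) / ((t (m + k) : ℝ) : ℂ))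
      (fun m => ((2 * s m / t (m + k) : ℝ) : ℂ) • ((Z m).2 - (Z (m + k)).2))
      (fun m => (((s (m + k))⁻¹ : ℝ) : ℂ) • ((Z m).2 - (Z (m + k)).2))
      ?_ ?_ ?_ ?_ ?_ ?_
    · -- the algebraic identity
      intro m p _
      obtain ⟨z, w⟩ := p
      simp only [hsdef]
      show σ (m + k) (τ m (z, w)) - η k (z, w) = _
      rw [hτ, hσ, hη, Prod.mk_sub_mk, Prod.mk.injEq]
      constructor
      · simp only [hip', inner_add_right, inner_smul_right, inner_smul_left, inner_sub_left,
          Complex.conj_ofReal]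
        push_cast
        field_simp
        ring
      · push_cast
        match_scalars
        · field_simp
        · field_simp
        · field_simp
    · exact castC (by simpa using (htk k).sub_const (α ^ k))
    · exact castC (by simpa using (hsrk k).sub_const (Real.sqrt α ^ k))
    · rw [tendsto_zero_iff_norm_tendsto_zero]
      refine squeeze_zero (fun m => norm_nonneg _) ?_ (hg k)
      intro m
      have hnum : ‖(((‖(Z m).2‖ ^ 2 : ℝ) : ℂ) + ((‖(Z (m + k)).2‖ ^ 2 : ℝ) : ℂ)
          + (((Z m).1.im : ℂ) - ((Z (m + k)).1.im : ℂ)) * Complex.I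
          - 2 * hip' (Z m).2 (Z (m + k)).2)‖
          ≤ ‖(Z m).2‖ ^ 2 + ‖(Z (m + k)).2‖ ^ 2 + (|(Z m).1.im| + |(Z (m + k)).1.im|)
            + 2 * (‖(Z (m + k)).2‖ * ‖(Z m).2‖) := by
        calc ‖_ + _ + _ - _‖ ≤ ‖(((‖(Z m).2‖ ^ 2 : ℝ) : ℂ) + ((‖(Z (m + k)).2‖ ^ 2 : ℝ) : ℂ)
              + (((Z m).1.im : ℂ) - ((Z (m + k)).1.im : ℂ)) * Complex.I)‖
              + ‖2 * hip' (Z m).2 (Z (m + k)).2‖ := norm_sub_le _ _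
          _ ≤ (‖(((‖(Z m).2‖ ^ 2 : ℝ) : ℂ) + ((‖(Z (m + k)).2‖ ^ 2 : ℝ) : ℂ))‖
              + ‖(((Z m).1.im : ℂ) - ((Z (m + k)).1.im : ℂ)) * Complex.I‖)
              + ‖2 * hip' (Z m).2 (Z (m + k)).2‖ := by gcongr; exact norm_add_le _ _
          _ ≤ _ := ?_
        have e1 : ‖(((‖(Z m).2‖ ^ 2 : ℝ) : ℂ) + ((‖(Z (m + k)).2‖ ^ 2 : ℝ) : ℂ))‖
            ≤ ‖(Z m).2‖ ^ 2 + ‖(Z (m + k)).2‖ ^ 2 := by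
          rw [← Complex.ofReal_add, Complex.norm_real]
          exact le_of_eq (abs_of_nonneg (by positivity))
        have e2 : ‖(((Z m).1.im : ℂ) - ((Z (m + k)).1.im : ℂ)) * Complex.I‖
            ≤ |(Z m).1.im| + |(Z (m + k)).1.im| := by
          rw [norm_mul, Complex.norm_I, mul_one, ← Complex.ofReal_sub, Complex.norm_real]
          exact abs_sub _ _
        have e3 : ‖2 * hip' (Z m).2 (Z (m + k)).2‖ ≤ 2 * (‖(Z (m + k)).2‖ * ‖(Z m).2‖) := by
          rw [norm_mul]
          simp only [Complex.norm_ofNat]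
          exact mul_le_mul_of_nonneg_left (norm_inner_le_norm _ _) (by norm_num)
        linarith
      calc ‖_ / ((t (m + k) : ℝ) : ℂ)‖
          = ‖(((‖(Z m).2‖ ^ 2 : ℝ) : ℂ) + ((‖(Z (m + k)).2‖ ^ 2 : ℝ) : ℂ)
            + (((Z m).1.im : ℂ) - ((Z (m + k)).1.im : ℂ)) * Complex.I
            - 2 * hip' (Z m).2 (Z (m + k)).2)‖ / t (m + k) := by
            rw [norm_div, Complex.norm_real, Real.norm_eq_abs, abs_of_pos (hpos (m + k))]
        _ ≤ (‖(Z m).2‖ ^ 2 + ‖(Z (m + k)).2‖ ^ 2 + (|(Z m).1.im| + |(Z (m + k)).1.im|)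
            + 2 * (‖(Z (m + k)).2‖ * ‖(Z m).2‖)) / t (m + k) := by
            gcongr
            exact (hpos (m + k)).le
        _ = _ := by
            rw [hts m, hts (m + k)]
            field_simp [(hs m).ne', (hs (m + k)).ne']
            ring
    · rw [tendsto_zero_iff_norm_tendsto_zero]
      refine squeeze_zero (fun m => norm_nonneg _) ?_ (hgv k)
      intro m
      calc ‖((2 * s m / t (m + k) : ℝ) : ℂ) • ((Z m).2 - (Z (m + k)).2)‖
          = (2 * s m / t (m + k)) * ‖(Z m).2 - (Z (m + k)).2‖ := by
            rw [norm_smul, Complex.norm_real, Real.norm_eq_abs,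
              abs_of_pos (div_pos (mul_pos two_pos (hs m)) (hpos (m + k)))]
        _ ≤ (2 * s m / t (m + k)) * (‖(Z m).2‖ + ‖(Z (m + k)).2‖) :=
            mul_le_mul_of_nonneg_left (norm_sub_le _ _)
              (div_pos (mul_pos two_pos (hs m)) (hpos (m + k))).le
        _ = _ := by
            rw [hts (m + k)]
            field_simp [(hs m).ne', (hs (m + k)).ne']
    · rw [tendsto_zero_iff_norm_tendsto_zero]
      refine squeeze_zero (fun m => norm_nonneg _) ?_ (hgu k)
      intro m
      calc ‖(((s (m + k))⁻¹ : ℝ) : ℂ) • ((Z m).2 - (Z (m + k)).2)‖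
          = (s (m + k))⁻¹ * ‖(Z m).2 - (Z (m + k)).2‖ := by
            rw [norm_smul, Complex.norm_real, Real.norm_eq_abs,
              abs_of_pos (inv_pos.mpr (hs (m + k)))]
        _ ≤ (s (m + k))⁻¹ * (‖(Z m).2‖ + ‖(Z (m + k)).2‖) :=
            mul_le_mul_of_nonneg_left (norm_sub_le _ _) (inv_pos.mpr (hs (m + k))).le
        _ = _ := by
            field_simp [(hs m).ne', (hs (m + k)).ne']
  have hpart3 : ∀ K : Set (ℂ × EuclideanSpace ℂ (Fin n)), K ⊆ siegel n → IsCompact K →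
      TendstoUniformlyOn (fun m => σ (m + 1) ∘ ηinv ∘ τ m) id atTop K := by
    have hpos : ∀ m, 0 < t m := fun m => by
      rw [htdef m]; exact sub_pos.mpr (hZ m)
    set s : ℕ → ℝ := fun m => Real.sqrt (t m) with hsdef
    have hs : ∀ m, 0 < s m := fun m => Real.sqrt_pos.mpr (hpos m)
    have hts : ∀ m, t m = s m ^ 2 := fun m => (Real.sq_sqrt (hpos m).le).symm
    have hα0 : 0 < α := by linarith
    have hsα : 0 < Real.sqrt α := Real.sqrt_pos.mpr hα0
    -- basic limits
    have hshift : ∀ {f : ℕ → ℝ} {L : ℝ}, Tendsto f atTop (𝓝 L) →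
        ∀ j, Tendsto (fun m => f (m + j)) atTop (𝓝 L) :=
      fun h j => h.comp (tendsto_add_atTop_nat j)
    have hsr1 : Tendsto (fun m => s m / s (m + 1)) atTop (𝓝 (Real.sqrt α)) := by
      have h := (Real.continuous_sqrt.tendsto α).comp htr
      apply h.congr
      intro m
      exact Real.sqrt_div (hpos m).le _
    have hsrk : ∀ j, Tendsto (fun m => s m / s (m + j)) atTop (𝓝 (Real.sqrt α ^ j)) := by
      intro j; induction j with
      | zero =>
        simp only [Nat.add_zero, pow_zero]
        exact tendsto_const_nhds.congr (fun m => (div_self (hs m).ne').symm)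
      | succ j ih =>
        have h2 := hsr1.comp (tendsto_add_atTop_nat j)
        have h3 := ih.mul h2
        rw [← pow_succ] at h3
        apply h3.congr
        intro m
        exact div_mul_div_cancel₀ (hs (m + j)).ne' ..
    have htk : ∀ j, Tendsto (fun m => t m / t (m + j)) atTop (𝓝 (α ^ j)) := by
      intro j
      have h := (hsrk j).mul (hsrk j)
      have hl : Real.sqrt α ^ j * Real.sqrt α ^ j = α ^ j := by
        rw [← mul_pow, Real.mul_self_sqrt hα0.le]
      rw [hl] at h
      apply h.congr
      intro m
      rw [div_mul_div_comm, Real.mul_self_sqrt (hpos m).le, Real.mul_self_sqrt (hpos (m + j)).le]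
    have hWs : Tendsto (fun m => ‖(Z m).2‖ / s m) atTop (𝓝 0) := by
      have h := (Real.continuous_sqrt.tendsto 0).comp hw
      rw [Real.sqrt_zero] at h
      apply h.congr
      intro m
      show Real.sqrt (‖(Z m).2‖ ^ 2 / t m) = _
      rw [Real.sqrt_div (sq_nonneg _), Real.sqrt_sq (norm_nonneg _)]
    have hya : Tendsto (fun m => |(Z m).1.im| / t m) atTop (𝓝 0) := by
      have h := him.abs
      rw [abs_zero] at h
      apply h.congr
      intro m
      rw [abs_div, abs_of_pos (hpos m)]
    -- bound sequences
    have hg : ∀ j, Tendsto (fun m =>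
        (‖(Z m).2‖ / s m) ^ 2 * (s m / s (m + j)) ^ 2
        + (‖(Z (m + j)).2‖ / s (m + j)) ^ 2
        + (|(Z m).1.im| / t m) * (t m / t (m + j))
        + |(Z (m + j)).1.im| / t (m + j)
        + 2 * ((‖(Z (m + j)).2‖ / s (m + j)) * ((‖(Z m).2‖ / s m) * (s m / s (m + j)))))
        atTop (𝓝 0) := by
      intro j
      have h := ((((hWs.pow 2).mul ((hsrk j).pow 2)).add ((hshift hWs j).pow 2)).add
        (hya.mul (htk j))).add (hshift hya j) |>.add
        ((tendsto_const_nhds (x := (2:ℝ))).mul ((hshift hWs j).mul (hWs.mul (hsrk j))))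
      simpa using h
    have hgv : ∀ j, Tendsto (fun m =>
        2 * ((‖(Z m).2‖ / s m) * (s m / s (m + j)) ^ 2)
        + 2 * ((‖(Z (m + j)).2‖ / s (m + j)) * (s m / s (m + j)))) atTop (𝓝 0) := by
      intro j
      have h := ((tendsto_const_nhds (x := (2:ℝ))).mul (hWs.mul ((hsrk j).pow 2))).add
        ((tendsto_const_nhds (x := (2:ℝ))).mul ((hshift hWs j).mul (hsrk j)))
      simpa using h
    have hgu : ∀ j, Tendsto (fun m =>
        (‖(Z m).2‖ / s m) * (s m / s (m + j)) + ‖(Z (m + j)).2‖ / s (m + j)) atTop (𝓝 0) := by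
      intro j
      have h := (hWs.mul (hsrk j)).add (hshift hWs j)
      simpa using h
    have htne : ∀ m, ((t m : ℝ) : ℂ) ≠ 0 := fun m => Complex.ofReal_ne_zero.mpr (hpos m).ne'
    have hsne : ∀ m, ((s m : ℝ) : ℂ) ≠ 0 := fun m => Complex.ofReal_ne_zero.mpr (hs m).ne'
    have hαne : ((α : ℝ) : ℂ) ≠ 0 := Complex.ofReal_ne_zero.mpr hα0.ne'
    have hsαne : ((Real.sqrt α : ℝ) : ℂ) ≠ 0 := Complex.ofReal_ne_zero.mpr hsα.ne'
    intro K hKs hKc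
    have hαi1 : α⁻¹ ≤ 1 := inv_le_one_of_one_le₀ hα.le
    have hsαi1 : (Real.sqrt α)⁻¹ ≤ 1 := inv_le_one_of_one_le₀ (Real.one_le_sqrt.mpr hα.le)
    refine tuo_aux hKc _ _
      (fun m => ((α⁻¹ * (t m / t (m + 1)) - 1 : ℝ) : ℂ))
      (fun m => (((Real.sqrt α)⁻¹ * ((Real.sqrt (t (m + 1)))⁻¹ * Real.sqrt (t m)) - 1 : ℝ) : ℂ))
      (fun m => (((‖(Z m).2‖ ^ 2 : ℝ) : ℂ) * ((α⁻¹ : ℝ) : ℂ) + ((‖(Z (m + 1)).2‖ ^ 2 : ℝ) : ℂ)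
        + (((Z m).1.im : ℂ) * ((α⁻¹ : ℝ) : ℂ) - ((Z (m + 1)).1.im : ℂ)) * Complex.I
        - 2 * (((Real.sqrt α)⁻¹ : ℝ) : ℂ) * hip' (Z m).2 (Z (m + 1)).2) / ((t (m + 1) : ℝ) : ℂ))
      (fun m => ((α⁻¹ * (2 * Real.sqrt (t m) / t (m + 1)) : ℝ) : ℂ) • (Z m).2
        - (((Real.sqrt α)⁻¹ * (2 * Real.sqrt (t m) / t (m + 1)) : ℝ) : ℂ) • (Z (m + 1)).2)
      (fun m => (((Real.sqrt α)⁻¹ * (Real.sqrt (t (m + 1)))⁻¹ : ℝ) : ℂ) • (Z m).2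
        - (((Real.sqrt (t (m + 1)))⁻¹ : ℝ) : ℂ) • (Z (m + 1)).2)
      ?_ ?_ ?_ ?_ ?_ ?_
    · -- the algebraic identity
      intro m p _
      obtain ⟨z, w⟩ := p
      show σ (m + 1) (ηinv (τ m (z, w))) - id (z, w) = _
      rw [hτ, hηinv, hσ, id_eq, Prod.mk_sub_mk, Prod.mk.injEq]
      constructor
      · simp only [hip', inner_add_right, inner_smul_right, inner_smul_left, inner_sub_left,
          Complex.conj_ofReal]
        push_cast
        ring
      · push_cast [-Complex.ofReal_inv]
        match_scalars
        · ring
        · ring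
        · ring
    · refine castC ?_
      have h := htr.const_mul α⁻¹
      rw [inv_mul_cancel₀ hα0.ne'] at h
      simpa using h.sub_const 1
    · refine castC ?_
      have h := hsr1.const_mul (Real.sqrt α)⁻¹
      rw [inv_mul_cancel₀ hsα.ne'] at h
      have h0 : Tendsto (fun m => (Real.sqrt α)⁻¹ * ((Real.sqrt (t (m + 1)))⁻¹ * Real.sqrt (t m)))
          atTop (𝓝 1) := by
        apply h.congr; intro m
        show (Real.sqrt α)⁻¹ * (s m / s (m + 1)) = _
        rw [div_eq_mul_inv]; ring
      simpa using h0.sub_const 1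
    · rw [tendsto_zero_iff_norm_tendsto_zero]
      refine squeeze_zero (fun m => norm_nonneg _) ?_ (hg 1)
      intro m
      have e1 : ‖((‖(Z m).2‖ ^ 2 : ℝ) : ℂ) * ((α⁻¹ : ℝ) : ℂ)‖ ≤ ‖(Z m).2‖ ^ 2 := by
        rw [norm_mul, Complex.norm_real, Complex.norm_real, Real.norm_eq_abs,
          Real.norm_eq_abs, abs_of_nonneg (by positivity : (0:ℝ) ≤ ‖(Z m).2‖ ^ 2),
          abs_of_pos (inv_pos.mpr hα0)]
        nlinarith [sq_nonneg ‖(Z m).2‖]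
      have e2 : ‖(((Z m).1.im : ℂ) * ((α⁻¹ : ℝ) : ℂ) - ((Z (m + 1)).1.im : ℂ)) * Complex.I‖
          ≤ |(Z m).1.im| + |(Z (m + 1)).1.im| := by
        rw [norm_mul, Complex.norm_I, mul_one]
        refine (norm_sub_le _ _).trans ?_
        rw [norm_mul, Complex.norm_real, Complex.norm_real, Complex.norm_real,
          Real.norm_eq_abs, Real.norm_eq_abs, Real.norm_eq_abs, abs_of_pos (inv_pos.mpr hα0)]
        nlinarith [abs_nonneg (Z m).1.im]
      have e3 : ‖2 * (((Real.sqrt α)⁻¹ : ℝ) : ℂ) * hip' (Z m).2 (Z (m + 1)).2‖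
          ≤ 2 * (‖(Z (m + 1)).2‖ * ‖(Z m).2‖) := by
        rw [norm_mul, norm_mul, Complex.norm_ofNat, Complex.norm_real,
          Real.norm_eq_abs, abs_of_pos (inv_pos.mpr hsα)]
        have hip : ‖hip' (Z m).2 (Z (m + 1)).2‖ ≤ ‖(Z (m + 1)).2‖ * ‖(Z m).2‖ :=
          norm_inner_le_norm _ _
        nlinarith [norm_nonneg (hip' (Z m).2 (Z (m + 1)).2),
          mul_nonneg (norm_nonneg (Z (m+1)).2) (norm_nonneg (Z m).2)]
      have hnum : ‖((‖(Z m).2‖ ^ 2 : ℝ) : ℂ) * ((α⁻¹ : ℝ) : ℂ) + ((‖(Z (m + 1)).2‖ ^ 2 : ℝ) : ℂ)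
          + (((Z m).1.im : ℂ) * ((α⁻¹ : ℝ) : ℂ) - ((Z (m + 1)).1.im : ℂ)) * Complex.I
          - 2 * (((Real.sqrt α)⁻¹ : ℝ) : ℂ) * hip' (Z m).2 (Z (m + 1)).2‖
          ≤ ‖(Z m).2‖ ^ 2 + ‖(Z (m + 1)).2‖ ^ 2 + (|(Z m).1.im| + |(Z (m + 1)).1.im|)
            + 2 * (‖(Z (m + 1)).2‖ * ‖(Z m).2‖) := by
        have h4 := norm_sub_le (((‖(Z m).2‖ ^ 2 : ℝ) : ℂ) * ((α⁻¹ : ℝ) : ℂ)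
          + ((‖(Z (m + 1)).2‖ ^ 2 : ℝ) : ℂ)
          + (((Z m).1.im : ℂ) * ((α⁻¹ : ℝ) : ℂ) - ((Z (m + 1)).1.im : ℂ)) * Complex.I)
          (2 * (((Real.sqrt α)⁻¹ : ℝ) : ℂ) * hip' (Z m).2 (Z (m + 1)).2)
        have h5 := norm_add_le (((‖(Z m).2‖ ^ 2 : ℝ) : ℂ) * ((α⁻¹ : ℝ) : ℂ)
          + ((‖(Z (m + 1)).2‖ ^ 2 : ℝ) : ℂ))
          ((((Z m).1.im : ℂ) * ((α⁻¹ : ℝ) : ℂ) - ((Z (m + 1)).1.im : ℂ)) * Complex.I)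
        have h6 := norm_add_le (((‖(Z m).2‖ ^ 2 : ℝ) : ℂ) * ((α⁻¹ : ℝ) : ℂ))
          ((‖(Z (m + 1)).2‖ ^ 2 : ℝ) : ℂ)
        have h7 : ‖((‖(Z (m + 1)).2‖ ^ 2 : ℝ) : ℂ)‖ = ‖(Z (m + 1)).2‖ ^ 2 := by
          rw [Complex.norm_real, Real.norm_eq_abs, abs_of_nonneg (by positivity)]
        linarith
      calc ‖_ / ((t (m + 1) : ℝ) : ℂ)‖
          = ‖((‖(Z m).2‖ ^ 2 : ℝ) : ℂ) * ((α⁻¹ : ℝ) : ℂ) + ((‖(Z (m + 1)).2‖ ^ 2 : ℝ) : ℂ)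
            + (((Z m).1.im : ℂ) * ((α⁻¹ : ℝ) : ℂ) - ((Z (m + 1)).1.im : ℂ)) * Complex.I
            - 2 * (((Real.sqrt α)⁻¹ : ℝ) : ℂ) * hip' (Z m).2 (Z (m + 1)).2‖ / t (m + 1) := by
            rw [norm_div, Complex.norm_real, Real.norm_eq_abs, abs_of_pos (hpos (m + 1))]
        _ ≤ (‖(Z m).2‖ ^ 2 + ‖(Z (m + 1)).2‖ ^ 2 + (|(Z m).1.im| + |(Z (m + 1)).1.im|)
            + 2 * (‖(Z (m + 1)).2‖ * ‖(Z m).2‖)) / t (m + 1) := by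
            gcongr
            exact (hpos (m + 1)).le
        _ = _ := by
            rw [hts m, hts (m + 1)]
            field_simp [(hs m).ne', (hs (m + 1)).ne']
            ring
    · rw [tendsto_zero_iff_norm_tendsto_zero]
      refine squeeze_zero (fun m => norm_nonneg _) ?_ (hgv 1)
      intro m
      have hq : 0 < 2 * Real.sqrt (t m) / t (m + 1) :=
        div_pos (mul_pos two_pos (hs m)) (hpos (m + 1))
      have hc1 : α⁻¹ * (2 * Real.sqrt (t m) / t (m + 1)) ≤ 2 * Real.sqrt (t m) / t (m + 1) :=
        mul_le_of_le_one_left hq.le hαi1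
      have hc2 : (Real.sqrt α)⁻¹ * (2 * Real.sqrt (t m) / t (m + 1))
          ≤ 2 * Real.sqrt (t m) / t (m + 1) :=
        mul_le_of_le_one_left hq.le hsαi1
      calc ‖((α⁻¹ * (2 * Real.sqrt (t m) / t (m + 1)) : ℝ) : ℂ) • (Z m).2
            - (((Real.sqrt α)⁻¹ * (2 * Real.sqrt (t m) / t (m + 1)) : ℝ) : ℂ) • (Z (m + 1)).2‖
          ≤ ‖((α⁻¹ * (2 * Real.sqrt (t m) / t (m + 1)) : ℝ) : ℂ) • (Z m).2‖
            + ‖(((Real.sqrt α)⁻¹ * (2 * Real.sqrt (t m) / t (m + 1)) : ℝ) : ℂ) • (Z (m + 1)).2‖ :=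
            norm_sub_le _ _
        _ = (α⁻¹ * (2 * Real.sqrt (t m) / t (m + 1))) * ‖(Z m).2‖
            + ((Real.sqrt α)⁻¹ * (2 * Real.sqrt (t m) / t (m + 1))) * ‖(Z (m + 1)).2‖ := by
            rw [norm_smul, norm_smul, Complex.norm_real, Complex.norm_real, Real.norm_eq_abs,
              Real.norm_eq_abs,
              abs_of_pos (mul_pos (inv_pos.mpr hα0) hq),
              abs_of_pos (mul_pos (inv_pos.mpr hsα) hq)]
        _ ≤ (2 * Real.sqrt (t m) / t (m + 1)) * ‖(Z m).2‖
            + (2 * Real.sqrt (t m) / t (m + 1)) * ‖(Z (m + 1)).2‖ :=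
            add_le_add (mul_le_mul_of_nonneg_right hc1 (norm_nonneg _))
              (mul_le_mul_of_nonneg_right hc2 (norm_nonneg _))
        _ = _ := by
            show _ = 2 * (‖(Z m).2‖ / s m * (s m / s (m + 1)) ^ 2)
              + 2 * (‖(Z (m + 1)).2‖ / s (m + 1) * (s m / s (m + 1)))
            simp only [hsdef]
            rw [hts (m + 1)]
            rw [Real.sqrt_sq (hs (m + 1)).le]
            field_simp [(hs m).ne', (hs (m + 1)).ne']
    · rw [tendsto_zero_iff_norm_tendsto_zero]
      refine squeeze_zero (fun m => norm_nonneg _) ?_ (hgu 1)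
      intro m
      have hc1 : (Real.sqrt α)⁻¹ * (Real.sqrt (t (m + 1)))⁻¹ ≤ (Real.sqrt (t (m + 1)))⁻¹ :=
        mul_le_of_le_one_left (inv_pos.mpr (hs (m + 1))).le hsαi1
      calc ‖(((Real.sqrt α)⁻¹ * (Real.sqrt (t (m + 1)))⁻¹ : ℝ) : ℂ) • (Z m).2
            - (((Real.sqrt (t (m + 1)))⁻¹ : ℝ) : ℂ) • (Z (m + 1)).2‖
          ≤ ‖(((Real.sqrt α)⁻¹ * (Real.sqrt (t (m + 1)))⁻¹ : ℝ) : ℂ) • (Z m).2‖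
            + ‖(((Real.sqrt (t (m + 1)))⁻¹ : ℝ) : ℂ) • (Z (m + 1)).2‖ := norm_sub_le _ _
        _ = ((Real.sqrt α)⁻¹ * (Real.sqrt (t (m + 1)))⁻¹) * ‖(Z m).2‖
            + (Real.sqrt (t (m + 1)))⁻¹ * ‖(Z (m + 1)).2‖ := by
            rw [norm_smul, norm_smul, Complex.norm_real, Complex.norm_real, Real.norm_eq_abs,
              Real.norm_eq_abs,
              abs_of_pos (mul_pos (inv_pos.mpr hsα) (inv_pos.mpr (hs (m + 1)))),
              abs_of_pos (inv_pos.mpr (hs (m + 1)))]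
        _ ≤ (Real.sqrt (t (m + 1)))⁻¹ * ‖(Z m).2‖
            + (Real.sqrt (t (m + 1)))⁻¹ * ‖(Z (m + 1)).2‖ :=
            add_le_add (mul_le_mul_of_nonneg_right hc1 (norm_nonneg _)) le_rfl
        _ = _ := by
            show _ = ‖(Z m).2‖ / s m * (s m / s (m + 1)) + ‖(Z (m + 1)).2‖ / s (m + 1)
            simp only [hsdef]
            field_simp [(hs m).ne', (hs (m + 1)).ne']
            rw [mul_div_cancel_right₀ _ (Real.sqrt_pos.mpr (hpos m)).ne']
  exact ⟨hpart1, hpart2, hpart3⟩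
end
end
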